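/- arXiv:2107.06789 — 8 statements merged into one kernel-verified Lean document; each statement's English description precedes it below -/
import Mathlib

section
/- Let n ≥ k ≥ 5 be integers. Then there exist connected finite simple graphs X and Y, each on n vertices, such that δ(X) ≥ 3n/k − 4, δ(Y) ≥ (k−2)n/k − 3, and the friends-and-strangers graph FS(X,Y) is disconnected. -/
open SimpleGraph

/-- The friends-and-strangers graph `FS X Y` of two graphs `X`, `Y`: vertices are the
bijections from `V(X)` to `V(Y)`, and `σ`, `τ` are adjacent iff they agree everywhere except
at two vertices `a`, `b` adjacent in `X` whose images under `σ` are adjacent in `Y`,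
with `τ a = σ b` and `τ b = σ a`. -/
def FS {V W : Type*} (X : SimpleGraph V) (Y : SimpleGraph W) :
    SimpleGraph (V ≃ W) where
  Adj σ τ := ∃ a b : V, X.Adj a b ∧ Y.Adj (σ a) (σ b) ∧
      τ a = σ b ∧ τ b = σ a ∧ ∀ w : V, w ≠ a → w ≠ b → τ w = σ w
  symm := by
    constructor
    rintro σ τ ⟨a, b, hX, hY, h1, h2, h3⟩
    exact ⟨a, b, hX, by rw [h1, h2]; exact hY.symm, h2.symm, h1.symm,
      fun w hwa hwb => (h3 w hwa hwb).symm⟩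
  loopless := by
    constructor
    rintro σ ⟨a, b, hX, _, h1, _, _⟩
    exact hX.ne (σ.injective h1)

/-- The minimum degree of a graph (stated via `Set.ncard`, so that no decidability
assumptions are required). -/
noncomputable def minDeg {V : Type*} (G : SimpleGraph V) : ℕ :=
  ⨅ v : V, (G.neighborSet v).ncard

/-- Vertices `u`, `v` of `Y` are `(X,Y)`-exchangeable from `σ` if `σ` and `(u v) ∘ σ`
lie in the same connected component of `FS X Y`. -/
def Exchangeable {V W : Type*} (X : SimpleGraph V) (Y : SimpleGraph W)
    (σ : V ≃ W) (u v : W) : Prop :=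
  letI := Classical.decEq W
  (FS X Y).Reachable σ (σ.trans (Equiv.swap u v))

/-! ### Auxiliary construction -/

/-- The block map: vertex `i` of `Fin n` goes to block `i mod k`. -/
def bl (n k : ℕ) (i : Fin n) : ZMod k := ((i : ℕ) : ZMod k)

/-- `X`: blow-up of the cycle `C_k`, with cliques inside blocks. -/
def Xg (n k : ℕ) : SimpleGraph (Fin n) where
  Adj i j := i ≠ j ∧ (bl n k i - bl n k j = 0 ∨ bl n k i - bl n k j = 1 ∨
      bl n k i - bl n k j = -1)
  symm := by
    constructor
    rintro i j ⟨hne, (h | h | h)⟩ <;> refine ⟨hne.symm, ?_⟩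
    · exact Or.inl (by rw [← neg_sub, h, neg_zero])
    · exact Or.inr (Or.inr (by rw [← neg_sub, h]))
    · exact Or.inr (Or.inl (by rw [← neg_sub, h, neg_neg]))
  loopless := by constructor; rintro i ⟨h, -⟩; exact h rfl

/-- `Y`: vertices adjacent iff blocks differ by something other than `±1`. -/
def Yg (n k : ℕ) : SimpleGraph (Fin n) where
  Adj i j := i ≠ j ∧ ¬(bl n k i - bl n k j = 1 ∨ bl n k i - bl n k j = -1)
  symm := by
    constructor
    rintro i j ⟨hne, h⟩
    refine ⟨hne.symm, fun hc => h ?_⟩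
    rcases hc with hc | hc
    · exact Or.inr (by rw [← neg_sub, hc])
    · exact Or.inl (by rw [← neg_sub, hc, neg_neg])
  loopless := by constructor; rintro i ⟨h, -⟩; exact h rfl

lemma zmod_ne (k : ℕ) {a b : ℕ} (ha : a < k) (hb : b < k) (hab : a ≠ b) :
    (a : ZMod k) ≠ (b : ZMod k) := by
  intro h
  rw [ZMod.natCast_eq_natCast_iff] at h
  have := h  -- a ≡ b [MOD k]
  rw [Nat.ModEq, Nat.mod_eq_of_lt ha, Nat.mod_eq_of_lt hb] at this
  exact hab this

lemma neg_one_eq (k : ℕ) (hk : 1 ≤ k) : (-1 : ZMod k) = ((k - 1 : ℕ) : ZMod k) := by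
  have h : ((k : ℕ) : ZMod k) = 0 := ZMod.natCast_self k
  rw [Nat.cast_sub hk, h, Nat.cast_one, zero_sub]

section Main

variable (n k : ℕ) (hk : 5 ≤ k) (hn : k ≤ n)

lemma fib_lb (hk : 5 ≤ k) (hn : k ≤ n) (α : ZMod k) :
    n / k ≤ {i : Fin n | bl n k i = α}.ncard := by
  haveI : NeZero k := ⟨by omega⟩
  set q := n / k with hq
  have hk0 : 0 < k := by omega
  have hq1 : 1 ≤ q := (Nat.one_le_div_iff hk0).2 hn
  have hval : α.val < k := ZMod.val_lt α
  have hmem : ∀ t : Fin q, α.val + t.val * k < n := by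
    intro t
    have h1 : α.val + t.val * k < (t.val + 1) * k := by nlinarith [t.isLt]
    have h2 : (t.val + 1) * k ≤ q * k := by
      have := t.isLt; nlinarith
    have h3 : k * q ≤ n := Nat.mul_div_le n k
    nlinarith
  set f : Fin q → Fin n := fun t => ⟨α.val + t.val * k, hmem t⟩ with hf
  have hinj : Function.Injective f := by
    intro s t hst
    have : α.val + s.val * k = α.val + t.val * k := congrArg Fin.val hst
    have : s.val = t.val := by
      have := Nat.eq_of_mul_eq_mul_right hk0 (by omega : s.val * k = t.val * k)
      exact this
    exact Fin.ext this
  have hsub : Set.range f ⊆ {i : Fin n | bl n k i = α} := by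
    rintro i ⟨t, rfl⟩
    show ((α.val + t.val * k : ℕ) : ZMod k) = α
    push_cast [ZMod.natCast_self]
    rw [ZMod.natCast_rightInverse α]
    ring
  calc q = Nat.card (Fin q) := by simp
    _ = Nat.card (Set.range f) := (Nat.card_range_of_injective hinj).symm
    _ = (Set.range f).ncard := Nat.card_coe_set_eq _
    _ ≤ _ := Set.ncard_le_ncard hsub (Set.toFinite _)

lemma fib_ub (hk : 5 ≤ k) (α : ZMod k) : {i : Fin n | bl n k i = α}.ncard ≤ n / k + 1 := by
  have hk0 : 0 < k := by omega
  set q := n / k with hq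
  have hdm : k * q + n % k = n := Nat.div_add_mod n k
  have hmlt : n % k < k := Nat.mod_lt n hk0
  have hmap : ∀ i : Fin n, i.val / k < q + 1 := by
    intro i
    rw [Nat.div_lt_iff_lt_mul hk0]
    have := i.isLt
    nlinarith
  have hinjOn : Set.InjOn (fun i : Fin n => (⟨i.val / k, hmap i⟩ : Fin (q + 1)))
      {i : Fin n | bl n k i = α} := by
    intro i hi j hj hij
    have h1 : bl n k i = bl n k j := by rw [hi, hj]
    have h2 : (i.val : ZMod k) = (j.val : ZMod k) := h1
    rw [ZMod.natCast_eq_natCast_iff] at h2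
    have hmod : i.val % k = j.val % k := h2
    simp only [Fin.mk.injEq] at hij
    have hdiv : i.val / k = j.val / k := hij
    have heq : i.val = j.val := by
      conv_lhs => rw [← Nat.div_add_mod i.val k]
      conv_rhs => rw [← Nat.div_add_mod j.val k]
      rw [hij, hmod]
    exact Fin.ext heq
  have := Set.ncard_le_ncard_of_injOn (fun i : Fin n => (⟨i.val / k, hmap i⟩ : Fin (q + 1)))
    (fun a _ => Set.mem_univ _) hinjOn (Set.toFinite _)
  calc {i : Fin n | bl n k i = α}.ncard ≤ (Set.univ : Set (Fin (q + 1))).ncard := this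
    _ = q + 1 := by rw [Set.ncard_univ]; simp

lemma zmod_facts (hk : 5 ≤ k) : (1 : ZMod k) ≠ 0 ∧ (2 : ZMod k) ≠ 0 := by
  have h10 : ((1 : ℕ) : ZMod k) ≠ ((0 : ℕ) : ZMod k) := zmod_ne k (by omega) (by omega) (by omega)
  have h20 : ((2 : ℕ) : ZMod k) ≠ ((0 : ℕ) : ZMod k) := zmod_ne k (by omega) (by omega) (by omega)
  exact ⟨by exact_mod_cast h10, by exact_mod_cast h20⟩

lemma Xdeg (hk : 5 ≤ k) (hn : k ≤ n) (v : Fin n) :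
    3 * (n / k) ≤ ((Xg n k).neighborSet v).ncard + 1 := by
  obtain ⟨h10, h20⟩ := zmod_facts k hk
  set A := {j : Fin n | bl n k j = bl n k v} \ {v} with hA
  set B := {j : Fin n | bl n k j = bl n k v + 1} with hB
  set C := {j : Fin n | bl n k j = bl n k v - 1} with hC
  have hsub : A ∪ (B ∪ C) ⊆ (Xg n k).neighborSet v := by
    rintro j (⟨hj, hjv⟩ | hj | hj) <;>
      simp only [hA, hB, hC, Set.mem_setOf_eq] at hj
    · show (Xg n k).Adj v j
      exact ⟨fun h => hjv (Set.mem_singleton_iff.2 h.symm), Or.inl (by linear_combination -hj)⟩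
    · show (Xg n k).Adj v j
      refine ⟨fun h => h10 ?_, Or.inr (Or.inr (by linear_combination -hj))⟩
      rw [← h] at hj; linear_combination -hj
    · show (Xg n k).Adj v j
      refine ⟨fun h => h10 ?_, Or.inr (Or.inl (by linear_combination -hj))⟩
      rw [← h] at hj; linear_combination hj
  have hd1 : Disjoint A (B ∪ C) := by
    rw [Set.disjoint_left]
    rintro j ⟨hj, -⟩ (hj' | hj') <;>
      simp only [hB, hC, Set.mem_setOf_eq] at hj' <;>
      simp only [Set.mem_setOf_eq] at hj
    · have h : (1 : ZMod k) = 0 := by linear_combination hj - hj'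
      exact h10 h
    · have h : (1 : ZMod k) = 0 := by linear_combination hj' - hj
      exact h10 h
  have hd2 : Disjoint B C := by
    rw [Set.disjoint_left]
    intro j hj hj'
    simp only [hB, hC, Set.mem_setOf_eq] at hj hj'
    have h : (2 : ZMod k) = 0 := by linear_combination hj' - hj
    exact h20 h
  have hfib : {j : Fin n | bl n k j = bl n k v} ⊆ insert v A := by
    intro j hj
    by_cases h : j = v
    · exact Set.mem_insert_iff.2 (Or.inl h)
    · exact Set.mem_insert_iff.2 (Or.inr ⟨hj, h⟩)
  have hAcard : n / k ≤ A.ncard + 1 :=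
    le_trans (fib_lb n k hk hn (bl n k v))
      (le_trans (Set.ncard_le_ncard hfib (Set.toFinite _)) (Set.ncard_insert_le v A))
  have hBcard : n / k ≤ B.ncard := fib_lb n k hk hn (bl n k v + 1)
  have hCcard : n / k ≤ C.ncard := fib_lb n k hk hn (bl n k v - 1)
  have hU : (A ∪ (B ∪ C)).ncard = A.ncard + (B.ncard + C.ncard) := by
    rw [Set.ncard_union_eq hd1 (Set.toFinite _) (Set.toFinite _),
        Set.ncard_union_eq hd2 (Set.toFinite _) (Set.toFinite _)]
  have hle := Set.ncard_le_ncard hsub (Set.toFinite _)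
  omega

lemma Ydeg (hk : 5 ≤ k) (hn : k ≤ n) (v : Fin n) :
    n ≤ ((Yg n k).neighborSet v).ncard + (2 * (n / k) + 3) := by
  set B := {j : Fin n | bl n k j = bl n k v + 1} with hB
  set C := {j : Fin n | bl n k j = bl n k v - 1} with hC
  set S := insert v (B ∪ C) with hS
  have hcover : (Set.univ : Set (Fin n)) ⊆ (Yg n k).neighborSet v ∪ S := by
    intro j _
    by_cases hjv : j = v
    · exact Or.inr (Set.mem_insert_iff.2 (Or.inl hjv))
    · by_cases h1 : bl n k j = bl n k v + 1
      · exact Or.inr (Set.mem_insert_iff.2 (Or.inr (Set.mem_union_left _ h1)))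
      · by_cases h2 : bl n k j = bl n k v - 1
        · exact Or.inr (Set.mem_insert_iff.2 (Or.inr (Set.mem_union_right _ h2)))
        · refine Or.inl (show (Yg n k).Adj v j from ⟨fun h => hjv h.symm, ?_⟩)
          rintro (h | h)
          · exact h2 (by linear_combination -h)
          · exact h1 (by linear_combination -h)
  have hScard : S.ncard ≤ 2 * (n / k) + 3 := by
    have h1 : S.ncard ≤ (B ∪ C).ncard + 1 := Set.ncard_insert_le v _
    have h2 : (B ∪ C).ncard ≤ B.ncard + C.ncard := Set.ncard_union_le _ _
    have hBc : B.ncard ≤ n / k + 1 := fib_ub n k hk (bl n k v + 1)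
    have hCc : C.ncard ≤ n / k + 1 := fib_ub n k hk (bl n k v - 1)
    omega
  have huniv : (Set.univ : Set (Fin n)).ncard = n := by rw [Set.ncard_univ]; simp
  have h3 : (Set.univ : Set (Fin n)).ncard ≤ ((Yg n k).neighborSet v ∪ S).ncard :=
    Set.ncard_le_ncard hcover (Set.toFinite _)
  have h4 : ((Yg n k).neighborSet v ∪ S).ncard ≤ ((Yg n k).neighborSet v).ncard + S.ncard :=
    Set.ncard_union_le _ _
  omega

lemma Xconn (hk : 5 ≤ k) (hn : k ≤ n) : (Xg n k).Connected := by
  have h0 : 0 < n := by omega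
  rw [connected_iff]
  refine ⟨?_, ⟨⟨0, h0⟩⟩⟩
  have key : ∀ m (hm : m < n), (Xg n k).Reachable ⟨m, hm⟩ ⟨0, h0⟩ := by
    intro m
    induction m with
    | zero => intro hm; rfl
    | succ m ih =>
      intro hm
      have hadj : (Xg n k).Adj ⟨m + 1, hm⟩ ⟨m, by omega⟩ := by
        refine ⟨by simp [Fin.ext_iff], Or.inr (Or.inl ?_)⟩
        show ((m + 1 : ℕ) : ZMod k) - ((m : ℕ) : ZMod k) = 1
        push_cast
        ring
      exact hadj.reachable.trans (ih (by omega))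
  intro u v
  exact (key u.val u.isLt).trans (key v.val v.isLt).symm

lemma Yconn (hk : 5 ≤ k) (hn : k ≤ n) : (Yg n k).Connected := by
  have h0 : 0 < n := by omega
  have h2 : 2 < n := by omega
  have h3 : 3 < n := by omega
  set v0 : Fin n := ⟨0, h0⟩ with hv0
  set v2 : Fin n := ⟨2, h2⟩ with hv2
  set v3 : Fin n := ⟨3, h3⟩ with hv3
  have hb0 : bl n k v0 = 0 := by show ((0 : ℕ) : ZMod k) = 0; push_cast; rfl
  have hb2 : bl n k v2 = 2 := by show ((2 : ℕ) : ZMod k) = 2; push_cast; rfl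
  have hb3 : bl n k v3 = 3 := by show ((3 : ℕ) : ZMod k) = 3; push_cast; rfl
  have hm1 : (-1 : ZMod k) = ((k - 1 : ℕ) : ZMod k) := neg_one_eq k (by omega)
  have hm2 : (-2 : ZMod k) = ((k - 2 : ℕ) : ZMod k) := by
    rw [Nat.cast_sub (by omega : 2 ≤ k), ZMod.natCast_self, zero_sub]
    push_cast; ring
  have hm3 : (-3 : ZMod k) = ((k - 3 : ℕ) : ZMod k) := by
    rw [Nat.cast_sub (by omega : 3 ≤ k), ZMod.natCast_self, zero_sub]
    push_cast; ring
  have hadj30 : (Yg n k).Adj v3 v0 := by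
    refine ⟨by simp [hv3, hv0, Fin.ext_iff], ?_⟩
    rw [hb0, hb3, sub_zero]
    rintro (h | h)
    · exact zmod_ne k (by omega) (by omega) (by omega : (3:ℕ) ≠ 1)
        (by push_cast; exact h)
    · rw [hm1] at h
      exact zmod_ne k (by omega) (by omega) (by omega : (3:ℕ) ≠ k - 1)
        (by push_cast; exact h)
  have hadj20 : (Yg n k).Adj v2 v0 := by
    refine ⟨by simp [hv2, hv0, Fin.ext_iff], ?_⟩
    rw [hb0, hb2, sub_zero]
    rintro (h | h)
    · exact zmod_ne k (by omega) (by omega) (by omega : (2:ℕ) ≠ 1)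
        (by push_cast; exact h)
    · rw [hm1] at h
      exact zmod_ne k (by omega) (by omega) (by omega : (2:ℕ) ≠ k - 1)
        (by push_cast; exact h)
  rw [connected_iff]
  refine ⟨?_, ⟨v0⟩⟩
  have key : ∀ i : Fin n, (Yg n k).Reachable i v0 := by
    intro i
    by_cases hb1 : bl n k i = 1
    · have hadj : (Yg n k).Adj i v3 := by
        refine ⟨fun h => ?_, ?_⟩
        · rw [h, hb3] at hb1
          exact zmod_ne k (by omega) (by omega) (by omega : (3:ℕ) ≠ 1)
            (by push_cast; exact hb1)
        · rw [hb1, hb3]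
          rintro (h | h)
          · have : (-2 : ZMod k) = 1 := by linear_combination h
            rw [hm2] at this
            exact zmod_ne k (by omega) (by omega) (by omega : k - 2 ≠ 1)
              (by push_cast; exact this)
          · have : (-2 : ZMod k) = -1 := by linear_combination h
            rw [hm2, hm1] at this
            exact zmod_ne k (by omega) (by omega) (by omega : k - 2 ≠ k - 1)
              (by push_cast; exact this)
      exact hadj.reachable.trans hadj30.reachable
    · by_cases hbm1 : bl n k i = -1
      · have hadj : (Yg n k).Adj i v2 := by
          refine ⟨fun h => ?_, ?_⟩
          · rw [h, hb2, hm1] at hbm1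
            exact zmod_ne k (by omega) (by omega) (by omega : (2:ℕ) ≠ k - 1)
              (by push_cast; exact hbm1)
          · rw [hbm1, hb2]
            rintro (h | h)
            · have : (-3 : ZMod k) = 1 := by linear_combination h
              rw [hm3] at this
              exact zmod_ne k (by omega) (by omega) (by omega : k - 3 ≠ 1)
                (by push_cast; exact this)
            · have : (-3 : ZMod k) = -1 := by linear_combination h
              rw [hm3, hm1] at this
              exact zmod_ne k (by omega) (by omega) (by omega : k - 3 ≠ k - 1)
                (by push_cast; exact this)
        exact hadj.reachable.trans hadj20.reachable
      · by_cases hiv0 : i = v0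
        · exact hiv0 ▸ Reachable.refl _
        · have hadj : (Yg n k).Adj i v0 := by
            refine ⟨hiv0, ?_⟩
            rw [hb0, sub_zero]
            rintro (h | h)
            · exact hb1 h
            · exact hbm1 h
          exact hadj.reachable
  exact fun u w => (key u).trans (key w).symm

lemma inv_step (σ τ : Fin n ≃ Fin n) (c : ZMod k)
    (h : (FS (Xg n k) (Yg n k)).Adj σ τ)
    (hσ : ∀ x, bl n k (σ x) = c - bl n k x) :
    ∀ x, bl n k (τ x) = c - bl n k x := by
  obtain ⟨a, b, hX, hY, h1, h2, h3⟩ := h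
  obtain ⟨-, hd⟩ := hX
  obtain ⟨-, hnd⟩ := hY
  have hs : bl n k (σ a) - bl n k (σ b) = bl n k b - bl n k a := by
    rw [hσ a, hσ b]; ring
  have hab : bl n k a = bl n k b := by
    rcases hd with h | h | h
    · linear_combination h
    · exact absurd (Or.inr (by rw [hs]; linear_combination -h)) hnd
    · exact absurd (Or.inl (by rw [hs]; linear_combination -h)) hnd
  intro x
  by_cases hxa : x = a
  · subst hxa
    rw [h1, hσ b, hab]
  · by_cases hxb : x = b
    · subst hxb
      rw [h2, hσ a, hab]
    · rw [h3 x hxa hxb, hσ x]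

lemma inv_reach (c : ZMod k) {σ τ : Fin n ≃ Fin n}
    (h : (FS (Xg n k) (Yg n k)).Reachable σ τ)
    (hσ : ∀ x, bl n k (σ x) = c - bl n k x) :
    ∀ x, bl n k (τ x) = c - bl n k x := by
  obtain ⟨w⟩ := h
  revert hσ
  induction w with
  | nil => exact id
  | cons hadj p ih => exact fun hσ => ih (inv_step n k _ _ c hadj hσ)

lemma not_conn (hk : 5 ≤ k) (hn : k ≤ n) : ¬ (FS (Xg n k) (Yg n k)).Connected := by
  intro hc
  set c : ZMod k := ((n - 1 : ℕ) : ZMod k) with hc'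
  have hrev : ∀ x : Fin n, bl n k (Fin.revPerm x) = c - bl n k x := by
    intro x
    show (((Fin.rev x : Fin n) : ℕ) : ZMod k) = c - ((x : ℕ) : ZMod k)
    rw [Fin.val_rev]
    have hxn : x.val + 1 ≤ n := x.isLt
    have heq : n - (x.val + 1) = (n - 1) - x.val := by omega
    rw [heq, Nat.cast_sub (by omega : x.val ≤ n - 1)]
  have hreach := hc.preconnected Fin.revPerm (Equiv.refl (Fin n))
  have hinv := inv_reach n k c hreach hrev
  have e0 := hinv ⟨0, by omega⟩
  have e1 := hinv ⟨1, by omega⟩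
  simp only [Equiv.refl_apply] at e0 e1
  have hb0 : bl n k ⟨0, by omega⟩ = 0 := by show ((0 : ℕ) : ZMod k) = 0; push_cast; rfl
  have hb1 : bl n k ⟨1, by omega⟩ = 1 := by show ((1 : ℕ) : ZMod k) = 1; push_cast; rfl
  rw [hb0] at e0
  rw [hb1] at e1
  have h20 : (2 : ZMod k) = 0 := by linear_combination e1 - e0
  exact (zmod_facts k hk).2 h20

end Main

theorem statement4 (n k : ℕ) (hk : 5 ≤ k) (hn : k ≤ n) :
    ∃ X Y : SimpleGraph (Fin n), X.Connected ∧ Y.Connected ∧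
      (minDeg X : ℚ) ≥ 3 * n / k - 4 ∧
      (minDeg Y : ℚ) ≥ ((k : ℚ) - 2) * n / k - 3 ∧
      ¬ (FS X Y).Connected := by
  haveI : Nonempty (Fin n) := ⟨⟨0, by omega⟩⟩
  have hk0 : (0 : ℚ) < k := by
    have : (0 : ℕ) < k := by omega
    exact_mod_cast this
  have hkq : (5 : ℚ) ≤ k := by exact_mod_cast hk
  have hq1 : (k : ℚ) * ((n / k : ℕ) : ℚ) ≤ n := by exact_mod_cast Nat.mul_div_le n k
  have hq2 : (n : ℚ) < k * ((n / k : ℕ) : ℚ) + k := by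
    have h1 : k * (n / k) + n % k = n := Nat.div_add_mod n k
    have h2 : n % k < k := Nat.mod_lt n (by omega)
    have : n < k * (n / k) + k := by
      calc n = k * (n / k) + n % k := h1.symm
        _ < k * (n / k) + k := Nat.add_lt_add_left h2 _
    exact_mod_cast this
  refine ⟨Xg n k, Yg n k, Xconn n k hk hn, Yconn n k hk hn, ?_, ?_, not_conn n k hk hn⟩
  · -- minimum degree of X
    obtain ⟨v, hv⟩ := Nat.sInf_mem
      (Set.range_nonempty fun v : Fin n => ((Xg n k).neighborSet v).ncard)
    have hmin : minDeg (Xg n k) = ((Xg n k).neighborSet v).ncard := hv.symm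
    have hb : 3 * (n / k) ≤ minDeg (Xg n k) + 1 := hmin ▸ Xdeg n k hk hn v
    have hbQ : 3 * ((n / k : ℕ) : ℚ) ≤ (minDeg (Xg n k) : ℚ) + 1 := by exact_mod_cast hb
    rw [ge_iff_le, sub_le_iff_le_add, div_le_iff₀ hk0]
    nlinarith [mul_le_mul_of_nonneg_left hbQ hk0.le]
  · -- minimum degree of Y
    obtain ⟨v, hv⟩ := Nat.sInf_mem
      (Set.range_nonempty fun v : Fin n => ((Yg n k).neighborSet v).ncard)
    have hmin : minDeg (Yg n k) = ((Yg n k).neighborSet v).ncard := hv.symm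
    have hb : n ≤ minDeg (Yg n k) + (2 * (n / k) + 3) := hmin ▸ Ydeg n k hk hn v
    have hbQ : (n : ℚ) ≤ (minDeg (Yg n k) : ℚ) + (2 * ((n / k : ℕ) : ℚ) + 3) := by
      exact_mod_cast hb
    rw [ge_iff_le, sub_le_iff_le_add, div_le_iff₀ hk0]
    nlinarith [mul_le_mul_of_nonneg_left hbQ hk0.le]
end

section
/- Let r ≥ 2, and let δ₁, δ₂ be non-negative integers satisfying δ₁ + δ₂ = ⌊3r/2⌋, δ₁ ≤ r, and δ₂ ≤ r. Then there exist edge-subgraphs X and Y of K_{r,r} such that δ(X) = δ₁, δ(Y) = δ₂, and the friends-and-strangers graph FS(X,Y) has more than two connected components. -/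
open SimpleGraph

namespace FSaux

open Finset

set_option linter.unusedSectionVars false

variable {r : ℕ}

/-! ### Bipartite graphs from predicates -/

/-- Bipartite graph on `Fin r ⊕ Fin r` determined by a predicate on pairs. -/
def bip (r : ℕ) (P : Fin r → Fin r → Prop) : SimpleGraph (Fin r ⊕ Fin r) where
  Adj u v := match u, v with
    | Sum.inl i, Sum.inr j => P i j
    | Sum.inr j, Sum.inl i => P i j
    | _, _ => False
  symm := by constructor; rintro (i|i) (j|j) h <;> exact h
  loopless := by constructor; rintro (i|i) h <;> exact h

@[simp] lemma bip_adj_inl_inr {P : Fin r → Fin r → Prop} {i j : Fin r} :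
    (bip r P).Adj (Sum.inl i) (Sum.inr j) ↔ P i j := Iff.rfl

@[simp] lemma bip_adj_inr_inl {P : Fin r → Fin r → Prop} {i j : Fin r} :
    (bip r P).Adj (Sum.inr j) (Sum.inl i) ↔ P i j := Iff.rfl

@[simp] lemma bip_adj_inl_inl {P : Fin r → Fin r → Prop} {i j : Fin r} :
    ¬ (bip r P).Adj (Sum.inl i) (Sum.inl j) := fun h => h

@[simp] lemma bip_adj_inr_inr {P : Fin r → Fin r → Prop} {i j : Fin r} :
    ¬ (bip r P).Adj (Sum.inr i) (Sum.inr j) := fun h => h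

lemma bip_le (P : Fin r → Fin r → Prop) :
    bip r P ≤ completeBipartiteGraph (Fin r) (Fin r) := by
  rintro (i|i) (j|j) h
  · exact absurd h bip_adj_inl_inl
  · simp [completeBipartiteGraph]
  · simp [completeBipartiteGraph]
  · exact absurd h bip_adj_inr_inr

lemma nbhd_inl (P : Fin r → Fin r → Prop) (i : Fin r) :
    (bip r P).neighborSet (Sum.inl i) = Sum.inr '' {j | P i j} := by
  ext (j|j) <;> simp [mem_neighborSet]

lemma nbhd_inr (P : Fin r → Fin r → Prop) (j : Fin r) :
    (bip r P).neighborSet (Sum.inr j) = Sum.inl '' {i | P i j} := by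
  ext (i|i) <;> simp [mem_neighborSet]

lemma ncard_nbhd_inl (P : Fin r → Fin r → Prop) [∀ i j, Decidable (P i j)]
    (i : Fin r) :
    ((bip r P).neighborSet (Sum.inl i)).ncard
      = (univ.filter (fun j : Fin r => P i j)).card := by
  classical
  rw [nbhd_inl, Set.ncard_image_of_injective _ Sum.inr_injective]
  have h : {j : Fin r | P i j} = ↑(univ.filter (fun j : Fin r => P i j)) := by ext; simp
  rw [h, Set.ncard_coe_finset]

lemma ncard_nbhd_inr (P : Fin r → Fin r → Prop) [∀ i j, Decidable (P i j)]
    (j : Fin r) :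
    ((bip r P).neighborSet (Sum.inr j)).ncard
      = (univ.filter (fun i : Fin r => P i j)).card := by
  classical
  rw [nbhd_inr, Set.ncard_image_of_injective _ Sum.inl_injective]
  have h : {i : Fin r | P i j} = ↑(univ.filter (fun i : Fin r => P i j)) := by ext; simp
  rw [h, Set.ncard_coe_finset]

/-! ### Counting lemmas -/

lemma count_zmod (m a : ℕ) [NeZero m] (ha : a ≤ m) (x : ZMod m) :
    (univ.filter fun y : ZMod m => (x + y).val < a).card = a := by
  classical
  rcases Nat.eq_zero_or_pos a with rfl | hapos
  · simp
  have h : (univ.filter fun y : ZMod m => (x + y).val < a).card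
      = (univ : Finset (Fin a)).card := by
    apply Finset.card_nbij' (i := fun y => (⟨(x + y).val % a, Nat.mod_lt _ hapos⟩ : Fin a))
        (j := fun t : Fin a => ((t.val : ZMod m) - x))
    · intro y _; simp
    · intro t _
      simp only [mem_coe, mem_filter, mem_univ, true_and]
      have h2 : x + ((t.val : ZMod m) - x) = (t.val : ZMod m) := by ring
      rw [h2, ZMod.val_cast_of_lt (lt_of_lt_of_le t.isLt ha)]
      exact t.isLt
    · intro y hy
      simp only [mem_coe, mem_filter, mem_univ, true_and] at hy
      have h1 : (x + y).val % a = (x + y).val := Nat.mod_eq_of_lt hy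
      simp only [h1]
      rw [ZMod.natCast_rightInverse (x + y)]
      ring
    · intro t _
      have h2 : x + ((t.val : ZMod m) - x) = (t.val : ZMod m) := by ring
      apply Fin.ext
      simp only [h2, ZMod.val_cast_of_lt (lt_of_lt_of_le t.isLt ha)]
      exact Nat.mod_eq_of_lt t.isLt
  rw [h, card_univ, Fintype.card_fin]

/-- count of `j` in the `[lo, lo+m)` block of `Fin r` satisfying a circulant condition. -/
lemma count_block (lo m a : ℕ) (hm : 0 < m) (ha : a ≤ m) (hr : lo + m ≤ r) (x : ZMod m) :
    (univ.filter fun j : Fin r =>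
      (lo ≤ j.val ∧ j.val < lo + m) ∧ (x + ((j.val - lo : ℕ) : ZMod m)).val < a).card = a := by
  classical
  haveI : NeZero m := ⟨hm.ne'⟩
  have h : (univ.filter fun j : Fin r =>
      (lo ≤ j.val ∧ j.val < lo + m) ∧ (x + ((j.val - lo : ℕ) : ZMod m)).val < a).card
      = (univ.filter fun y : ZMod m => (x + y).val < a).card := by
    apply Finset.card_nbij' (i := fun j : Fin r => ((j.val - lo : ℕ) : ZMod m))
        (j := fun y : ZMod m => (⟨lo + y.val, by have := ZMod.val_lt y; omega⟩ : Fin r))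
    · intro j hj
      simp only [mem_coe, mem_filter, mem_univ, true_and] at hj ⊢
      exact hj.2
    · intro y hy
      simp only [mem_coe, mem_filter, mem_univ, true_and] at hy ⊢
      have hv := ZMod.val_lt y
      refine ⟨⟨by omega, by omega⟩, ?_⟩
      have h2 : lo + y.val - lo = y.val := by omega
      rw [h2, ZMod.natCast_rightInverse y]
      exact hy
    · intro j hj
      simp only [mem_coe, mem_filter, mem_univ, true_and] at hj
      apply Fin.ext
      simp only
      rw [ZMod.val_cast_of_lt (by omega : j.val - lo < m)]
      omega
    · intro y _
      simp only
      have h2 : lo + y.val - lo = y.val := by omega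
      rw [h2, ZMod.natCast_rightInverse y]
  rw [h]
  exact count_zmod m a ha x

/-- count of a block interval. -/
lemma count_interval (lo m : ℕ) (hr : lo + m ≤ r) :
    (univ.filter fun j : Fin r => lo ≤ j.val ∧ j.val < lo + m).card = m := by
  classical
  have h : (univ.filter fun j : Fin r => lo ≤ j.val ∧ j.val < lo + m).card
      = (univ : Finset (Fin m)).card := by
    rcases Nat.eq_zero_or_pos m with rfl | hm
    · rw [Finset.filter_false_of_mem (by intro j _; omega)]; simp
    apply Finset.card_nbij' (i := fun j : Fin r => (⟨(j.val - lo) % m, Nat.mod_lt _ hm⟩ : Fin m))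
        (j := fun t : Fin m => (⟨lo + t.val, by have := t.isLt; omega⟩ : Fin r))
    · intro j _; simp
    · intro t _
      simp only [mem_coe, mem_filter, mem_univ, true_and]
      have := t.isLt; omega
    · intro j hj
      simp only [mem_coe, mem_filter, mem_univ, true_and] at hj
      apply Fin.ext
      simp only
      have h2 : (j.val - lo) % m = j.val - lo := Nat.mod_eq_of_lt (by omega)
      omega
    · intro t _
      apply Fin.ext
      simp only
      have h2 : (lo + t.val - lo) % m = t.val := by
        rw [Nat.add_sub_cancel_left]; exact Nat.mod_eq_of_lt t.isLt
      omega
  rw [h, card_univ, Fintype.card_fin]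

/-- complement count inside a block. -/
lemma count_block_neg (lo m a : ℕ) (hm : 0 < m) (ha : a ≤ m) (hr : lo + m ≤ r) (x : ZMod m) :
    (univ.filter fun j : Fin r =>
      (lo ≤ j.val ∧ j.val < lo + m) ∧ ¬ (x + ((j.val - lo : ℕ) : ZMod m)).val < a).card
      = m - a := by
  classical
  have key := Finset.card_filter_add_card_filter_not
    (s := univ.filter fun j : Fin r => lo ≤ j.val ∧ j.val < lo + m)
    (p := fun j : Fin r => (x + ((j.val - lo : ℕ) : ZMod m)).val < a)
  rw [Finset.filter_filter, Finset.filter_filter, count_interval lo m hr] at key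
  have h1 := count_block (r := r) lo m a hm ha hr x
  omega

/-! ### The two graph predicates -/

def Scond (m a : ℕ) (i j : ℕ) : Prop := ((i : ZMod m) + (j : ZMod m)).val < a

lemma Scond_comm (m a i j : ℕ) : Scond m a i j ↔ Scond m a j i := by
  unfold Scond; rw [add_comm]

def XP (r m k a b : ℕ) (i j : Fin r) : Prop :=
  if i.val < m then (if j.val < m then Scond m a i.val j.val else True)
  else (if j.val < m then True else Scond k b (i.val - m) (j.val - m))

def YP (r m k a b : ℕ) (i j : Fin r) : Prop :=
  if i.val < m then (if j.val < m then ¬ Scond m a i.val j.val else True)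
  else (if j.val < m then True else ¬ Scond k b (i.val - m) (j.val - m))

instance {m a i j : ℕ} : Decidable (Scond m a i j) := by unfold Scond; infer_instance
instance {r m k a b : ℕ} {i j : Fin r} : Decidable (XP r m k a b i j) := by
  unfold XP; infer_instance
instance {r m k a b : ℕ} {i j : Fin r} : Decidable (YP r m k a b i j) := by
  unfold YP; infer_instance

lemma XP_comm {m k a b : ℕ} (i j : Fin r) : XP r m k a b i j ↔ XP r m k a b j i := by
  unfold XP
  by_cases hi : i.val < m <;> by_cases hj : j.val < m <;>
    simp [hi, hj, Scond_comm]

lemma YP_comm {m k a b : ℕ} (i j : Fin r) : YP r m k a b i j ↔ YP r m k a b j i := by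
  unfold YP
  by_cases hi : i.val < m <;> by_cases hj : j.val < m <;>
    simp [hi, hj, Scond_comm]

section rows
variable {m k a b : ℕ} (hm : 0 < m) (hk : 0 < k) (ha : a ≤ m) (hb : b ≤ k) (hmk : m + k = r)
include hm hk ha hb hmk

lemma XP_row_lo {i : Fin r} (hi : i.val < m) :
    (univ.filter fun j => XP r m k a b i j).card = a + k := by
  classical
  have e : ∀ j : Fin r, XP r m k a b i j ↔
      (((0 ≤ j.val ∧ j.val < 0 + m) ∧
        (((i.val : ZMod m)) + ((j.val - 0 : ℕ) : ZMod m)).val < a) ∨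
       (m ≤ j.val ∧ j.val < m + k)) := by
    intro j; unfold XP Scond; rw [if_pos hi]
    by_cases hj : j.val < m
    · rw [if_pos hj]
      constructor
      · intro h; exact Or.inl ⟨⟨Nat.zero_le _, by omega⟩, by simpa using h⟩
      · rintro (⟨-, h⟩ | ⟨h, -⟩)
        · simpa using h
        · omega
    · rw [if_neg hj]
      have := j.isLt
      constructor
      · intro _; exact Or.inr ⟨by omega, by omega⟩
      · intro _; trivial
  rw [filter_congr (fun j _ => e j), filter_or,
    card_union_of_disjoint (by
      rw [Finset.disjoint_left]; intro x hx hx'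
      simp only [mem_filter] at hx hx'; omega),
    count_block 0 m a hm ha (by omega) _, count_interval m k (by omega)]

lemma XP_row_hi {i : Fin r} (hi : ¬ i.val < m) :
    (univ.filter fun j => XP r m k a b i j).card = m + b := by
  classical
  have e : ∀ j : Fin r, XP r m k a b i j ↔
      ((0 ≤ j.val ∧ j.val < 0 + m) ∨
       ((m ≤ j.val ∧ j.val < m + k) ∧
        (((i.val - m : ℕ) : ZMod k) + ((j.val - m : ℕ) : ZMod k)).val < b)) := by
    intro j; unfold XP Scond; rw [if_neg hi]
    by_cases hj : j.val < m
    · rw [if_pos hj]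
      constructor
      · intro _; exact Or.inl ⟨Nat.zero_le _, by omega⟩
      · intro _; trivial
    · rw [if_neg hj]
      have := j.isLt
      constructor
      · intro h; exact Or.inr ⟨⟨by omega, by omega⟩, h⟩
      · rintro (⟨-, h⟩ | ⟨-, h⟩)
        · omega
        · exact h
  rw [filter_congr (fun j _ => e j), filter_or,
    card_union_of_disjoint (by
      rw [Finset.disjoint_left]; intro x hx hx'
      simp only [mem_filter] at hx hx'; omega),
    count_interval 0 m (by omega), count_block m k b hk hb (by omega) _]

lemma YP_row_lo {i : Fin r} (hi : i.val < m) :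
    (univ.filter fun j => YP r m k a b i j).card = (m - a) + k := by
  classical
  have e : ∀ j : Fin r, YP r m k a b i j ↔
      (((0 ≤ j.val ∧ j.val < 0 + m) ∧
        ¬ (((i.val : ZMod m)) + ((j.val - 0 : ℕ) : ZMod m)).val < a) ∨
       (m ≤ j.val ∧ j.val < m + k)) := by
    intro j; unfold YP Scond; rw [if_pos hi]
    by_cases hj : j.val < m
    · rw [if_pos hj]
      constructor
      · intro h; exact Or.inl ⟨⟨Nat.zero_le _, by omega⟩, by simpa using h⟩
      · rintro (⟨-, h⟩ | ⟨h, -⟩)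
        · simpa using h
        · omega
    · rw [if_neg hj]
      have := j.isLt
      constructor
      · intro _; exact Or.inr ⟨by omega, by omega⟩
      · intro _; trivial
  rw [filter_congr (fun j _ => e j), filter_or,
    card_union_of_disjoint (by
      rw [Finset.disjoint_left]; intro x hx hx'
      simp only [mem_filter] at hx hx'; omega),
    count_block_neg 0 m a hm ha (by omega) _, count_interval m k (by omega)]

lemma YP_row_hi {i : Fin r} (hi : ¬ i.val < m) :
    (univ.filter fun j => YP r m k a b i j).card = m + (k - b) := by
  classical
  have e : ∀ j : Fin r, YP r m k a b i j ↔
      ((0 ≤ j.val ∧ j.val < 0 + m) ∨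
       ((m ≤ j.val ∧ j.val < m + k) ∧
        ¬ (((i.val - m : ℕ) : ZMod k) + ((j.val - m : ℕ) : ZMod k)).val < b)) := by
    intro j; unfold YP Scond; rw [if_neg hi]
    by_cases hj : j.val < m
    · rw [if_pos hj]
      constructor
      · intro _; exact Or.inl ⟨Nat.zero_le _, by omega⟩
      · intro _; trivial
    · rw [if_neg hj]
      have := j.isLt
      constructor
      · intro h; exact Or.inr ⟨⟨by omega, by omega⟩, h⟩
      · rintro (⟨-, h⟩ | ⟨-, h⟩)
        · omega
        · exact h
  rw [filter_congr (fun j _ => e j), filter_or,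
    card_union_of_disjoint (by
      rw [Finset.disjoint_left]; intro x hx hx'
      simp only [mem_filter] at hx hx'; omega),
    count_interval 0 m (by omega), count_block_neg m k b hk hb (by omega) _]

end rows

/-! ### minimum degree -/

lemma minDeg_eq_min {V : Type*} [Nonempty V] (G : SimpleGraph V) (x y : ℕ)
    (h : ∀ v, (G.neighborSet v).ncard = x ∨ (G.neighborSet v).ncard = y)
    (hx : ∃ v, (G.neighborSet v).ncard = x) (hy : ∃ v, (G.neighborSet v).ncard = y) :
    minDeg G = min x y := by
  unfold minDeg
  apply le_antisymm
  · rcases le_total x y with h' | h'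
    · obtain ⟨v, hv⟩ := hx
      rw [min_eq_left h', ← hv]
      exact ciInf_le (OrderBot.bddBelow _) v
    · obtain ⟨v, hv⟩ := hy
      rw [min_eq_right h', ← hv]
      exact ciInf_le (OrderBot.bddBelow _) v
  · apply le_ciInf
    intro v
    rcases h v with hv | hv <;> rw [hv]
    · exact min_le_left _ _
    · exact min_le_right _ _

/-- If `v` is isolated, anything reachable from it equals it. -/
lemma reach_eq_of_isolated {V : Type*} {G : SimpleGraph V} {v x : V}
    (h : ∀ w, ¬ G.Adj v w) (hr : G.Reachable v x) : x = v := by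
  obtain ⟨w⟩ := hr
  cases w with
  | nil => rfl
  | cons h' _ => exact absurd h' (h _)

/-! ### The parity invariant -/

/-- number of left vertices sent to the right -/
def kcount (σ : Equiv.Perm (Fin r ⊕ Fin r)) : ℕ :=
  (univ.filter fun i : Fin r => (σ (Sum.inl i)).isRight).card

noncomputable def eps (σ : Equiv.Perm (Fin r ⊕ Fin r)) : ℤˣ :=
  Equiv.Perm.sign σ * (-1) ^ (kcount σ)

lemma eps_adj_core {Q : Fin r → Fin r → Prop}
    {σ τ : Equiv.Perm (Fin r ⊕ Fin r)} (i j : Fin r)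
    (hY : (bip r Q).Adj (σ (Sum.inl i)) (σ (Sum.inr j)))
    (h1 : τ (Sum.inl i) = σ (Sum.inr j)) (h2 : τ (Sum.inr j) = σ (Sum.inl i))
    (h3 : ∀ w, w ≠ Sum.inl i → w ≠ Sum.inr j → τ w = σ w) :
    eps τ = eps σ := by
  classical
  have hpq : σ (Sum.inl i) ≠ σ (Sum.inr j) := hY.ne
  have hτ : τ = σ.trans (Equiv.swap (σ (Sum.inl i)) (σ (Sum.inr j))) := by
    apply Equiv.ext; intro w
    by_cases hw : w = Sum.inl i
    · subst hw
      simp only [Equiv.trans_apply, Equiv.swap_apply_left]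
      exact h1
    by_cases hw' : w = Sum.inr j
    · subst hw'
      simp only [Equiv.trans_apply, Equiv.swap_apply_right]
      exact h2
    · rw [h3 w hw hw']
      simp only [Equiv.trans_apply]
      rw [Equiv.swap_apply_of_ne_of_ne (σ.injective.ne hw) (σ.injective.ne hw')]
  have hsign : Equiv.Perm.sign τ = - Equiv.Perm.sign σ := by
    rw [hτ, ← Equiv.Perm.mul_def, map_mul, Equiv.Perm.sign_swap hpq, neg_one_mul]
  have hmemne : ∀ i' : Fin r, i' ≠ i → τ (Sum.inl i') = σ (Sum.inl i') := by
    intro i' hi'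
    exact h3 _ (by simp [hi']) (by simp)
  have hk : ((-1 : ℤˣ)) ^ (kcount τ) = - ((-1 : ℤˣ)) ^ (kcount σ) := by
    rcases hu : σ (Sum.inl i) with u | u <;> rcases hv : σ (Sum.inr j) with v | v
    · rw [hu, hv] at hY; exact absurd hY bip_adj_inl_inl
    · -- left goes to left, so τ adds i to the right-going set
      have hset : (univ.filter fun i' : Fin r => (τ (Sum.inl i')).isRight)
          = insert i (univ.filter fun i' : Fin r => (σ (Sum.inl i')).isRight) := by
        ext i'
        simp only [mem_filter, mem_univ, true_and, mem_insert]
        by_cases hi' : i' = i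
        · subst hi'
          rw [h1, hv]
          simp
        · rw [hmemne i' hi']
          simp [hi']
      have hnot : i ∉ (univ.filter fun i' : Fin r => (σ (Sum.inl i')).isRight) := by
        simp [hu]
      unfold kcount
      rw [hset, Finset.card_insert_of_notMem hnot, pow_succ, mul_neg_one]
    · -- left went right; now it goes left
      have hset : (univ.filter fun i' : Fin r => (τ (Sum.inl i')).isRight)
          = (univ.filter fun i' : Fin r => (σ (Sum.inl i')).isRight).erase i := by
        ext i'
        simp only [mem_filter, mem_univ, true_and, Finset.mem_erase]
        by_cases hi' : i' = i
        · subst hi'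
          rw [h1, hv]
          simp
        · rw [hmemne i' hi']
          simp [hi']
      have hmem : i ∈ (univ.filter fun i' : Fin r => (σ (Sum.inl i')).isRight) := by
        simp [hu]
      unfold kcount
      rw [hset, Finset.card_erase_of_mem hmem]
      obtain ⟨n, hn⟩ : ∃ n, (univ.filter fun i' : Fin r => (σ (Sum.inl i')).isRight).card
          = n + 1 := ⟨_, (Nat.succ_pred_eq_of_pos (Finset.card_pos.mpr ⟨i, hmem⟩)).symm⟩
      rw [hn]
      simp [pow_succ, mul_neg_one]
    · rw [hu, hv] at hY; exact absurd hY bip_adj_inr_inr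
  unfold eps
  rw [hsign, hk, neg_mul_neg]

lemma eps_adj {P Q : Fin r → Fin r → Prop}
    {σ τ : Equiv.Perm (Fin r ⊕ Fin r)}
    (h : (FS (bip r P) (bip r Q)).Adj σ τ) : eps τ = eps σ := by
  obtain ⟨p, q, hX, hY, h1, h2, h3⟩ := h
  rcases p with i | i <;> rcases q with j | j
  · exact absurd hX bip_adj_inl_inl
  · exact eps_adj_core i j hY h1 h2 h3
  · exact eps_adj_core j i hY.symm h2 h1 (fun w hw hw' => h3 w hw' hw)
  · exact absurd hX bip_adj_inr_inr

lemma eps_reach {P Q : Fin r → Fin r → Prop}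
    {σ τ : Equiv.Perm (Fin r ⊕ Fin r)}
    (h : (FS (bip r P) (bip r Q)).Reachable σ τ) : eps τ = eps σ := by
  obtain ⟨w⟩ := h
  induction w with
  | nil => rfl
  | cons h' _ ih => rw [ih, eps_adj h']

lemma isRight_swap_inl (u v : Fin r) (x : Fin r ⊕ Fin r) :
    ((Equiv.swap (Sum.inl u : Fin r ⊕ Fin r) (Sum.inl v)) x).isRight = x.isRight := by
  rcases x with w | w <;>
    · simp only [Equiv.swap_apply_def]
      split_ifs with h1 h2 <;> simp_all

lemma isRight_swap_inr (u v : Fin r) (x : Fin r ⊕ Fin r) :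
    ((Equiv.swap (Sum.inr u : Fin r ⊕ Fin r) (Sum.inr v)) x).isRight = x.isRight := by
  rcases x with w | w <;>
    · simp only [Equiv.swap_apply_def]
      split_ifs with h1 h2 <;> simp_all


/-! ### The isolated bijection -/

def invfun (r m : ℕ) : Fin r ⊕ Fin r → Fin r ⊕ Fin r
  | Sum.inl i => if i.val < m then Sum.inr i else Sum.inl i
  | Sum.inr j => if j.val < m then Sum.inl j else Sum.inr j

lemma invfun_invol (r m : ℕ) : Function.Involutive (invfun r m) := by
  rintro (i | i) <;> unfold invfun <;> by_cases h : i.val < m <;> simp [h]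

@[simp] lemma invfun_inl (r m : ℕ) (i : Fin r) :
    invfun r m (Sum.inl i) = if i.val < m then Sum.inr i else Sum.inl i := rfl

@[simp] lemma invfun_inr (r m : ℕ) (j : Fin r) :
    invfun r m (Sum.inr j) = if j.val < m then Sum.inl j else Sum.inr j := rfl

def sigma0 (r m : ℕ) : Equiv.Perm (Fin r ⊕ Fin r) :=
  Function.Involutive.toPerm _ (invfun_invol r m)

lemma sigma0_apply (r m : ℕ) (x : Fin r ⊕ Fin r) : sigma0 r m x = invfun r m x := rfl

lemma sigma0_isolated {m k a b : ℕ} (τ : Equiv.Perm (Fin r ⊕ Fin r)) :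
    ¬ (FS (bip r (XP r m k a b)) (bip r (YP r m k a b))).Adj (sigma0 r m) τ := by
  rintro ⟨p, q, hX, hY, -, -, -⟩
  rcases p with i | i <;> rcases q with j | j
  · exact absurd hX bip_adj_inl_inl
  · -- p = inl i, q = inr j
    have hX' : XP r m k a b i j := hX
    rw [sigma0_apply, sigma0_apply, invfun_inl, invfun_inr] at hY
    by_cases hi : i.val < m <;> by_cases hj : j.val < m
    · rw [if_pos hi, if_pos hj] at hY
      have hY' : YP r m k a b j i := hY
      unfold YP at hY'
      rw [if_pos hj, if_pos hi] at hY'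
      unfold XP at hX'
      rw [if_pos hi, if_pos hj] at hX'
      exact hY' ((Scond_comm m a i.val j.val).mp hX')
    · rw [if_pos hi, if_neg hj] at hY
      exact absurd hY bip_adj_inr_inr
    · rw [if_neg hi, if_pos hj] at hY
      exact absurd hY bip_adj_inl_inl
    · rw [if_neg hi, if_neg hj] at hY
      have hY' : YP r m k a b i j := hY
      unfold YP at hY'
      rw [if_neg hi, if_neg hj] at hY'
      unfold XP at hX'
      rw [if_neg hi, if_neg hj] at hX'
      exact hY' hX'
  · -- p = inr i, q = inl j
    have hX' : XP r m k a b j i := hX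
    rw [sigma0_apply, sigma0_apply, invfun_inr, invfun_inl] at hY
    by_cases hi : i.val < m <;> by_cases hj : j.val < m
    · rw [if_pos hi, if_pos hj] at hY
      have hY' : YP r m k a b i j := hY
      unfold YP at hY'
      rw [if_pos hi, if_pos hj] at hY'
      unfold XP at hX'
      rw [if_pos hj, if_pos hi] at hX'
      exact hY' ((Scond_comm m a j.val i.val).mp hX')
    · rw [if_pos hi, if_neg hj] at hY
      exact absurd hY bip_adj_inl_inl
    · rw [if_neg hi, if_pos hj] at hY
      exact absurd hY bip_adj_inr_inr
    · rw [if_neg hi, if_neg hj] at hY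
      have hY' : YP r m k a b j i := hY
      unfold YP at hY'
      rw [if_neg hj, if_neg hi] at hY'
      unfold XP at hX'
      rw [if_neg hj, if_neg hi] at hX'
      exact hY' hX'
  · exact absurd hX bip_adj_inr_inr

end FSaux

open FSaux Finset in
theorem statement6 (r δ₁ δ₂ : ℕ) (hr : 2 ≤ r)
    (hsum : δ₁ + δ₂ = 3 * r / 2) (h1 : δ₁ ≤ r) (h2 : δ₂ ≤ r) :
    ∃ X Y : SimpleGraph (Fin r ⊕ Fin r),
      X ≤ completeBipartiteGraph (Fin r) (Fin r) ∧
      Y ≤ completeBipartiteGraph (Fin r) (Fin r) ∧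
      minDeg X = δ₁ ∧ minDeg Y = δ₂ ∧
      2 < Nat.card (FS X Y).ConnectedComponent := by
  classical
  set m : ℕ := r / 2 with hm_def
  set k : ℕ := r - r / 2 with hk_def
  set c : ℕ := r - δ₂ with hc_def
  set aa : ℕ := min c m with haa_def
  set bb : ℕ := c with hbb_def
  have hm : 0 < m := by omega
  have hk : 0 < k := by omega
  have hmk : m + k = r := by omega
  have ha : aa ≤ m := by omega
  have hb : bb ≤ k := by omega
  haveI : Nonempty (Fin r ⊕ Fin r) := ⟨Sum.inl ⟨0, by omega⟩⟩
  refine ⟨bip r (XP r m k aa bb), bip r (YP r m k aa bb), bip_le _, bip_le _, ?_, ?_, ?_⟩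
  · -- min degree of X
    have := minDeg_eq_min (bip r (XP r m k aa bb)) (aa + k) (m + bb)
      (by
        rintro (i | i)
        · rw [ncard_nbhd_inl]
          by_cases hi : i.val < m
          · exact Or.inl (XP_row_lo hm hk ha hb hmk hi)
          · exact Or.inr (XP_row_hi hm hk ha hb hmk hi)
        · rw [ncard_nbhd_inr]
          rw [filter_congr (fun j _ => XP_comm j i)]
          by_cases hi : i.val < m
          · exact Or.inl (XP_row_lo hm hk ha hb hmk hi)
          · exact Or.inr (XP_row_hi hm hk ha hb hmk hi))
      (by
        refine ⟨Sum.inl ⟨0, by omega⟩, ?_⟩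
        rw [ncard_nbhd_inl]
        exact XP_row_lo hm hk ha hb hmk (by simpa using hm))
      (by
        refine ⟨Sum.inl ⟨m, by omega⟩, ?_⟩
        rw [ncard_nbhd_inl]
        exact XP_row_hi hm hk ha hb hmk (by simp))
    rw [this]
    omega
  · -- min degree of Y
    have := minDeg_eq_min (bip r (YP r m k aa bb)) ((m - aa) + k) (m + (k - bb))
      (by
        rintro (i | i)
        · rw [ncard_nbhd_inl]
          by_cases hi : i.val < m
          · exact Or.inl (YP_row_lo hm hk ha hb hmk hi)
          · exact Or.inr (YP_row_hi hm hk ha hb hmk hi)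
        · rw [ncard_nbhd_inr]
          rw [filter_congr (fun j _ => YP_comm j i)]
          by_cases hi : i.val < m
          · exact Or.inl (YP_row_lo hm hk ha hb hmk hi)
          · exact Or.inr (YP_row_hi hm hk ha hb hmk hi))
      (by
        refine ⟨Sum.inl ⟨0, by omega⟩, ?_⟩
        rw [ncard_nbhd_inl]
        exact YP_row_lo hm hk ha hb hmk (by simpa using hm))
      (by
        refine ⟨Sum.inl ⟨m, by omega⟩, ?_⟩
        rw [ncard_nbhd_inl]
        exact YP_row_hi hm hk ha hb hmk (by simp))
    rw [this]
    omega
  · -- more than two connected components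
    have hiso : ∀ τ, ¬ (FS (bip r (XP r m k aa bb)) (bip r (YP r m k aa bb))).Adj
        (sigma0 r m) τ := fun τ => sigma0_isolated τ
    set σ₀ := sigma0 r m with hσ₀_def
    set u0 : Fin r := ⟨0, by omega⟩ with hu0
    set u1 : Fin r := ⟨1, by omega⟩ with hu1
    have hu01 : u0 ≠ u1 := by simp [hu0, hu1, Fin.ext_iff]
    have hil : (Sum.inl u0 : Fin r ⊕ Fin r) ≠ Sum.inl u1 := by simpa using hu01
    have hir : (Sum.inr u0 : Fin r ⊕ Fin r) ≠ Sum.inr u1 := by simpa using hu01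
    set τ₂ := σ₀.trans (Equiv.swap (Sum.inl u0 : Fin r ⊕ Fin r) (Sum.inl u1)) with hτ₂
    set τ₁ := τ₂.trans (Equiv.swap (Sum.inr u0 : Fin r ⊕ Fin r) (Sum.inr u1)) with hτ₁
    have hkc2 : kcount τ₂ = kcount σ₀ := by
      unfold kcount
      refine congrArg Finset.card (Finset.filter_congr fun i _ => ?_)
      rw [hτ₂, Equiv.trans_apply, isRight_swap_inl]
    have hkc1 : kcount τ₁ = kcount σ₀ := by
      rw [← hkc2]
      unfold kcount
      refine congrArg Finset.card (Finset.filter_congr fun i _ => ?_)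
      rw [hτ₁, Equiv.trans_apply, isRight_swap_inr]
    have hsign2 : Equiv.Perm.sign τ₂ = - Equiv.Perm.sign σ₀ := by
      rw [hτ₂, ← Equiv.Perm.mul_def, map_mul, Equiv.Perm.sign_swap hil, neg_one_mul]
    have hsign1 : Equiv.Perm.sign τ₁ = Equiv.Perm.sign σ₀ := by
      rw [hτ₁, ← Equiv.Perm.mul_def, map_mul, Equiv.Perm.sign_swap hir, neg_one_mul,
        hsign2, neg_neg]
    have heps2 : eps τ₂ = - eps σ₀ := by
      unfold eps
      rw [hsign2, hkc2, neg_mul]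
    have heps1 : eps τ₁ = eps σ₀ := by
      unfold eps
      rw [hsign1, hkc1]
    have hτ₁ne : τ₁ ≠ σ₀ := by
      intro h
      have h0 := congrArg (fun e : Equiv.Perm (Fin r ⊕ Fin r) =>
        e (σ₀.symm (Sum.inl u0))) h
      simp only [hτ₁, hτ₂, Equiv.trans_apply, Equiv.apply_symm_apply] at h0
      rw [Equiv.swap_apply_left,
        Equiv.swap_apply_of_ne_of_ne (by simp) (by simp)] at h0
      exact hil (h0.symm ▸ rfl)
    have hneg : ∀ u : ℤˣ, ¬ (-u = u) := by
      intro u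
      rcases Int.units_eq_one_or u with h' | h' <;> rw [h'] <;> decide
    haveI := Fintype.ofFinite
      ((FS (bip r (XP r m k aa bb)) (bip r (YP r m k aa bb))).ConnectedComponent)
    rw [Nat.card_eq_fintype_card, Fintype.two_lt_card_iff]
    refine ⟨(FS (bip r (XP r m k aa bb)) (bip r (YP r m k aa bb))).connectedComponentMk σ₀,
      (FS _ _).connectedComponentMk τ₁, (FS _ _).connectedComponentMk τ₂, ?_, ?_, ?_⟩
    · intro h
      exact hτ₁ne (reach_eq_of_isolated hiso (SimpleGraph.ConnectedComponent.eq.mp h))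
    · intro h
      have he := eps_reach (SimpleGraph.ConnectedComponent.eq.mp h)
      rw [heps2] at he
      exact hneg _ he
    · intro h
      have he := eps_reach (SimpleGraph.ConnectedComponent.eq.mp h)
      rw [heps2, heps1] at he
      exact hneg _ he
end

section
/- Let r ≥ 2 and let X be an edge-subgraph of K_{r,r} such that 2·δ(X) ≥ r + 2 (i.e., δ(X) ≥ r/2 + 1). Then the friends-and-strangers graph FS(X, K_{r,r}) has exactly two connected components. -/
open SimpleGraph Equiv

namespace FSproof

variable {r : ℕ}

abbrev V' (r : ℕ) := Fin r ⊕ Fin r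
abbrev Y' (r : ℕ) : SimpleGraph (V' r) := completeBipartiteGraph (Fin r) (Fin r)

lemma Yadj_iff (u v : V' r) : (Y' r).Adj u v ↔ u.isLeft = !v.isLeft := by
  cases u <;> cases v <;> simp [completeBipartiteGraph]

section Graph

variable {X : SimpleGraph (V' r)} (hX : X ≤ completeBipartiteGraph (Fin r) (Fin r))
  (hdeg : 2 * minDeg X ≥ r + 2)

include hX in
lemma Xadj_side {u v : V' r} (h : X.Adj u v) : u.isLeft = !v.isLeft := by
  exact (Yadj_iff u v).1 (hX h)

lemma sideSet_ncard (b : Bool) : {w : V' r | w.isLeft = b}.ncard = r := by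
  cases b
  · have : {w : V' r | w.isLeft = false} = Set.range Sum.inr := by
      ext w; cases w <;> simp
    rw [this, ← Set.image_univ, Set.ncard_image_of_injective _ Sum.inr_injective,
      Set.ncard_univ, Nat.card_eq_fintype_card, Fintype.card_fin]
  · have : {w : V' r | w.isLeft = true} = Set.range Sum.inl := by
      ext w; cases w <;> simp
    rw [this, ← Set.image_univ, Set.ncard_image_of_injective _ Sum.inl_injective,
      Set.ncard_univ, Nat.card_eq_fintype_card, Fintype.card_fin]

include hdeg in
lemma deg_ge (v : V' r) : r + 2 ≤ 2 * (X.neighborSet v).ncard := by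
  have h1 : minDeg X ≤ (X.neighborSet v).ncard := ciInf_le' _ v
  omega

include hX hdeg in
lemma common2 {u v : V' r} (huv : u ≠ v) (hside : u.isLeft = v.isLeft) :
    ∃ c c' : V' r, c ≠ c' ∧ X.Adj u c ∧ X.Adj u c' ∧ X.Adj v c ∧ X.Adj v c' := by
  classical
  set A := X.neighborSet u
  set B := X.neighborSet v
  have hAfin : A.Finite := Set.toFinite _
  have hBfin : B.Finite := Set.toFinite _
  have hsub : A ∪ B ⊆ {w : V' r | w.isLeft = !u.isLeft} := by
    rintro w (hw | hw)
    · have := Xadj_side hX hw.symm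
      simp only [Set.mem_setOf_eq, this, Bool.not_not]
    · have := Xadj_side hX hw.symm
      simp only [Set.mem_setOf_eq, this, hside, Bool.not_not]
  have hU : (A ∪ B).ncard ≤ r := by
    have := Set.ncard_le_ncard hsub (Set.toFinite _)
    rwa [sideSet_ncard] at this
  have hIE : (A ∪ B).ncard + (A ∩ B).ncard = A.ncard + B.ncard :=
    Set.ncard_union_add_ncard_inter A B
  have hA : r + 2 ≤ 2 * A.ncard := deg_ge hdeg u
  have hB : r + 2 ≤ 2 * B.ncard := deg_ge hdeg v
  have h2 : 1 < (A ∩ B).ncard := by omega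
  rw [Set.one_lt_ncard_iff (Set.toFinite _)] at h2
  obtain ⟨c, c', ⟨hcA, hcB⟩, ⟨hc'A, hc'B⟩, hne⟩ := h2
  exact ⟨c, c', hne, hcA, hc'A, hcB, hc'B⟩

include hdeg in
lemma neighbor_exists (u : V' r) : ∃ c, X.Adj u c := by
  have := deg_ge hdeg u
  have h0 : (X.neighborSet u).ncard ≠ 0 := by omega
  obtain ⟨c, hc⟩ := Set.nonempty_of_ncard_ne_zero h0
  exact ⟨c, hc⟩

-- elementary move
lemma step (σ : V' r ≃ V' r) {a b : V' r} (hab : X.Adj a b)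
    (hv : (σ a).isLeft = !((σ b).isLeft)) :
    (FS X (Y' r)).Adj σ (σ * Equiv.swap a b) := by
  refine ⟨a, b, hab, (Yadj_iff _ _).2 hv, ?_, ?_, ?_⟩
  · simp [Perm.mul_apply]
  · simp [Perm.mul_apply]
  · intro w hwa hwb
    simp [Perm.mul_apply, Equiv.swap_apply_of_ne_of_ne hwa hwb]


-- ### permutation identities
section Keys
variable {α : Type*} [DecidableEq α]

lemma key22 {p1 p2 q1 q2 : α} (hp : p1 ≠ p2) (hq : q1 ≠ q2)
    (h11 : p1 ≠ q1) (h12 : p1 ≠ q2) (h21 : p2 ≠ q1) (h22 : p2 ≠ q2) :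
    Equiv.swap p1 q1 * Equiv.swap p2 q2 * Equiv.swap p1 q2 * Equiv.swap p2 q1
      = Equiv.swap p1 p2 * Equiv.swap q1 q2 := by
  apply Equiv.ext; intro x
  simp only [Equiv.Perm.mul_apply]
  rcases eq_or_ne x p1 with rfl | hx1
  · rw [Equiv.swap_apply_of_ne_of_ne hp h11, Equiv.swap_apply_left,
      Equiv.swap_apply_right, Equiv.swap_apply_of_ne_of_ne hp.symm h21,
      Equiv.swap_apply_of_ne_of_ne h11 h12, Equiv.swap_apply_left]
  rcases eq_or_ne x p2 with rfl | hx2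
  · rw [Equiv.swap_apply_left, Equiv.swap_apply_of_ne_of_ne h11.symm hq,
      Equiv.swap_apply_of_ne_of_ne h21.symm hq, Equiv.swap_apply_right,
      Equiv.swap_apply_of_ne_of_ne h21 h22, Equiv.swap_apply_right]
  rcases eq_or_ne x q1 with rfl | hxq1
  · rw [Equiv.swap_apply_right, Equiv.swap_apply_of_ne_of_ne hp.symm h22,
      Equiv.swap_apply_left, Equiv.swap_apply_of_ne_of_ne h12.symm hq.symm,
      Equiv.swap_apply_left, Equiv.swap_apply_of_ne_of_ne h12.symm h22.symm]
  rcases eq_or_ne x q2 with rfl | hxq2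
  · rw [Equiv.swap_apply_of_ne_of_ne h22.symm hq.symm, Equiv.swap_apply_right,
      Equiv.swap_apply_of_ne_of_ne hp h12, Equiv.swap_apply_left,
      Equiv.swap_apply_right, Equiv.swap_apply_of_ne_of_ne h11.symm h21.symm]
  · rw [Equiv.swap_apply_of_ne_of_ne hx2 hxq1, Equiv.swap_apply_of_ne_of_ne hx1 hxq2,
      Equiv.swap_apply_of_ne_of_ne hx2 hxq2, Equiv.swap_apply_of_ne_of_ne hx1 hxq1,
      Equiv.swap_apply_of_ne_of_ne hxq1 hxq2, Equiv.swap_apply_of_ne_of_ne hx1 hx2]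

lemma key3 {p1 p2 p3 b c : α} (h12 : p1 ≠ p2) (h13 : p1 ≠ p3) (h23 : p2 ≠ p3)
    (hbc : b ≠ c) (h1b : p1 ≠ b) (h2b : p2 ≠ b) (h3b : p3 ≠ b)
    (h1c : p1 ≠ c) (h2c : p2 ≠ c) (h3c : p3 ≠ c) :
    Equiv.swap p1 b * Equiv.swap p2 c * Equiv.swap p1 c * Equiv.swap p3 c *
      Equiv.swap p2 c * Equiv.swap p3 b = Equiv.swap p1 p2 * Equiv.swap p2 p3 := by
  apply Equiv.ext; intro x
  simp only [Equiv.Perm.mul_apply]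
  rcases eq_or_ne x p1 with rfl | hx1
  · rw [Equiv.swap_apply_of_ne_of_ne h13 h1b, Equiv.swap_apply_of_ne_of_ne h12 h1c,
      Equiv.swap_apply_of_ne_of_ne h13 h1c, Equiv.swap_apply_left,
      Equiv.swap_apply_right, Equiv.swap_apply_of_ne_of_ne h12.symm h2b,
      Equiv.swap_apply_of_ne_of_ne h12 h13, Equiv.swap_apply_left]
  rcases eq_or_ne x p2 with rfl | hx2
  · rw [Equiv.swap_apply_of_ne_of_ne h23 h2b, Equiv.swap_apply_left,
      Equiv.swap_apply_right, Equiv.swap_apply_of_ne_of_ne h13.symm h3c,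
      Equiv.swap_apply_of_ne_of_ne h23.symm h3c, Equiv.swap_apply_of_ne_of_ne h13.symm h3b,
      Equiv.swap_apply_left, Equiv.swap_apply_of_ne_of_ne h13.symm h23.symm]
  rcases eq_or_ne x p3 with rfl | hx3
  · rw [Equiv.swap_apply_left, Equiv.swap_apply_of_ne_of_ne h2b.symm hbc,
      Equiv.swap_apply_of_ne_of_ne h3b.symm hbc, Equiv.swap_apply_of_ne_of_ne h1b.symm hbc,
      Equiv.swap_apply_of_ne_of_ne h2b.symm hbc, Equiv.swap_apply_right,
      Equiv.swap_apply_right, Equiv.swap_apply_right]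
  rcases eq_or_ne x b with rfl | hxb
  · rw [Equiv.swap_apply_right, Equiv.swap_apply_of_ne_of_ne h23.symm h3c,
      Equiv.swap_apply_left, Equiv.swap_apply_right,
      Equiv.swap_apply_of_ne_of_ne h12 h1c, Equiv.swap_apply_left,
      Equiv.swap_apply_of_ne_of_ne h2b.symm h3b.symm,
      Equiv.swap_apply_of_ne_of_ne h1b.symm h2b.symm]
  rcases eq_or_ne x c with rfl | hxc
  · rw [Equiv.swap_apply_of_ne_of_ne h3c.symm hbc.symm, Equiv.swap_apply_right,
      Equiv.swap_apply_of_ne_of_ne h23 h2c, Equiv.swap_apply_of_ne_of_ne h12.symm h2c,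
      Equiv.swap_apply_left, Equiv.swap_apply_of_ne_of_ne h1c.symm hbc.symm,
      Equiv.swap_apply_of_ne_of_ne h2c.symm h3c.symm,
      Equiv.swap_apply_of_ne_of_ne h1c.symm h2c.symm]
  · rw [Equiv.swap_apply_of_ne_of_ne hx3 hxb, Equiv.swap_apply_of_ne_of_ne hx2 hxc,
      Equiv.swap_apply_of_ne_of_ne hx3 hxc, Equiv.swap_apply_of_ne_of_ne hx1 hxc,
      Equiv.swap_apply_of_ne_of_ne hx2 hxc, Equiv.swap_apply_of_ne_of_ne hx1 hxb,
      Equiv.swap_apply_of_ne_of_ne hx2 hx3, Equiv.swap_apply_of_ne_of_ne hx1 hx2]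

lemma keyConj {u v w t : α} (huv : u ≠ v) (huw : u ≠ w) (hut : u ≠ t)
    (hvw : v ≠ w) (hvt : v ≠ t) (hwt : w ≠ t) :
    (Equiv.swap u v * Equiv.swap v t) * (Equiv.swap u w * Equiv.swap w t) *
      (Equiv.swap v t * Equiv.swap u v) = Equiv.swap u v * Equiv.swap v w := by
  apply Equiv.ext; intro x
  simp only [Equiv.Perm.mul_apply]
  rcases eq_or_ne x u with rfl | hxu
  · rw [Equiv.swap_apply_left, Equiv.swap_apply_left, Equiv.swap_apply_right,
      Equiv.swap_apply_right, Equiv.swap_apply_of_ne_of_ne huv hut,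
      Equiv.swap_apply_left, Equiv.swap_apply_of_ne_of_ne huv huw,
      Equiv.swap_apply_left]
  rcases eq_or_ne x v with rfl | hxv
  · rw [Equiv.swap_apply_right, Equiv.swap_apply_of_ne_of_ne huv hut,
      Equiv.swap_apply_of_ne_of_ne huw hut, Equiv.swap_apply_left,
      Equiv.swap_apply_of_ne_of_ne hvw.symm hwt,
      Equiv.swap_apply_of_ne_of_ne huw.symm hvw.symm,
      Equiv.swap_apply_left, Equiv.swap_apply_of_ne_of_ne huw.symm hvw.symm]
  rcases eq_or_ne x w with rfl | hxw
  · rw [Equiv.swap_apply_of_ne_of_ne huw.symm hvw.symm,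
      Equiv.swap_apply_of_ne_of_ne hvw.symm hwt, Equiv.swap_apply_left,
      Equiv.swap_apply_of_ne_of_ne hut.symm hwt.symm, Equiv.swap_apply_right,
      Equiv.swap_apply_right, Equiv.swap_apply_right, Equiv.swap_apply_right]
  rcases eq_or_ne x t with rfl | hxt
  · rw [Equiv.swap_apply_of_ne_of_ne hut.symm hvt.symm, Equiv.swap_apply_right,
      Equiv.swap_apply_of_ne_of_ne hvw hvt, Equiv.swap_apply_of_ne_of_ne huv.symm hvw,
      Equiv.swap_apply_left, Equiv.swap_apply_of_ne_of_ne hut.symm hvt.symm,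
      Equiv.swap_apply_of_ne_of_ne hvt.symm hwt.symm,
      Equiv.swap_apply_of_ne_of_ne hut.symm hvt.symm]
  · rw [Equiv.swap_apply_of_ne_of_ne hxu hxv, Equiv.swap_apply_of_ne_of_ne hxv hxt,
      Equiv.swap_apply_of_ne_of_ne hxw hxt, Equiv.swap_apply_of_ne_of_ne hxu hxw,
      Equiv.swap_apply_of_ne_of_ne hxv hxt, Equiv.swap_apply_of_ne_of_ne hxu hxv,
      Equiv.swap_apply_of_ne_of_ne hxv hxw, Equiv.swap_apply_of_ne_of_ne hxu hxv]
end Keys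

-- ### Good permutations
def CMatched (σ : Equiv.Perm (V' r)) : Prop := ∀ v, (σ v).isLeft = v.isLeft

def Good (X : SimpleGraph (V' r)) (π : Equiv.Perm (V' r)) : Prop :=
  (∀ v, (π v).isLeft = v.isLeft) ∧
  ∀ σ : Equiv.Perm (V' r), CMatched σ → (FS X (Y' r)).Reachable σ (σ * π)

lemma ne_of_isLeft_ne {u v : V' r} (h : u.isLeft ≠ v.isLeft) : u ≠ v :=
  fun h' => h (by rw [h'])

lemma sidePres_swap {u v : V' r} (h : u.isLeft = v.isLeft) (x : V' r) :
    ((Equiv.swap u v) x).isLeft = x.isLeft := by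
  rcases eq_or_ne x u with rfl | hu
  · rw [Equiv.swap_apply_left, ← h]
  rcases eq_or_ne x v with rfl | hv
  · rw [Equiv.swap_apply_right, h]
  · rw [Equiv.swap_apply_of_ne_of_ne hu hv]

lemma good_one : Good X 1 := by
  refine ⟨fun v => rfl, fun σ _ => ?_⟩
  rw [mul_one]

lemma good_mul {π ρ : Equiv.Perm (V' r)} (h1 : Good X π) (h2 : Good X ρ) :
    Good X (π * ρ) := by
  refine ⟨fun v => ?_, fun σ hm => ?_⟩
  · rw [Equiv.Perm.mul_apply, h1.1, h2.1]
  · have r1 := h1.2 σ hm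
    have hm2 : CMatched (σ * π) := fun v => by
      rw [Equiv.Perm.mul_apply, hm, h1.1]
    have r2 := h2.2 (σ * π) hm2
    rw [mul_assoc] at r2
    exact r1.trans r2

lemma good_inv {π : Equiv.Perm (V' r)} (h : Good X π) : Good X π⁻¹ := by
  have hside : ∀ v, (π⁻¹ v).isLeft = v.isLeft := by
    intro v
    have := h.1 (π⁻¹ v)
    rw [Equiv.Perm.inv_def, Equiv.apply_symm_apply] at this
    exact this.symm
  refine ⟨hside, fun σ hm => ?_⟩
  have hm2 : CMatched (σ * π⁻¹) := fun v => by
    rw [Equiv.Perm.mul_apply, hm, hside]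
  have r := h.2 (σ * π⁻¹) hm2
  rw [inv_mul_cancel_right] at r
  exact r.symm

include hX in
lemma good_g22 {p1 p2 q1 q2 : V' r} (hp : p1 ≠ p2) (hq : q1 ≠ q2)
    (e11 : X.Adj p1 q1) (e12 : X.Adj p1 q2) (e21 : X.Adj p2 q1) (e22 : X.Adj p2 q2) :
    Good X (Equiv.swap p1 p2 * Equiv.swap q1 q2) := by
  have h11 : p1 ≠ q1 := e11.ne
  have h12 : p1 ≠ q2 := e12.ne
  have h21 : p2 ≠ q1 := e21.ne
  have h22 : p2 ≠ q2 := e22.ne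
  have sp : p1.isLeft = p2.isLeft := by
    have a1 := Xadj_side hX e11; have a2 := Xadj_side hX e21
    rw [a1, a2]
  have sq : q1.isLeft = q2.isLeft := by
    have a1 := Xadj_side hX e11; have a2 := Xadj_side hX e12
    exact Bool.not_inj (by rw [← a1, ← a2])
  constructor
  · intro x
    rw [Equiv.Perm.mul_apply, sidePres_swap sp, sidePres_swap sq]
  intro σ hm
  have c1 : (σ p1).isLeft = !(σ q1).isLeft := by
    rw [hm, hm]; exact Xadj_side hX e11
  have A1 := step σ e11 c1
  have c2 : ((σ * Equiv.swap p1 q1) p2).isLeft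
      = !((σ * Equiv.swap p1 q1) q2).isLeft := by
    have e1 : (σ * Equiv.swap p1 q1) p2 = σ p2 := by
      simp only [Equiv.Perm.mul_apply]
      rw [Equiv.swap_apply_of_ne_of_ne hp.symm h21]
    have e2 : (σ * Equiv.swap p1 q1) q2 = σ q2 := by
      simp only [Equiv.Perm.mul_apply]
      rw [Equiv.swap_apply_of_ne_of_ne h12.symm hq.symm]
    rw [e1, e2, hm, hm]; exact Xadj_side hX e22
  have A2 := step (σ * Equiv.swap p1 q1) e22 c2
  have c3 : ((σ * Equiv.swap p1 q1 * Equiv.swap p2 q2) p1).isLeft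
      = !((σ * Equiv.swap p1 q1 * Equiv.swap p2 q2) q2).isLeft := by
    have e1 : (σ * Equiv.swap p1 q1 * Equiv.swap p2 q2) p1 = σ q1 := by
      simp only [Equiv.Perm.mul_apply]
      rw [Equiv.swap_apply_of_ne_of_ne hp h12, Equiv.swap_apply_left]
    have e2 : (σ * Equiv.swap p1 q1 * Equiv.swap p2 q2) q2 = σ p2 := by
      simp only [Equiv.Perm.mul_apply]
      rw [Equiv.swap_apply_right, Equiv.swap_apply_of_ne_of_ne hp.symm h21]
    rw [e1, e2, hm, hm]
    have h := Xadj_side hX e21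
    rw [h, Bool.not_not]
  have A3 := step (σ * Equiv.swap p1 q1 * Equiv.swap p2 q2) e12 c3
  have c4 : ((σ * Equiv.swap p1 q1 * Equiv.swap p2 q2 * Equiv.swap p1 q2) p2).isLeft
      = !((σ * Equiv.swap p1 q1 * Equiv.swap p2 q2 * Equiv.swap p1 q2) q1).isLeft := by
    have e1 : (σ * Equiv.swap p1 q1 * Equiv.swap p2 q2 * Equiv.swap p1 q2) p2 = σ q2 := by
      simp only [Equiv.Perm.mul_apply]
      rw [Equiv.swap_apply_of_ne_of_ne hp.symm h22, Equiv.swap_apply_left,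
        Equiv.swap_apply_of_ne_of_ne h12.symm hq.symm]
    have e2 : (σ * Equiv.swap p1 q1 * Equiv.swap p2 q2 * Equiv.swap p1 q2) q1 = σ p1 := by
      simp only [Equiv.Perm.mul_apply]
      rw [Equiv.swap_apply_of_ne_of_ne h11.symm hq,
        Equiv.swap_apply_of_ne_of_ne h21.symm hq, Equiv.swap_apply_right]
    rw [e1, e2, hm, hm]
    have h := Xadj_side hX e12
    rw [h, Bool.not_not]
  have A4 := step (σ * Equiv.swap p1 q1 * Equiv.swap p2 q2 * Equiv.swap p1 q2) e21 c4
  have R := A1.reachable.trans (A2.reachable.trans (A3.reachable.trans A4.reachable))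
  have heq : σ * Equiv.swap p1 q1 * Equiv.swap p2 q2 * Equiv.swap p1 q2 * Equiv.swap p2 q1
      = σ * (Equiv.swap p1 p2 * Equiv.swap q1 q2) := by
    rw [← key22 hp hq h11 h12 h21 h22]
    group
  rwa [heq] at R

include hX in
lemma good_g3 {p1 p2 p3 b c : V' r} (h12 : p1 ≠ p2) (h13 : p1 ≠ p3) (h23 : p2 ≠ p3)
    (hbc : b ≠ c) (e1c : X.Adj p1 c) (e2c : X.Adj p2 c) (e3c : X.Adj p3 c)
    (e1b : X.Adj p1 b) (e3b : X.Adj p3 b) :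
    Good X (Equiv.swap p1 p2 * Equiv.swap p2 p3) := by
  have h1c : p1 ≠ c := e1c.ne
  have h2c : p2 ≠ c := e2c.ne
  have h3c : p3 ≠ c := e3c.ne
  have h1b : p1 ≠ b := e1b.ne
  have h3b : p3 ≠ b := e3b.ne
  have s12 : p1.isLeft = p2.isLeft := by
    rw [Xadj_side hX e1c, Xadj_side hX e2c]
  have s13 : p1.isLeft = p3.isLeft := by
    rw [Xadj_side hX e1c, Xadj_side hX e3c]
  have hb : b.isLeft = c.isLeft :=
    Bool.not_inj (by rw [← Xadj_side hX e1b, ← Xadj_side hX e1c])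
  have h2b : p2 ≠ b := by
    apply ne_of_isLeft_ne
    rw [hb, Xadj_side hX e2c]
    cases c.isLeft <;> simp
  constructor
  · intro x
    rw [Equiv.Perm.mul_apply, sidePres_swap s12, sidePres_swap (s12.symm.trans s13)]
  intro σ hm
  have c1 : (σ p1).isLeft = !(σ b).isLeft := by
    rw [hm, hm]; exact Xadj_side hX e1b
  have A1 := step σ e1b c1
  have c2 : ((σ * Equiv.swap p1 b) p2).isLeft = !((σ * Equiv.swap p1 b) c).isLeft := by
    have e1 : (σ * Equiv.swap p1 b) p2 = σ p2 := by
      simp only [Equiv.Perm.mul_apply]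
      rw [Equiv.swap_apply_of_ne_of_ne h12.symm h2b]
    have e2 : (σ * Equiv.swap p1 b) c = σ c := by
      simp only [Equiv.Perm.mul_apply]
      rw [Equiv.swap_apply_of_ne_of_ne h1c.symm hbc.symm]
    rw [e1, e2, hm, hm]; exact Xadj_side hX e2c
  have A2 := step (σ * Equiv.swap p1 b) e2c c2
  have c3 : ((σ * Equiv.swap p1 b * Equiv.swap p2 c) p1).isLeft
      = !((σ * Equiv.swap p1 b * Equiv.swap p2 c) c).isLeft := by
    have e1 : (σ * Equiv.swap p1 b * Equiv.swap p2 c) p1 = σ b := by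
      simp only [Equiv.Perm.mul_apply]
      rw [Equiv.swap_apply_of_ne_of_ne h12 h1c, Equiv.swap_apply_left]
    have e2 : (σ * Equiv.swap p1 b * Equiv.swap p2 c) c = σ p2 := by
      simp only [Equiv.Perm.mul_apply]
      rw [Equiv.swap_apply_right, Equiv.swap_apply_of_ne_of_ne h12.symm h2b]
    rw [e1, e2, hm, hm, Xadj_side hX e2c, Bool.not_not, hb]
  have A3 := step (σ * Equiv.swap p1 b * Equiv.swap p2 c) e1c c3
  have c4 : ((σ * Equiv.swap p1 b * Equiv.swap p2 c * Equiv.swap p1 c) p3).isLeft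
      = !((σ * Equiv.swap p1 b * Equiv.swap p2 c * Equiv.swap p1 c) c).isLeft := by
    have e1 : (σ * Equiv.swap p1 b * Equiv.swap p2 c * Equiv.swap p1 c) p3 = σ p3 := by
      simp only [Equiv.Perm.mul_apply]
      rw [Equiv.swap_apply_of_ne_of_ne h13.symm h3c,
        Equiv.swap_apply_of_ne_of_ne h23.symm h3c,
        Equiv.swap_apply_of_ne_of_ne h13.symm h3b]
    have e2 : (σ * Equiv.swap p1 b * Equiv.swap p2 c * Equiv.swap p1 c) c = σ b := by
      simp only [Equiv.Perm.mul_apply]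
      rw [Equiv.swap_apply_right, Equiv.swap_apply_of_ne_of_ne h12 h1c,
        Equiv.swap_apply_left]
    rw [e1, e2, hm, hm]; exact Xadj_side hX e3b
  have A4 := step (σ * Equiv.swap p1 b * Equiv.swap p2 c * Equiv.swap p1 c) e3c c4
  have c5 : ((σ * Equiv.swap p1 b * Equiv.swap p2 c * Equiv.swap p1 c * Equiv.swap p3 c) p2).isLeft
      = !((σ * Equiv.swap p1 b * Equiv.swap p2 c * Equiv.swap p1 c * Equiv.swap p3 c) c).isLeft := by
    have e1 : (σ * Equiv.swap p1 b * Equiv.swap p2 c * Equiv.swap p1 c * Equiv.swap p3 c) p2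
        = σ c := by
      simp only [Equiv.Perm.mul_apply]
      rw [Equiv.swap_apply_of_ne_of_ne h23 h2c, Equiv.swap_apply_of_ne_of_ne h12.symm h2c,
        Equiv.swap_apply_left, Equiv.swap_apply_of_ne_of_ne h1c.symm hbc.symm]
    have e2 : (σ * Equiv.swap p1 b * Equiv.swap p2 c * Equiv.swap p1 c * Equiv.swap p3 c) c
        = σ p3 := by
      simp only [Equiv.Perm.mul_apply]
      rw [Equiv.swap_apply_right, Equiv.swap_apply_of_ne_of_ne h13.symm h3c,
        Equiv.swap_apply_of_ne_of_ne h23.symm h3c, Equiv.swap_apply_of_ne_of_ne h13.symm h3b]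
    rw [e1, e2, hm, hm, Xadj_side hX e3c, Bool.not_not]
  have A5 := step (σ * Equiv.swap p1 b * Equiv.swap p2 c * Equiv.swap p1 c * Equiv.swap p3 c)
    e2c c5
  have c6 : ((σ * Equiv.swap p1 b * Equiv.swap p2 c * Equiv.swap p1 c * Equiv.swap p3 c *
      Equiv.swap p2 c) p3).isLeft
      = !((σ * Equiv.swap p1 b * Equiv.swap p2 c * Equiv.swap p1 c * Equiv.swap p3 c *
      Equiv.swap p2 c) b).isLeft := by
    have e1 : (σ * Equiv.swap p1 b * Equiv.swap p2 c * Equiv.swap p1 c * Equiv.swap p3 c *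
        Equiv.swap p2 c) p3 = σ b := by
      simp only [Equiv.Perm.mul_apply]
      rw [Equiv.swap_apply_of_ne_of_ne h23.symm h3c, Equiv.swap_apply_left,
        Equiv.swap_apply_right, Equiv.swap_apply_of_ne_of_ne h12 h1c,
        Equiv.swap_apply_left]
    have e2 : (σ * Equiv.swap p1 b * Equiv.swap p2 c * Equiv.swap p1 c * Equiv.swap p3 c *
        Equiv.swap p2 c) b = σ p1 := by
      simp only [Equiv.Perm.mul_apply]
      rw [Equiv.swap_apply_of_ne_of_ne h2b.symm hbc, Equiv.swap_apply_of_ne_of_ne h3b.symm hbc,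
        Equiv.swap_apply_of_ne_of_ne h1b.symm hbc, Equiv.swap_apply_of_ne_of_ne h2b.symm hbc,
        Equiv.swap_apply_right]
    rw [e1, e2, hm, hm, Xadj_side hX e1b, Bool.not_not]
  have A6 := step (σ * Equiv.swap p1 b * Equiv.swap p2 c * Equiv.swap p1 c * Equiv.swap p3 c *
    Equiv.swap p2 c) e3b c6
  have R := A1.reachable.trans (A2.reachable.trans (A3.reachable.trans (A4.reachable.trans
    (A5.reachable.trans A6.reachable))))
  have heq : σ * Equiv.swap p1 b * Equiv.swap p2 c * Equiv.swap p1 c * Equiv.swap p3 c *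
      Equiv.swap p2 c * Equiv.swap p3 b = σ * (Equiv.swap p1 p2 * Equiv.swap p2 p3) := by
    rw [← key3 h12 h13 h23 hbc h1b h2b h3b h1c h2c h3c]
    group
  rwa [heq] at R

include hX hdeg in
lemma commonNe {x z : V' r} (hxz : x ≠ z) (hs : x.isLeft = z.isLeft) (c0 : V' r) :
    ∃ b, b ≠ c0 ∧ X.Adj x b ∧ X.Adj z b := by
  obtain ⟨b1, b2, h12, hx1, hx2, hz1, hz2⟩ := common2 hX hdeg hxz hs
  rcases eq_or_ne b1 c0 with rfl | h
  · exact ⟨b2, h12.symm, hx2, hz2⟩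
  · exact ⟨b1, h, hx1, hz1⟩

include hX hdeg in
lemma cycGood {u v w : V' r} (huv : u ≠ v) (huw : u ≠ w) (hvw : v ≠ w)
    (suv : u.isLeft = v.isLeft) (suw : u.isLeft = w.isLeft) :
    Good X (Equiv.swap u v * Equiv.swap v w) := by
  obtain ⟨c, c', hcc', huc, huc', hvc, hvc'⟩ := common2 hX hdeg huv suv
  by_cases hwc : X.Adj w c
  · obtain ⟨b, hbne, hub, hwb⟩ := commonNe hX hdeg huw suw c
    exact good_g3 hX huv huw hvw hbne huc hvc hwc hub hwb
  by_cases hwc' : X.Adj w c'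
  · obtain ⟨b, hbne, hub, hwb⟩ := commonNe hX hdeg huw suw c'
    exact good_g3 hX huv huw hvw hbne huc' hvc' hwc' hub hwb
  obtain ⟨d, d', hdd', hud, hud', hwd, hwd'⟩ := common2 hX hdeg huw suw
  by_cases hvd : X.Adj v d
  · obtain ⟨b, hbne, hub, hwb⟩ := commonNe hX hdeg huw suw d
    exact good_g3 hX huv huw hvw hbne hud hvd hwd hub hwb
  by_cases hvd' : X.Adj v d'
  · obtain ⟨b, hbne, hub, hwb⟩ := commonNe hX hdeg huw suw d'
    exact good_g3 hX huv huw hvw hbne hud' hvd' hwd' hub hwb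
  · have hcd : c ≠ d := fun h => hvd (h ▸ hvc)
    have scd : c.isLeft = d.isLeft := by
      have h1 : c.isLeft = !u.isLeft := by rw [Xadj_side hX huc, Bool.not_not]
      have h2 : d.isLeft = !u.isLeft := by rw [Xadj_side hX hud, Bool.not_not]
      rw [h1, h2]
    obtain ⟨t1, t2, ht12, hct1, hct2, hdt1, hdt2⟩ := common2 hX hdeg hcd scd
    obtain ⟨t, htu, hct, hdt⟩ : ∃ t, t ≠ u ∧ X.Adj c t ∧ X.Adj d t := by
      rcases eq_or_ne t1 u with rfl | h
      · exact ⟨t2, ht12.symm, hct2, hdt2⟩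
      · exact ⟨t1, h, hct1, hdt1⟩
    have htv : t ≠ v := fun h => hvd (by rw [← h]; exact hdt.symm)
    have htw : t ≠ w := fun h => hwc (by rw [← h]; exact hct.symm)
    have sut : u.isLeft = t.isLeft := by
      have h1 := Xadj_side hX huc
      have h2 := Xadj_side hX hct
      rw [h1, h2, Bool.not_not]
    obtain ⟨b1, hb1, hub1, htb1⟩ := commonNe hX hdeg htu.symm sut c
    have g1 : Good X (Equiv.swap u v * Equiv.swap v t) :=
      good_g3 hX huv htu.symm htv.symm hb1 huc hvc hct.symm hub1 htb1
    obtain ⟨b2, hb2, hub2, htb2⟩ := commonNe hX hdeg htu.symm sut d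
    have g2 : Good X (Equiv.swap u w * Equiv.swap w t) :=
      good_g3 hX huw htu.symm htw.symm hb2 hud hwd hdt.symm hub2 htb2
    have g1i : Good X (Equiv.swap v t * Equiv.swap u v) := by
      have hgi := good_inv g1
      have hinv : (Equiv.swap u v * Equiv.swap v t)⁻¹
          = Equiv.swap v t * Equiv.swap u v := by
        rw [mul_inv_rev, Equiv.swap_inv, Equiv.swap_inv]
      rwa [hinv] at hgi
    have hfin := good_mul (good_mul g1 g2) g1i
    rwa [keyConj huv huw htu.symm hvw htv.symm htw.symm] at hfin

include hX hdeg in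
lemma pairGood {u v z w : V' r} (huv : u ≠ v) (hzw : z ≠ w)
    (s1 : u.isLeft = v.isLeft) (s2 : u.isLeft = z.isLeft) (s3 : u.isLeft = w.isLeft) :
    Good X (Equiv.swap u v * Equiv.swap z w) := by
  rcases eq_or_ne z u with h | hzu
  · rw [h] at hzw ⊢
    rcases eq_or_ne w v with h2 | hwv
    · rw [h2, Equiv.swap_mul_self]; exact good_one
    · rw [Equiv.swap_comm u v]
      exact cycGood hX hdeg huv.symm hwv.symm hzw s1.symm (s1.symm.trans s3)
  rcases eq_or_ne z v with h | hzv
  · rw [h] at hzw ⊢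
    rcases eq_or_ne w u with h2 | hwu
    · rw [h2, Equiv.swap_comm v u, Equiv.swap_mul_self]; exact good_one
    · exact cycGood hX hdeg huv hwu.symm hzw s1 s3
  rcases eq_or_ne w u with h | hwu
  · rw [h] at hzw ⊢
    rw [Equiv.swap_comm u v, Equiv.swap_comm z u]
    exact cycGood hX hdeg huv.symm hzv.symm hzu.symm s1.symm (s1.symm.trans s2)
  rcases eq_or_ne w v with h | hwv
  · rw [h] at hzw ⊢
    rw [Equiv.swap_comm z v]
    exact cycGood hX hdeg huv hzu.symm hzv.symm s1 s2
  · have key : (Equiv.swap u v * Equiv.swap v z) * (Equiv.swap v z * Equiv.swap z w)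
        = Equiv.swap u v * Equiv.swap z w := by
      rw [mul_assoc, ← mul_assoc (Equiv.swap v z), Equiv.swap_mul_self, one_mul]
    have g1 := cycGood hX hdeg huv hzu.symm hzv.symm s1 s2
    have g2 := cycGood hX hdeg hzv.symm hwv.symm hzw (s1.symm.trans s2) (s1.symm.trans s3)
    have := good_mul g1 g2
    rwa [key] at this

lemma swap_sumCongr_left (x y : Fin r) :
    Equiv.Perm.sumCongr (Equiv.swap x y) (1 : Equiv.Perm (Fin r))
      = Equiv.swap (Sum.inl x : V' r) (Sum.inl y) := by
  apply Equiv.ext; intro v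
  cases v with
  | inl k =>
    simp only [Equiv.Perm.sumCongr_apply, Sum.map_inl]
    rcases eq_or_ne k x with rfl | hkx
    · rw [Equiv.swap_apply_left, Equiv.swap_apply_left]
    rcases eq_or_ne k y with rfl | hky
    · rw [Equiv.swap_apply_right, Equiv.swap_apply_right]
    · rw [Equiv.swap_apply_of_ne_of_ne hkx hky,
        Equiv.swap_apply_of_ne_of_ne (fun h => hkx (Sum.inl_injective h))
          (fun h => hky (Sum.inl_injective h))]
  | inr k =>
    simp only [Equiv.Perm.sumCongr_apply, Sum.map_inr, Equiv.Perm.one_apply]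
    rw [Equiv.swap_apply_of_ne_of_ne (by simp) (by simp)]

lemma swap_sumCongr_right (x y : Fin r) :
    Equiv.Perm.sumCongr (1 : Equiv.Perm (Fin r)) (Equiv.swap x y)
      = Equiv.swap (Sum.inr x : V' r) (Sum.inr y) := by
  apply Equiv.ext; intro v
  cases v with
  | inr k =>
    simp only [Equiv.Perm.sumCongr_apply, Sum.map_inr]
    rcases eq_or_ne k x with rfl | hkx
    · rw [Equiv.swap_apply_left, Equiv.swap_apply_left]
    rcases eq_or_ne k y with rfl | hky
    · rw [Equiv.swap_apply_right, Equiv.swap_apply_right]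
    · rw [Equiv.swap_apply_of_ne_of_ne hkx hky,
        Equiv.swap_apply_of_ne_of_ne (fun h => hkx (Sum.inr_injective h))
          (fun h => hky (Sum.inr_injective h))]
  | inl k =>
    simp only [Equiv.Perm.sumCongr_apply, Sum.map_inl, Equiv.Perm.one_apply]
    rw [Equiv.swap_apply_of_ne_of_ne (by simp) (by simp)]

include hX hdeg in
lemma pairGoodL {s t : Equiv.Perm (Fin r)} (hs : s.IsSwap) (ht : t.IsSwap) :
    Good X (Equiv.Perm.sumCongr (s * t) (1 : Equiv.Perm (Fin r))) := by
  obtain ⟨x, y, hxy, rfl⟩ := hs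
  obtain ⟨z, w, hzw, rfl⟩ := ht
  have : Equiv.Perm.sumCongr (Equiv.swap x y * Equiv.swap z w) (1 : Equiv.Perm (Fin r))
      = Equiv.Perm.sumCongr (Equiv.swap x y) 1 * Equiv.Perm.sumCongr (Equiv.swap z w) 1 := by
    rw [Equiv.Perm.sumCongr_mul, mul_one]
  rw [this, swap_sumCongr_left, swap_sumCongr_left]
  exact pairGood hX hdeg (fun h => hxy (Sum.inl_injective h))
    (fun h => hzw (Sum.inl_injective h)) rfl rfl rfl

include hX hdeg in
lemma pairGoodR {s t : Equiv.Perm (Fin r)} (hs : s.IsSwap) (ht : t.IsSwap) :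
    Good X (Equiv.Perm.sumCongr (1 : Equiv.Perm (Fin r)) (s * t)) := by
  obtain ⟨x, y, hxy, rfl⟩ := hs
  obtain ⟨z, w, hzw, rfl⟩ := ht
  have : Equiv.Perm.sumCongr (1 : Equiv.Perm (Fin r)) (Equiv.swap x y * Equiv.swap z w)
      = Equiv.Perm.sumCongr 1 (Equiv.swap x y) * Equiv.Perm.sumCongr 1 (Equiv.swap z w) := by
    rw [Equiv.Perm.sumCongr_mul, mul_one]
  rw [this, swap_sumCongr_right, swap_sumCongr_right]
  exact pairGood hX hdeg (fun h => hxy (Sum.inr_injective h))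
    (fun h => hzw (Sum.inr_injective h)) rfl rfl rfl

include hX hdeg in
lemma listGoodL : ∀ (n : ℕ) (l : List (Equiv.Perm (Fin r))), l.length = 2 * n →
    (∀ g ∈ l, g.IsSwap) → Good X (Equiv.Perm.sumCongr l.prod (1 : Equiv.Perm (Fin r))) := by
  intro n
  induction n with
  | zero =>
    intro l hl _
    rw [List.length_eq_zero_iff] at hl
    subst hl
    simp only [List.prod_nil]
    rw [Equiv.Perm.sumCongr_one]
    exact good_one
  | succ n ih =>
    intro l hl hsw
    match l with
    | a :: b :: tl =>
      simp only [List.length_cons] at hl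
      have htl : tl.length = 2 * n := by omega
      have hprod : (a :: b :: tl).prod = (a * b) * tl.prod := by
        rw [List.prod_cons, List.prod_cons, mul_assoc]
      rw [hprod]
      have : Equiv.Perm.sumCongr ((a * b) * tl.prod) (1 : Equiv.Perm (Fin r))
          = Equiv.Perm.sumCongr (a * b) 1 * Equiv.Perm.sumCongr tl.prod 1 := by
        rw [Equiv.Perm.sumCongr_mul, mul_one]
      rw [this]
      exact good_mul (pairGoodL hX hdeg (hsw a (by simp)) (hsw b (by simp)))
        (ih tl htl (fun g hg => hsw g (by simp [hg])))

include hX hdeg in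
lemma listGoodR : ∀ (n : ℕ) (l : List (Equiv.Perm (Fin r))), l.length = 2 * n →
    (∀ g ∈ l, g.IsSwap) → Good X (Equiv.Perm.sumCongr (1 : Equiv.Perm (Fin r)) l.prod) := by
  intro n
  induction n with
  | zero =>
    intro l hl _
    rw [List.length_eq_zero_iff] at hl
    subst hl
    simp only [List.prod_nil]
    rw [Equiv.Perm.sumCongr_one]
    exact good_one
  | succ n ih =>
    intro l hl hsw
    match l with
    | a :: b :: tl =>
      simp only [List.length_cons] at hl
      have htl : tl.length = 2 * n := by omega
      have hprod : (a :: b :: tl).prod = (a * b) * tl.prod := by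
        rw [List.prod_cons, List.prod_cons, mul_assoc]
      rw [hprod]
      have : Equiv.Perm.sumCongr (1 : Equiv.Perm (Fin r)) ((a * b) * tl.prod)
          = Equiv.Perm.sumCongr 1 (a * b) * Equiv.Perm.sumCongr 1 tl.prod := by
        rw [Equiv.Perm.sumCongr_mul, mul_one]
      rw [this]
      exact good_mul (pairGoodR hX hdeg (hsw a (by simp)) (hsw b (by simp)))
        (ih tl htl (fun g hg => hsw g (by simp [hg])))

include hX hdeg in
lemma evenGoodL {a : Equiv.Perm (Fin r)} (ha : Equiv.Perm.sign a = 1) :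
    Good X (Equiv.Perm.sumCongr a (1 : Equiv.Perm (Fin r))) := by
  obtain ⟨l, hl, hsw⟩ := (Equiv.Perm.truncSwapFactors a).out
  have hs := Equiv.Perm.sign_prod_list_swap hsw
  rw [hl, ha] at hs
  have heven : Even l.length := by
    by_contra h
    rw [Nat.not_even_iff_odd] at h
    rw [h.neg_one_pow] at hs
    exact absurd hs (by decide)
  obtain ⟨n, hn⟩ := heven
  rw [← hl]
  exact listGoodL hX hdeg n l (by omega) hsw

include hX hdeg in
lemma evenGoodR {b : Equiv.Perm (Fin r)} (hb : Equiv.Perm.sign b = 1) :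
    Good X (Equiv.Perm.sumCongr (1 : Equiv.Perm (Fin r)) b) := by
  obtain ⟨l, hl, hsw⟩ := (Equiv.Perm.truncSwapFactors b).out
  have hs := Equiv.Perm.sign_prod_list_swap hsw
  rw [hl, hb] at hs
  have heven : Even l.length := by
    by_contra h
    rw [Nat.not_even_iff_odd] at h
    rw [h.neg_one_pow] at hs
    exact absurd hs (by decide)
  obtain ⟨n, hn⟩ := heven
  rw [← hl]
  exact listGoodR hX hdeg n l (by omega) hsw

lemma exists_sumCongr {π : Equiv.Perm (V' r)} (hside : ∀ v, (π v).isLeft = v.isLeft) :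
    ∃ (a b : Equiv.Perm (Fin r)), π = Equiv.Perm.sumCongr a b := by
  have hsideinv : ∀ v, (π⁻¹ v).isLeft = v.isLeft := by
    intro v
    have := hside (π⁻¹ v)
    rw [Equiv.Perm.inv_def, Equiv.apply_symm_apply] at this
    exact this.symm
  have keyL : ∀ (ρ : Equiv.Perm (V' r)), (∀ v, (ρ v).isLeft = v.isLeft) →
      ∀ i : Fin r, ∃ j, ρ (Sum.inl i) = Sum.inl j := by
    intro ρ hρ i
    cases h : ρ (Sum.inl i) with
    | inl j => exact ⟨j, rfl⟩
    | inr j =>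
      have := hρ (Sum.inl i)
      rw [h] at this
      simp at this
  have keyR : ∀ (ρ : Equiv.Perm (V' r)), (∀ v, (ρ v).isLeft = v.isLeft) →
      ∀ i : Fin r, ∃ j, ρ (Sum.inr i) = Sum.inr j := by
    intro ρ hρ i
    cases h : ρ (Sum.inr i) with
    | inr j => exact ⟨j, rfl⟩
    | inl j =>
      have := hρ (Sum.inr i)
      rw [h] at this
      simp at this
  choose f hf using keyL π hside
  choose f' hf' using keyL π⁻¹ hsideinv
  choose g hg using keyR π hside
  choose g' hg' using keyR π⁻¹ hsideinv
  have hfl : Function.LeftInverse f' f := by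
    intro i
    have h1 := hf' (f i)
    rw [← hf i, Equiv.Perm.inv_def, Equiv.symm_apply_apply] at h1
    exact (Sum.inl_injective h1).symm
  have hfr : Function.RightInverse f' f := by
    intro i
    have h1 := hf (f' i)
    rw [← hf' i, Equiv.Perm.inv_def, Equiv.apply_symm_apply] at h1
    exact (Sum.inl_injective h1).symm
  have hgl : Function.LeftInverse g' g := by
    intro i
    have h1 := hg' (g i)
    rw [← hg i, Equiv.Perm.inv_def, Equiv.symm_apply_apply] at h1
    exact (Sum.inr_injective h1).symm
  have hgr : Function.RightInverse g' g := by
    intro i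
    have h1 := hg (g' i)
    rw [← hg' i, Equiv.Perm.inv_def, Equiv.apply_symm_apply] at h1
    exact (Sum.inr_injective h1).symm
  refine ⟨⟨f, f', hfl, hfr⟩, ⟨g, g', hgl, hgr⟩, ?_⟩
  apply Equiv.ext
  intro v
  cases v with
  | inl i => rw [hf i]; rfl
  | inr i => rw [hg i]; rfl

include hX hdeg in
lemma goodOfSidePres (hr : 2 ≤ r) {π : Equiv.Perm (V' r)}
    (hside : ∀ v, (π v).isLeft = v.isLeft) (hsgn : Equiv.Perm.sign π = 1) :
    Good X π := by
  obtain ⟨a, b, rfl⟩ := exists_sumCongr hside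
  rw [Equiv.Perm.sign_sumCongr] at hsgn
  have hdec : Equiv.Perm.sumCongr a b
      = Equiv.Perm.sumCongr a 1 * Equiv.Perm.sumCongr 1 b := by
    rw [Equiv.Perm.sumCongr_mul, mul_one, one_mul]
  rcases Int.units_eq_one_or (Equiv.Perm.sign a) with ha | ha
  · rcases Int.units_eq_one_or (Equiv.Perm.sign b) with hb | hb
    · rw [hdec]
      exact good_mul (evenGoodL hX hdeg ha) (evenGoodR hX hdeg hb)
    · rw [ha, hb] at hsgn; exact absurd hsgn (by decide)
  · rcases Int.units_eq_one_or (Equiv.Perm.sign b) with hb | hb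
    · rw [ha, hb] at hsgn; exact absurd hsgn (by decide)
    · -- both odd
      set x0 : Fin r := ⟨0, by omega⟩
      set x1 : Fin r := ⟨1, by omega⟩
      have h01 : x0 ≠ x1 := by
        simp only [x0, x1, ne_eq, Fin.mk.injEq]
        omega
      have hside01 : (Sum.inl x0 : V' r).isLeft = (Sum.inl x1 : V' r).isLeft := rfl
      have h01' : (Sum.inl x0 : V' r) ≠ Sum.inl x1 := fun h => h01 (Sum.inl_injective h)
      obtain ⟨q1, q2, hq12, e01, e02, e11', e12'⟩ := common2 hX hdeg h01' hside01
      obtain ⟨j1, hj1⟩ : ∃ j1, q1 = Sum.inr j1 := by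
        cases hq : q1 with
        | inr j => exact ⟨j, rfl⟩
        | inl j =>
          have := Xadj_side hX e01
          rw [hq] at this
          simp at this
      obtain ⟨j2, hj2⟩ : ∃ j2, q2 = Sum.inr j2 := by
        cases hq : q2 with
        | inr j => exact ⟨j, rfl⟩
        | inl j =>
          have := Xadj_side hX e02
          rw [hq] at this
          simp at this
      subst hj1; subst hj2
      have hj12 : j1 ≠ j2 := fun h => hq12 (by rw [h])
      -- the mixed element
      have hmixed : Good X (Equiv.Perm.sumCongr (Equiv.swap x0 x1) (Equiv.swap j1 j2)) := by
        have heq : Equiv.Perm.sumCongr (Equiv.swap x0 x1) (Equiv.swap j1 j2)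
            = Equiv.swap (Sum.inl x0 : V' r) (Sum.inl x1)
              * Equiv.swap (Sum.inr j1 : V' r) (Sum.inr j2) := by
          rw [← swap_sumCongr_left, ← swap_sumCongr_right, Equiv.Perm.sumCongr_mul,
            mul_one, one_mul]
        rw [heq]
        exact good_g22 hX h01' (fun h => hj12 (Sum.inr_injective h)) e01 e02 e11' e12'
      have hdecomp : Equiv.Perm.sumCongr a b
          = Equiv.Perm.sumCongr (a * Equiv.swap x0 x1) (b * Equiv.swap j1 j2)
            * Equiv.Perm.sumCongr (Equiv.swap x0 x1) (Equiv.swap j1 j2) := by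
        rw [Equiv.Perm.sumCongr_mul, mul_assoc, mul_assoc, Equiv.swap_mul_self,
          Equiv.swap_mul_self, mul_one, mul_one]
      rw [hdecomp]
      have ha' : Equiv.Perm.sign (a * Equiv.swap x0 x1) = 1 := by
        rw [Equiv.Perm.sign_mul, ha, Equiv.Perm.sign_swap h01]
        decide
      have hb' : Equiv.Perm.sign (b * Equiv.swap j1 j2) = 1 := by
        rw [Equiv.Perm.sign_mul, hb, Equiv.Perm.sign_swap hj12]
        decide
      have hdec2 : Equiv.Perm.sumCongr (a * Equiv.swap x0 x1) (b * Equiv.swap j1 j2)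
          = Equiv.Perm.sumCongr (a * Equiv.swap x0 x1) 1
            * Equiv.Perm.sumCongr 1 (b * Equiv.swap j1 j2) := by
        rw [Equiv.Perm.sumCongr_mul, mul_one, one_mul]
      rw [hdec2]
      exact good_mul (good_mul (evenGoodL hX hdeg ha') (evenGoodR hX hdeg hb')) hmixed

def Mism (σ : Equiv.Perm (V' r)) : Finset (V' r) :=
  Finset.univ.filter (fun v => (σ v).isLeft ≠ v.isLeft)

lemma mem_mism {σ : Equiv.Perm (V' r)} {v : V' r} :
    v ∈ Mism σ ↔ (σ v).isLeft ≠ v.isLeft := by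
  simp [Mism]

lemma cmatched_of_mism_empty {σ : Equiv.Perm (V' r)} (h : Mism σ = ∅) : CMatched σ := by
  intro v
  by_contra hv
  have : v ∈ Mism σ := mem_mism.2 hv
  rw [h] at this
  exact absurd this (Finset.notMem_empty v)

lemma mism_exists {σ : Equiv.Perm (V' r)} (h : (Mism σ).Nonempty) :
    ∃ q p : V' r, q.isLeft = true ∧ (σ q).isLeft = false ∧
      p.isLeft = false ∧ (σ p).isLeft = true := by
  classical
  set L : Finset (V' r) := Finset.univ.filter (fun v => v.isLeft = true) with hL
  set S : Finset (V' r) := Finset.univ.filter (fun v => (σ v).isLeft = true) with hS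
  have himg : S.image σ = L := by
    ext w
    simp only [hL, hS, Finset.mem_image, Finset.mem_filter, Finset.mem_univ, true_and]
    constructor
    · rintro ⟨v, hv, rfl⟩; exact hv
    · intro hw; exact ⟨σ.symm w, by rw [Equiv.apply_symm_apply]; exact hw,
        Equiv.apply_symm_apply σ w⟩
  have hcard : S.card = L.card := by
    rw [← himg, Finset.card_image_of_injective _ σ.injective]
  have hsd : (L \ S).card = (S \ L).card := by
    have h1 : (L \ S).card = L.card - (L ∩ S).card := Finset.card_sdiff_add_card_inter L S ▸ by omega
    have h2 : (S \ L).card = S.card - (S ∩ L).card := Finset.card_sdiff_add_card_inter S L ▸ by omega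
    rw [h1, h2, hcard, Finset.inter_comm]
  have hLS : ∀ x ∈ L \ S, x.isLeft = true ∧ (σ x).isLeft = false := by
    intro x hx
    simp only [hL, hS, Finset.mem_sdiff, Finset.mem_filter, Finset.mem_univ, true_and] at hx
    exact ⟨hx.1, by simpa using hx.2⟩
  have hSL : ∀ x ∈ S \ L, x.isLeft = false ∧ (σ x).isLeft = true := by
    intro x hx
    simp only [hL, hS, Finset.mem_sdiff, Finset.mem_filter, Finset.mem_univ, true_and] at hx
    exact ⟨by simpa using hx.2, hx.1⟩
  obtain ⟨v, hv⟩ := h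
  rw [mem_mism] at hv
  cases hvl : v.isLeft with
  | true =>
    have hvLS : v ∈ L \ S := by
      simp only [hL, hS, Finset.mem_sdiff, Finset.mem_filter, Finset.mem_univ, true_and]
      exact ⟨hvl, by rw [hvl] at hv; simpa using hv⟩
    have : 0 < (S \ L).card := by
      rw [← hsd]
      exact Finset.card_pos.2 ⟨v, hvLS⟩
    obtain ⟨p, hp⟩ := Finset.card_pos.1 this
    obtain ⟨hp1, hp2⟩ := hSL p hp
    exact ⟨v, p, hvl, by rw [hvl] at hv; simpa using hv, hp1, hp2⟩
  | false =>
    have hvSL : v ∈ S \ L := by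
      simp only [hL, hS, Finset.mem_sdiff, Finset.mem_filter, Finset.mem_univ, true_and]
      exact ⟨by rw [hvl] at hv; simpa using hv, by simp [hvl]⟩
    have : 0 < (L \ S).card := by
      rw [hsd]
      exact Finset.card_pos.2 ⟨v, hvSL⟩
    obtain ⟨q, hq⟩ := Finset.card_pos.1 this
    obtain ⟨hq1, hq2⟩ := hLS q hq
    exact ⟨q, v, hq1, hq2, hvl, by rw [hvl] at hv; simpa using hv⟩

include hX hdeg in
lemma phase1 : ∀ (n : ℕ) (σ : Equiv.Perm (V' r)), (Mism σ).card ≤ n →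
    ∃ τ, CMatched τ ∧ (FS X (Y' r)).Reachable σ τ := by
  intro n
  induction n with
  | zero =>
    intro σ hc
    have : Mism σ = ∅ := Finset.card_eq_zero.1 (by omega)
    exact ⟨σ, cmatched_of_mism_empty this, SimpleGraph.Reachable.refl σ⟩
  | succ n ih =>
    intro σ hc
    rcases Finset.eq_empty_or_nonempty (Mism σ) with he | hne
    · exact ⟨σ, cmatched_of_mism_empty he, SimpleGraph.Reachable.refl σ⟩
    obtain ⟨q, p, hq1, hq2, hp1, hp2⟩ := mism_exists hne
    have hqp : q ≠ p := ne_of_isLeft_ne (by rw [hq1, hp1]; simp)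
    have hqm : q ∈ Mism σ := mem_mism.2 (by rw [hq1, hq2]; simp)
    have hpm : p ∈ Mism σ := mem_mism.2 (by rw [hp1, hp2]; simp)
    have main : ∀ (w : V' r), w ∈ Mism σ → ∀ σ' : Equiv.Perm (V' r),
        (FS X (Y' r)).Reachable σ σ' → Mism σ' ⊆ (Mism σ).erase w →
        ∃ τ, CMatched τ ∧ (FS X (Y' r)).Reachable σ τ := by
      intro w hw σ' hre hsub
      have h1 := Finset.card_le_card hsub
      rw [Finset.card_erase_of_mem hw] at h1
      have h2 : 1 ≤ (Mism σ).card := Finset.card_pos.2 ⟨q, hqm⟩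
      obtain ⟨τ, ht1, ht2⟩ := ih σ' (by omega)
      exact ⟨τ, ht1, hre.trans ht2⟩
    by_cases hadj : X.Adj q p
    · have cond : (σ q).isLeft = !(σ p).isLeft := by rw [hq2, hp2]; rfl
      have A := step σ hadj cond
      apply main p hpm (σ * Equiv.swap q p) A.reachable
      intro v hv
      rw [mem_mism] at hv
      rw [Finset.mem_erase]
      rcases eq_or_ne v q with rfl | hvq
      · exfalso; apply hv
        have h3 : (σ * Equiv.swap v p) v = σ p := by
          simp only [Equiv.Perm.mul_apply, Equiv.swap_apply_left]
        rw [h3, hp2, hq1]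
      rcases eq_or_ne v p with rfl | hvp
      · exfalso; apply hv
        have h3 : (σ * Equiv.swap q v) v = σ q := by
          simp only [Equiv.Perm.mul_apply, Equiv.swap_apply_right]
        rw [h3, hq2, hp1]
      · have h3 : (σ * Equiv.swap q p) v = σ v := by
          simp only [Equiv.Perm.mul_apply]
          rw [Equiv.swap_apply_of_ne_of_ne hvq hvp]
        rw [h3] at hv
        exact ⟨hvp, mem_mism.2 hv⟩
    · obtain ⟨a, hpa⟩ := neighbor_exists hdeg p
      have hpa' : p ≠ a := hpa.ne
      have haq : a ≠ q := by rintro rfl; exact hadj hpa.symm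
      have ha1 : a.isLeft = true := by
        have h := Xadj_side hX hpa
        rw [hp1] at h
        simpa using h.symm
      by_cases hma : (σ a).isLeft = true
      · obtain ⟨b, hbp, hab, hqb⟩ := commonNe hX hdeg haq (by rw [ha1, hq1]) p
        have hb1 : b.isLeft = false := by
          have h := Xadj_side hX hab
          rw [ha1] at h
          simpa using h.symm
        have hqb' : q ≠ b := hqb.ne
        have hab' : a ≠ b := hab.ne
        by_cases hmb : (σ b).isLeft = true
        · have cond : (σ q).isLeft = !(σ b).isLeft := by rw [hq2, hmb]; rfl
          have A := step σ hqb cond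
          apply main q hqm (σ * Equiv.swap q b) A.reachable
          intro v hv
          rw [mem_mism] at hv
          rw [Finset.mem_erase]
          rcases eq_or_ne v q with rfl | hvq
          · exfalso; apply hv
            have h3 : (σ * Equiv.swap v b) v = σ b := by
              simp only [Equiv.Perm.mul_apply, Equiv.swap_apply_left]
            rw [h3, hmb, hq1]
          rcases eq_or_ne v b with rfl | hvb
          · exfalso; apply hv
            have h3 : (σ * Equiv.swap q v) v = σ q := by
              simp only [Equiv.Perm.mul_apply, Equiv.swap_apply_right]
            rw [h3, hq2, hb1]
          · have h3 : (σ * Equiv.swap q b) v = σ v := by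
              simp only [Equiv.Perm.mul_apply]
              rw [Equiv.swap_apply_of_ne_of_ne hvq hvb]
            rw [h3] at hv
            exact ⟨hvq, mem_mism.2 hv⟩
        · rw [Bool.not_eq_true] at hmb
          have cond1 : (σ a).isLeft = !(σ b).isLeft := by rw [hma, hmb]; rfl
          have A1 := step σ hab cond1
          have e1q : (σ * Equiv.swap a b) q = σ q := by
            simp only [Equiv.Perm.mul_apply]
            rw [Equiv.swap_apply_of_ne_of_ne haq.symm hqb']
          have e1b : (σ * Equiv.swap a b) b = σ a := by
            simp only [Equiv.Perm.mul_apply, Equiv.swap_apply_right]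
          have cond2 : ((σ * Equiv.swap a b) q).isLeft
              = !((σ * Equiv.swap a b) b).isLeft := by
            rw [e1q, e1b, hq2, hma]; rfl
          have A2 := step (σ * Equiv.swap a b) hqb cond2
          have hpq' : p ≠ q := hqp.symm
          have hpb' : p ≠ b := hbp.symm
          have e2a : (σ * Equiv.swap a b * Equiv.swap q b) a = σ b := by
            simp only [Equiv.Perm.mul_apply]
            rw [Equiv.swap_apply_of_ne_of_ne haq hab', Equiv.swap_apply_left]
          have e2p : (σ * Equiv.swap a b * Equiv.swap q b) p = σ p := by
            simp only [Equiv.Perm.mul_apply]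
            rw [Equiv.swap_apply_of_ne_of_ne hpq' hpb',
              Equiv.swap_apply_of_ne_of_ne hpa' hpb']
          have cond3 : ((σ * Equiv.swap a b * Equiv.swap q b) a).isLeft
              = !((σ * Equiv.swap a b * Equiv.swap q b) p).isLeft := by
            rw [e2a, e2p, hmb, hp2]; rfl
          have A3 := step (σ * Equiv.swap a b * Equiv.swap q b) hpa.symm cond3
          apply main q hqm (σ * Equiv.swap a b * Equiv.swap q b * Equiv.swap a p)
            (A1.reachable.trans (A2.reachable.trans A3.reachable))
          intro v hv
          rw [mem_mism] at hv
          rw [Finset.mem_erase]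
          rcases eq_or_ne v q with rfl | hvq
          · exfalso; apply hv
            have h3 : (σ * Equiv.swap a b * Equiv.swap v b * Equiv.swap a p) v = σ a := by
              simp only [Equiv.Perm.mul_apply]
              rw [Equiv.swap_apply_of_ne_of_ne haq.symm hqp, Equiv.swap_apply_left,
                Equiv.swap_apply_right]
            rw [h3, hma, hq1]
          rcases eq_or_ne v p with rfl | hvp
          · exfalso; apply hv
            have h3 : (σ * Equiv.swap a b * Equiv.swap q b * Equiv.swap a v) v = σ b := by
              simp only [Equiv.Perm.mul_apply]
              rw [Equiv.swap_apply_right, Equiv.swap_apply_of_ne_of_ne haq hab',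
                Equiv.swap_apply_left]
            rw [h3, hmb, hp1]
          rcases eq_or_ne v a with rfl | hva
          · exfalso; apply hv
            have h3 : (σ * Equiv.swap v b * Equiv.swap q b * Equiv.swap v p) v = σ p := by
              simp only [Equiv.Perm.mul_apply, Equiv.swap_apply_left]
              rw [Equiv.swap_apply_of_ne_of_ne hpq' hpb',
                Equiv.swap_apply_of_ne_of_ne hpa' hpb']
            rw [h3, hp2, ha1]
          rcases eq_or_ne v b with rfl | hvb
          · exfalso; apply hv
            have h3 : (σ * Equiv.swap a v * Equiv.swap q v * Equiv.swap a p) v = σ q := by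
              simp only [Equiv.Perm.mul_apply]
              rw [Equiv.swap_apply_of_ne_of_ne hab'.symm hbp, Equiv.swap_apply_right,
                Equiv.swap_apply_of_ne_of_ne haq.symm hqb']
            rw [h3, hq2, hb1]
          · have h3 : (σ * Equiv.swap a b * Equiv.swap q b * Equiv.swap a p) v = σ v := by
              simp only [Equiv.Perm.mul_apply]
              rw [Equiv.swap_apply_of_ne_of_ne hva hvp,
                Equiv.swap_apply_of_ne_of_ne hvq hvb,
                Equiv.swap_apply_of_ne_of_ne hva hvb]
            rw [h3] at hv
            exact ⟨hvq, mem_mism.2 hv⟩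
      · rw [Bool.not_eq_true] at hma
        have cond : (σ a).isLeft = !(σ p).isLeft := by rw [hma, hp2]; rfl
        have A := step σ hpa.symm cond
        apply main p hpm (σ * Equiv.swap a p) A.reachable
        intro v hv
        rw [mem_mism] at hv
        rw [Finset.mem_erase]
        rcases eq_or_ne v a with rfl | hva
        · exfalso; apply hv
          have h3 : (σ * Equiv.swap v p) v = σ p := by
            simp only [Equiv.Perm.mul_apply, Equiv.swap_apply_left]
          rw [h3, hp2, ha1]
        rcases eq_or_ne v p with rfl | hvp
        · exfalso; apply hv
          have h3 : (σ * Equiv.swap a v) v = σ a := by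
            simp only [Equiv.Perm.mul_apply, Equiv.swap_apply_right]
          rw [h3, hma, hp1]
        · have h3 : (σ * Equiv.swap a p) v = σ v := by
            simp only [Equiv.Perm.mul_apply]
            rw [Equiv.swap_apply_of_ne_of_ne hva hvp]
          rw [h3] at hv
          exact ⟨hvp, mem_mism.2 hv⟩

-- ### the invariant
def fpar (x : V' r) : ZMod 2 := if x.isLeft then 0 else 1

def kpar (σ : Equiv.Perm (V' r)) : ZMod 2 := ∑ i : Fin r, fpar (σ (Sum.inl i))

def sgn (σ : Equiv.Perm (V' r)) : ZMod 2 :=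
  if Equiv.Perm.sign σ = 1 then 0 else 1

def Invt (σ : Equiv.Perm (V' r)) : ZMod 2 := sgn σ + kpar σ

lemma kpar_swap (σ : Equiv.Perm (V' r)) (i j : Fin r)
    (hv : (σ (Sum.inl i)).isLeft = !(σ (Sum.inr j)).isLeft) :
    kpar (σ * Equiv.swap (Sum.inl i) (Sum.inr j)) = kpar σ + 1 := by
  have hterm : ∀ s : Fin r, s ≠ i →
      (σ * Equiv.swap (Sum.inl i) (Sum.inr j)) (Sum.inl s) = σ (Sum.inl s) := by
    intro s hs
    simp only [Equiv.Perm.mul_apply]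
    rw [Equiv.swap_apply_of_ne_of_ne (fun h => hs (Sum.inl_injective h)) (by simp)]
  have hi : (σ * Equiv.swap (Sum.inl i) (Sum.inr j)) (Sum.inl i) = σ (Sum.inr j) := by
    simp only [Equiv.Perm.mul_apply, Equiv.swap_apply_left]
  unfold kpar
  rw [← Finset.sum_erase_add Finset.univ _ (Finset.mem_univ i),
    ← Finset.sum_erase_add Finset.univ (fun s => fpar (σ (Sum.inl s))) (Finset.mem_univ i)]
  have hsum : ∑ s ∈ Finset.univ.erase i,
      fpar ((σ * Equiv.swap (Sum.inl i) (Sum.inr j)) (Sum.inl s))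
      = ∑ s ∈ Finset.univ.erase i, fpar (σ (Sum.inl s)) :=
    Finset.sum_congr rfl (fun s hs => by rw [hterm s (Finset.ne_of_mem_erase hs)])
  rw [hsum, hi]
  have hfp : fpar (σ (Sum.inr j)) = fpar (σ (Sum.inl i)) + 1 := by
    unfold fpar
    rw [hv]
    cases h : (σ (Sum.inr j)).isLeft <;> simp [h] <;> decide
  rw [hfp]
  ring

include hX in
lemma inv_adj {σ τ : Equiv.Perm (V' r)} (h : (FS X (Y' r)).Adj σ τ) :
    Invt τ = Invt σ := by
  obtain ⟨a, b, hab, hY, h1, h2, h3⟩ := h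
  have hne := hab.ne
  have hτ : τ = σ * Equiv.swap a b := by
    apply Equiv.ext; intro w
    rcases eq_or_ne w a with rfl | hwa
    · rw [show (σ * Equiv.swap w b) w = σ b by
        simp only [Equiv.Perm.mul_apply, Equiv.swap_apply_left]]
      exact h1
    rcases eq_or_ne w b with rfl | hwb
    · rw [show (σ * Equiv.swap a w) w = σ a by
        simp only [Equiv.Perm.mul_apply, Equiv.swap_apply_right]]
      exact h2
    · rw [show (σ * Equiv.swap a b) w = σ w by
        simp only [Equiv.Perm.mul_apply]
        rw [Equiv.swap_apply_of_ne_of_ne hwa hwb]]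
      exact h3 w hwa hwb
  subst hτ
  have hsgn : sgn (σ * Equiv.swap a b) = sgn σ + 1 := by
    have hs : Equiv.Perm.sign (σ * Equiv.swap a b) = - Equiv.Perm.sign σ := by
      rw [Equiv.Perm.sign_mul, Equiv.Perm.sign_swap hne, mul_neg, mul_one]
    unfold sgn
    rcases Int.units_eq_one_or (Equiv.Perm.sign σ) with h | h
    · rw [h] at hs
      rw [hs, h, if_neg (by decide), if_pos rfl, zero_add]
    · rw [h, neg_neg] at hs
      rw [hs, h, if_pos rfl, if_neg (by decide)]
      decide
  have hk : kpar (σ * Equiv.swap a b) = kpar σ + 1 := by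
    have hside := Xadj_side hX hab
    have hYv : (σ a).isLeft = !(σ b).isLeft := (Yadj_iff _ _).1 hY
    cases a with
    | inl i =>
      cases b with
      | inl j => simp at hside
      | inr j => exact kpar_swap σ i j hYv
    | inr i =>
      cases b with
      | inl j =>
        rw [Equiv.swap_comm]
        exact kpar_swap σ j i (by rw [hYv, Bool.not_not])
      | inr j => simp at hside
  unfold Invt
  rw [hsgn, hk]
  have h2 : (sgn σ + 1) + (kpar σ + 1) = sgn σ + kpar σ + (1 + 1) := by ring
  rw [h2, show (1 : ZMod 2) + 1 = 0 by decide, add_zero]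

include hX in
lemma inv_walk {σ τ : Equiv.Perm (V' r)} (w : (FS X (Y' r)).Walk σ τ) :
    Invt σ = Invt τ := by
  induction w with
  | nil => rfl
  | cons h _ ih => exact ((inv_adj hX h).symm).trans ih

end Graph
end FSproof

open FSproof in
theorem statement7 (r : ℕ) (hr : 2 ≤ r)
    (X : SimpleGraph (Fin r ⊕ Fin r))
    (hX : X ≤ completeBipartiteGraph (Fin r) (Fin r))
    (hdeg : 2 * minDeg X ≥ r + 2) :
    Nat.card (FS X (completeBipartiteGraph (Fin r) (Fin r))).ConnectedComponent = 2 := by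
  classical
  have hx0 : (0 : ℕ) < r := by omega
  have hx1 : (1 : ℕ) < r := by omega
  set x0 : Fin r := ⟨0, hx0⟩ with hx0def
  set x1 : Fin r := ⟨1, hx1⟩ with hx1def
  have h01 : x0 ≠ x1 := by
    simp only [hx0def, hx1def, ne_eq, Fin.mk.injEq]
    omega
  set c0 : Equiv.Perm (V' r) := Equiv.swap (Sum.inl x0) (Sum.inl x1) with hc0def
  have h01' : (Sum.inl x0 : V' r) ≠ Sum.inl x1 := fun h => h01 (Sum.inl_injective h)
  have hc0side : ∀ v : V' r, (c0 v).isLeft = v.isLeft := by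
    intro v
    rw [hc0def]
    exact sidePres_swap (u := Sum.inl x0) (v := Sum.inl x1) rfl v
  have canon : ∀ σ : Equiv.Perm (V' r),
      (FS X (completeBipartiteGraph (Fin r) (Fin r))).Reachable σ 1 ∨
      (FS X (completeBipartiteGraph (Fin r) (Fin r))).Reachable σ c0 := by
    intro σ
    obtain ⟨τ, hτm, hre⟩ := phase1 hX hdeg (Mism σ).card σ le_rfl
    have hside_inv : ∀ v, (τ⁻¹ v).isLeft = v.isLeft := by
      intro v
      have h := hτm (τ⁻¹ v)
      rw [Equiv.Perm.inv_def, Equiv.apply_symm_apply] at h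
      exact h.symm
    rcases Int.units_eq_one_or (Equiv.Perm.sign τ) with h | h
    · left
      have hg := goodOfSidePres hX hdeg hr hside_inv (by rw [Equiv.Perm.sign_inv, h])
      have hr1 := hg.2 τ hτm
      rw [mul_inv_cancel] at hr1
      exact hre.trans hr1
    · right
      have hsideπ : ∀ v, ((τ⁻¹ * c0) v).isLeft = v.isLeft := by
        intro v
        rw [Equiv.Perm.mul_apply, hside_inv, hc0side]
      have hsgnπ : Equiv.Perm.sign (τ⁻¹ * c0) = 1 := by
        rw [Equiv.Perm.sign_mul, Equiv.Perm.sign_inv, h, hc0def,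
          Equiv.Perm.sign_swap h01']
        decide
      have hg := goodOfSidePres hX hdeg hr hsideπ hsgnπ
      have hr1 := hg.2 τ hτm
      rw [← mul_assoc, mul_inv_cancel, one_mul] at hr1
      exact hre.trans hr1
  have hinv1 : Invt (1 : Equiv.Perm (V' r)) = 0 := by
    unfold Invt sgn kpar
    rw [Equiv.Perm.sign_one, if_pos rfl]
    have hterm : ∀ i : Fin r, fpar ((1 : Equiv.Perm (V' r)) (Sum.inl i)) = 0 := by
      intro i
      unfold fpar
      rw [Equiv.Perm.one_apply]
      simp
    rw [Finset.sum_congr rfl (fun i _ => hterm i), Finset.sum_const_zero, add_zero]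
  have hinvc0 : Invt c0 = 1 := by
    unfold Invt sgn kpar
    rw [hc0def, Equiv.Perm.sign_swap h01', if_neg (by decide)]
    have hterm : ∀ i : Fin r, fpar (Equiv.swap (Sum.inl x0 : V' r) (Sum.inl x1) (Sum.inl i)) = 0 := by
      intro i
      unfold fpar
      rw [sidePres_swap (u := Sum.inl x0) (v := Sum.inl x1) rfl]
      simp
    rw [Finset.sum_congr rfl (fun i _ => hterm i), Finset.sum_const_zero, add_zero]
  have hnr : ¬ (FS X (completeBipartiteGraph (Fin r) (Fin r))).Reachable 1 c0 := by
    intro hre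
    obtain ⟨w⟩ := hre
    have hw := inv_walk hX w
    rw [hinv1, hinvc0] at hw
    exact absurd hw (by decide)
  rw [Nat.card_eq_two_iff]
  refine ⟨(FS X (completeBipartiteGraph (Fin r) (Fin r))).connectedComponentMk 1,
    (FS X (completeBipartiteGraph (Fin r) (Fin r))).connectedComponentMk c0, ?_, ?_⟩
  · intro h
    rw [SimpleGraph.ConnectedComponent.eq] at h
    exact hnr h
  · rw [Set.eq_univ_iff_forall]
    intro c
    refine SimpleGraph.ConnectedComponent.ind (fun σ => ?_) c
    simp only [Set.mem_insert_iff, Set.mem_singleton_iff]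
    rcases canon σ with hre | hre
    · exact Or.inl ((SimpleGraph.ConnectedComponent.eq).2 hre)
    · exact Or.inr ((SimpleGraph.ConnectedComponent.eq).2 hre)
end

section
/- Let r ≥ 2. Then there exists an edge-subgraph X of K_{r,r} with δ(X) = ⌊r/2⌋ such that the friends-and-strangers graph FS(X, K_{r,r}) has more than two connected components. -/
open SimpleGraph

/-- the marking predicate : component 1 is the vertices with index `< (r+1)/2`. -/
def myP (r : ℕ) : Fin r ⊕ Fin r → Prop :=
  Sum.elim (fun i => i.val < (r+1)/2) (fun j => j.val < (r+1)/2)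

/-- the candidate graph -/
def myX (r : ℕ) : SimpleGraph (Fin r ⊕ Fin r) where
  Adj u v := (completeBipartiteGraph (Fin r) (Fin r)).Adj u v ∧ (myP r u ↔ myP r v)
  symm := ⟨fun u v h => ⟨h.1.symm, h.2.symm⟩⟩
  loopless := ⟨fun u h => h.1.ne rfl⟩

lemma card_lt (r c : ℕ) (h : c ≤ r) : Nat.card {j : Fin r // j.val < c} = c := by
  have e : {j : Fin r // j.val < c} ≃ Fin c :=
    { toFun := fun j => ⟨j.1.1, j.2⟩
      invFun := fun k => ⟨⟨k.1, lt_of_lt_of_le k.2 h⟩, k.2⟩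
      left_inv := fun j => rfl
      right_inv := fun k => rfl }
  rw [Nat.card_congr e, Nat.card_eq_fintype_card, Fintype.card_fin]

lemma card_not_lt (r c : ℕ) (h : c ≤ r) : Nat.card {j : Fin r // ¬ j.val < c} = r - c := by
  have e : {j : Fin r // ¬ j.val < c} ≃ Fin (r - c) :=
    { toFun := fun j => ⟨j.1.1 - c, by omega⟩
      invFun := fun k => ⟨⟨k.1 + c, by omega⟩, by simp⟩
      left_inv := fun j => by ext; simp [Nat.sub_add_cancel (Nat.not_lt.1 j.2)]
      right_inv := fun k => by ext; simp }
  rw [Nat.card_congr e, Nat.card_eq_fintype_card, Fintype.card_fin]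

instance myP.dec (r : ℕ) (v : Fin r ⊕ Fin r) : Decidable (myP r v) :=
  match v with
  | Sum.inl i => (inferInstance : Decidable (i.val < (r+1)/2))
  | Sum.inr _ => (inferInstance : Decidable (_ < (r+1)/2))

lemma ncard_cond (r : ℕ) (q : Prop) [Decidable q] :
    {j : Fin r | q ↔ j.val < (r+1)/2}.ncard = if q then (r+1)/2 else r - (r+1)/2 := by
  have hc : (r+1)/2 ≤ r := by omega
  by_cases hq : q
  · have : {j : Fin r | q ↔ j.val < (r+1)/2} = {j : Fin r | j.val < (r+1)/2} := by
      ext j; simp [hq]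
    rw [this, if_pos hq, ← Nat.card_coe_set_eq]
    exact card_lt r _ hc
  · have : {j : Fin r | q ↔ j.val < (r+1)/2} = {j : Fin r | ¬ j.val < (r+1)/2} := by
      ext j; simp [hq]
    rw [this, if_neg hq, ← Nat.card_coe_set_eq]
    exact card_not_lt r _ hc

lemma neighborSet_inl (r : ℕ) (i : Fin r) :
    (myX r).neighborSet (Sum.inl i) =
      Sum.inr '' {j : Fin r | (i.val < (r+1)/2) ↔ j.val < (r+1)/2} := by
  ext w
  cases w with
  | inl j => simp [neighborSet, myX, myP]
  | inr j => simp [neighborSet, myX, myP]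

lemma neighborSet_inr (r : ℕ) (i : Fin r) :
    (myX r).neighborSet (Sum.inr i) =
      Sum.inl '' {j : Fin r | (i.val < (r+1)/2) ↔ j.val < (r+1)/2} := by
  ext w
  cases w with
  | inl j => simp [neighborSet, myX, myP, Iff.comm]
  | inr j => simp [neighborSet, myX, myP]

lemma ncard_neighborSet (r : ℕ) (v : Fin r ⊕ Fin r) :
    ((myX r).neighborSet v).ncard =
      if myP r v then (r+1)/2 else r - (r+1)/2 := by
  classical
  cases v with
  | inl i =>
      rw [neighborSet_inl, Set.ncard_image_of_injective _ Sum.inr_injective]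
      exact ncard_cond r _
  | inr i =>
      rw [neighborSet_inr, Set.ncard_image_of_injective _ Sum.inl_injective]
      exact ncard_cond r _

lemma minDeg_myX (r : ℕ) (hr : 2 ≤ r) : minDeg (myX r) = r / 2 := by
  have hne : Nonempty (Fin r ⊕ Fin r) := ⟨Sum.inl ⟨0, by omega⟩⟩
  rw [minDeg]
  apply le_antisymm
  · refine le_trans (ciInf_le (OrderBot.bddBelow _) (Sum.inl (⟨r - 1, by omega⟩ : Fin r))) ?_
    rw [ncard_neighborSet]
    have h : ¬ myP r (Sum.inl (⟨r - 1, by omega⟩ : Fin r)) := by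
      simp only [myP, Sum.elim_inl]; omega
    rw [if_neg h]; omega
  · refine le_ciInf fun v => ?_
    rw [ncard_neighborSet]
    split <;> omega

/-- the invariant set -/
def myS (r : ℕ) : Set (Fin r ⊕ Fin r) := {u | myP r u}

lemma image_subset_of_adj (r : ℕ) {σ τ : (Fin r ⊕ Fin r) ≃ (Fin r ⊕ Fin r)}
    (h : (FS (myX r) (completeBipartiteGraph (Fin r) (Fin r))).Adj σ τ) :
    (τ : _ → _) '' myS r ⊆ (σ : _ → _) '' myS r := by
  obtain ⟨a, b, hX, -, h1, h2, h3⟩ := h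
  rintro w ⟨u, hu, rfl⟩
  by_cases hua : u = a
  · subst hua; rw [h1]; exact ⟨b, hX.2.mp hu, rfl⟩
  by_cases hub : u = b
  · subst hub; rw [h2]; exact ⟨a, hX.2.mpr hu, rfl⟩
  · rw [h3 u hua hub]; exact ⟨u, hu, rfl⟩

lemma image_eq_of_adj (r : ℕ) {σ τ : (Fin r ⊕ Fin r) ≃ (Fin r ⊕ Fin r)}
    (h : (FS (myX r) (completeBipartiteGraph (Fin r) (Fin r))).Adj σ τ) :
    (σ : _ → _) '' myS r = (τ : _ → _) '' myS r :=
  le_antisymm (image_subset_of_adj r h.symm) (image_subset_of_adj r h)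

lemma image_eq_of_reachable (r : ℕ) {σ τ : (Fin r ⊕ Fin r) ≃ (Fin r ⊕ Fin r)}
    (h : (FS (myX r) (completeBipartiteGraph (Fin r) (Fin r))).Reachable σ τ) :
    (σ : _ → _) '' myS r = (τ : _ → _) '' myS r := by
  obtain ⟨p⟩ := h
  induction p with
  | nil => rfl
  | cons ha _ ih => exact (image_eq_of_adj r ha).trans ih

theorem statement8 (r : ℕ) (hr : 2 ≤ r) :
    ∃ X : SimpleGraph (Fin r ⊕ Fin r),
      X ≤ completeBipartiteGraph (Fin r) (Fin r) ∧
      minDeg X = r / 2 ∧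
      2 < Nat.card (FS X (completeBipartiteGraph (Fin r) (Fin r))).ConnectedComponent := by
  classical
  refine ⟨myX r, fun u v h => h.1, minDeg_myX r hr, ?_⟩
  set G := FS (myX r) (completeBipartiteGraph (Fin r) (Fin r)) with hG
  set a0 : Fin r := ⟨0, by omega⟩
  set a1 : Fin r := ⟨r - 1, by omega⟩
  have ha01 : a0 ≠ a1 := by simp [a0, a1, Fin.ext_iff]; omega
  have hS0l : (Sum.inl a0 : Fin r ⊕ Fin r) ∈ myS r := by
    simp only [myS, myP, Set.mem_setOf_eq, Sum.elim_inl, a0, a1, Fin.val_mk]; omega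
  have hS0r : (Sum.inr a0 : Fin r ⊕ Fin r) ∈ myS r := by
    simp only [myS, myP, Set.mem_setOf_eq, Sum.elim_inr, a0, a1, Fin.val_mk]; omega
  have hS1l : (Sum.inl a1 : Fin r ⊕ Fin r) ∉ myS r := by
    simp only [myS, myP, Set.mem_setOf_eq, Sum.elim_inl, a0, a1, Fin.val_mk]; omega
  have hS1r : (Sum.inr a1 : Fin r ⊕ Fin r) ∉ myS r := by
    simp only [myS, myP, Set.mem_setOf_eq, Sum.elim_inr, a0, a1, Fin.val_mk]; omega
  set σ1 : (Fin r ⊕ Fin r) ≃ (Fin r ⊕ Fin r) := Equiv.refl _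
  set σ2 : (Fin r ⊕ Fin r) ≃ (Fin r ⊕ Fin r) :=
    Equiv.swap (Sum.inl a0) (Sum.inl a1)
  set σ3 : (Fin r ⊕ Fin r) ≃ (Fin r ⊕ Fin r) :=
    Equiv.swap (Sum.inr a0) (Sum.inr a1)
  -- membership facts about the images
  have m1l : (Sum.inl a1 : Fin r ⊕ Fin r) ∉ (σ1 : _ → _) '' myS r := by
    simpa [σ1] using hS1l
  have m1r : (Sum.inr a1 : Fin r ⊕ Fin r) ∉ (σ1 : _ → _) '' myS r := by
    simpa [σ1] using hS1r
  have m2l : (Sum.inl a1 : Fin r ⊕ Fin r) ∈ (σ2 : _ → _) '' myS r :=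
    ⟨Sum.inl a0, hS0l, by simp [σ2]⟩
  have m3r : (Sum.inr a1 : Fin r ⊕ Fin r) ∈ (σ3 : _ → _) '' myS r :=
    ⟨Sum.inr a0, hS0r, by simp [σ3]⟩
  have m2r : (Sum.inr a1 : Fin r ⊕ Fin r) ∉ (σ2 : _ → _) '' myS r := by
    rintro ⟨u, hu, he⟩
    have : u = Sum.inr a1 := by
      apply σ2.injective
      rw [he, Equiv.swap_apply_of_ne_of_ne (by simp) (by simp)]
    exact hS1r (this ▸ hu)
  have m3l : (Sum.inl a1 : Fin r ⊕ Fin r) ∉ (σ3 : _ → _) '' myS r := by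
    rintro ⟨u, hu, he⟩
    have : u = Sum.inl a1 := by
      apply σ3.injective
      rw [he, Equiv.swap_apply_of_ne_of_ne (by simp) (by simp)]
    exact hS1l (this ▸ hu)
  -- the three components are pairwise distinct
  have key : ∀ σ τ : (Fin r ⊕ Fin r) ≃ (Fin r ⊕ Fin r),
      G.connectedComponentMk σ = G.connectedComponentMk τ →
      (σ : _ → _) '' myS r = (τ : _ → _) '' myS r := fun σ τ h =>
    image_eq_of_reachable r (SimpleGraph.ConnectedComponent.eq.mp h)
  have h12 : G.connectedComponentMk σ1 ≠ G.connectedComponentMk σ2 := fun h =>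
    m1l ((key _ _ h) ▸ m2l)
  have h13 : G.connectedComponentMk σ1 ≠ G.connectedComponentMk σ3 := fun h =>
    m1r ((key _ _ h) ▸ m3r)
  have h23 : G.connectedComponentMk σ2 ≠ G.connectedComponentMk σ3 := fun h =>
    m3l ((key _ _ h) ▸ m2l)
  have hinj : Function.Injective
      (![G.connectedComponentMk σ1, G.connectedComponentMk σ2,
         G.connectedComponentMk σ3] : Fin 3 → G.ConnectedComponent) := by
    intro i j hij
    fin_cases i <;> fin_cases j <;>
      first
        | rfl
        | (exfalso; revert hij; simp only [Matrix.cons_val_zero, Matrix.cons_val_one,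
            Matrix.head_cons, Matrix.cons_val_two, Matrix.tail_cons]; intro hij;
           first
             | exact h12 hij | exact h13 hij | exact h23 hij
             | exact h12 hij.symm | exact h13 hij.symm | exact h23 hij.symm)
  have := Nat.card_le_card_of_injective _ hinj
  simp at this ⊢; omega
end

section
/- Let G be a finite simple graph on m vertices with minimum degree δ(G), and let Q ⊆ V(G) be a subset with |Q| ≥ 5 and 2|Q| + 3δ(G) ≥ 3m + 2. Then the induced subgraph G|_Q has at most two connected components. -/
open SimpleGraph

theorem statement10 {V : Type*} [Fintype V] (m : ℕ) (G : SimpleGraph V)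
    (hV : Fintype.card V = m) (Q : Set V) (hQ : 5 ≤ Q.ncard)
    (hdeg : 2 * Q.ncard + 3 * minDeg G ≥ 3 * m + 2) :
    Nat.card (G.induce Q).ConnectedComponent ≤ 2 := by
  classical
  by_contra hcon
  push_neg at hcon
  have hQfin : Q.Finite := Q.toFinite
  haveI : Finite ↥Q := hQfin
  haveI : Finite (G.induce Q).ConnectedComponent := by
    unfold SimpleGraph.ConnectedComponent; exact Quotient.finite ((G.induce Q).reachableSetoid)
  haveI := Fintype.ofFinite (G.induce Q).ConnectedComponent
  rw [Nat.card_eq_fintype_card] at hcon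
  obtain ⟨c1, c2, c3, h12, h13, h23⟩ := Fintype.two_lt_card_iff.mp hcon
  set S : (G.induce Q).ConnectedComponent → Set V :=
    fun c => {v | ∃ h : v ∈ Q, (G.induce Q).connectedComponentMk ⟨v, h⟩ = c} with hS
  have hSsub : ∀ c, S c ⊆ Q := fun c v hv => hv.1
  have hSdisj : ∀ c c', c ≠ c' → Disjoint (S c) (S c') := by
    intro c c' hne
    rw [Set.disjoint_left]
    rintro v ⟨h1, hc⟩ ⟨h2, hc'⟩
    exact hne (hc ▸ hc' ▸ rfl)
  have key : ∀ c, minDeg G + Q.ncard + 1 ≤ m + (S c).ncard := by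
    intro c
    obtain ⟨⟨v, hv⟩, hvc⟩ := c.exists_rep
    have hvS : v ∈ S c := ⟨hv, hvc⟩
    have hsub : G.neighborSet v ⊆ Qᶜ ∪ (S c \ {v}) := by
      intro w hw
      by_cases hwQ : w ∈ Q
      · right
        refine ⟨⟨hwQ, ?_⟩, ?_⟩
        · rw [← hvc]
          exact ConnectedComponent.sound
            (SimpleGraph.Adj.reachable (by simpa using hw.symm : (G.induce Q).Adj ⟨w, hwQ⟩ ⟨v, hv⟩))
        · intro h
          exact G.loopless.irrefl v (by simpa [Set.mem_singleton_iff.mp h] using hw)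
      · left; exact hwQ
    have h1 : (G.neighborSet v).ncard ≤ (Qᶜ).ncard + (S c \ {v}).ncard :=
      le_trans (Set.ncard_le_ncard hsub (Set.toFinite _)) (Set.ncard_union_le _ _)
    have h2 : (S c \ {v}).ncard + 1 = (S c).ncard :=
      Set.ncard_diff_singleton_add_one hvS (Set.toFinite _)
    have h3 : Q.ncard + (Qᶜ).ncard = m := by
      rw [Set.ncard_add_ncard_compl, Nat.card_eq_fintype_card, hV]
    have h4 : minDeg G ≤ (G.neighborSet v).ncard := ciInf_le (OrderBot.bddBelow _) v
    omega
  have hk1 := key c1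
  have hk2 := key c2
  have hk3 := key c3
  have hsum : (S c1).ncard + (S c2).ncard + (S c3).ncard ≤ Q.ncard := by
    have hu : (S c1 ∪ S c2 ∪ S c3).ncard = (S c1).ncard + (S c2).ncard + (S c3).ncard := by
      rw [Set.ncard_union_eq (Set.disjoint_union_left.mpr
          ⟨hSdisj _ _ h13, hSdisj _ _ h23⟩) (Set.toFinite _) (Set.toFinite _),
        Set.ncard_union_eq (hSdisj _ _ h12) (Set.toFinite _) (Set.toFinite _)]
    calc (S c1).ncard + (S c2).ncard + (S c3).ncard = (S c1 ∪ S c2 ∪ S c3).ncard := hu.symm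
      _ ≤ Q.ncard := Set.ncard_le_ncard
          (Set.union_subset (Set.union_subset (hSsub _) (hSsub _)) (hSsub _)) hQfin
  omega
end

section
/- Let G be a finite simple graph on m vertices with minimum degree δ(G), and let Q ⊆ V(G) be a subset with |Q| ≥ 5 and 2|Q| + 3δ(G) ≥ 3m + 2. Suppose the induced subgraph G|_Q has exactly two connected components F₁ and F₂. Then both F₁ and F₂ are Wilsonian, and for i = 1, 2: δ(G) + 1 + |Q| − m ≤ |V(F_i)| ≤ m − δ(G) − 1 and δ(F_i) ≥ δ(G) + |Q| − m. -/
open SimpleGraph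

/-- Biconnected: connected and with no cut vertex. -/
def Biconnected {V : Type*} (G : SimpleGraph V) : Prop :=
  G.Connected ∧ ∀ v : V, (G.induce {w | w ≠ v}).Connected

/-- The graph `θ₀`: a 6-cycle together with a seventh vertex joined to two
antipodal vertices of the cycle. -/
def theta0 : SimpleGraph (Fin 7) :=
  SimpleGraph.fromEdgeSet
    {s(0, 1), s(1, 2), s(2, 3), s(3, 4), s(4, 5), s(5, 0), s(6, 0), s(6, 3)}

/-- A graph is Wilsonian if it is biconnected, not bipartite, not isomorphic to a
cycle graph, and not isomorphic to `θ₀`. -/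
def Wilsonian {V : Type*} (G : SimpleGraph V) : Prop :=
  Biconnected G ∧ ¬ G.Colorable 2 ∧
    (∀ n : ℕ, 3 ≤ n → IsEmpty (G ≃g SimpleGraph.cycleGraph n)) ∧
    IsEmpty (G ≃g theta0)

/-- A graph is almost-Wilsonian if it is biconnected, not isomorphic to a cycle graph
on at least 4 vertices, and not isomorphic to `θ₀`. -/
def AlmostWilsonian {V : Type*} (G : SimpleGraph V) : Prop :=
  Biconnected G ∧
    (∀ n : ℕ, 4 ≤ n → IsEmpty (G ≃g SimpleGraph.cycleGraph n)) ∧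
    IsEmpty (G ≃g theta0)

section lemmas
variable {W : Type*} (H : SimpleGraph W)

lemma minDeg_le (v : W) : minDeg H ≤ (H.neighborSet v).ncard :=
  ciInf_le (OrderBot.bddBelow _) v

lemma minDeg_empty [IsEmpty W] : minDeg H = 0 := by
  rw [minDeg, iInf_of_isEmpty, Nat.sInf_empty]

lemma le_minDeg {k : ℕ} (h : ∀ v : W, k ≤ (H.neighborSet v).ncard) [Nonempty W] :
    k ≤ minDeg H := le_ciInf h

lemma induce_neighbor_ncard (S : Set W) (v : S) :
    ((H.induce S).neighborSet v).ncard = (H.neighborSet ↑v ∩ S).ncard := by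
  rw [← Set.ncard_image_of_injective _ (Subtype.val_injective (p := (· ∈ S)))]
  congr 1
  ext w
  simp only [Set.mem_image, mem_neighborSet, comap_adj, Function.Embedding.coe_subtype,
    Set.mem_inter_iff]
  constructor
  · rintro ⟨x, hx, rfl⟩; exact ⟨hx, x.2⟩
  · rintro ⟨h1, h2⟩; exact ⟨⟨w, h2⟩, h1, rfl⟩
end lemmas

section lemmas2
variable {W : Type*} (H : SimpleGraph W)

lemma connected_of_minDeg [Finite W] (h : Nat.card W + 1 ≤ 2 * minDeg H) : H.Connected := by
  have hne : Nonempty W := by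
    by_contra he
    rw [not_nonempty_iff] at he
    rw [minDeg_empty] at h
    omega
  refine ⟨?_⟩
  intro u v
  have key : (H.neighborSet u ∩ H.neighborSet v).Nonempty := by
    rw [Set.nonempty_iff_ne_empty]
    intro hemp
    have hd : Disjoint (H.neighborSet u) (H.neighborSet v) :=
      Set.disjoint_iff_inter_eq_empty.mpr hemp
    have h1 := Set.ncard_union_eq hd (Set.toFinite _) (Set.toFinite _)
    have h2 : (H.neighborSet u ∪ H.neighborSet v).ncard ≤ Nat.card W := by
      rw [← Set.ncard_univ]
      exact Set.ncard_le_ncard (Set.subset_univ _) Set.finite_univ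
    have h3 := minDeg_le H u
    have h4 := minDeg_le H v
    omega
  obtain ⟨w, hwu, hwv⟩ := key
  exact (Adj.reachable hwu).trans (Adj.reachable hwv.symm)

lemma not_colorable_two [Finite W] (h : Nat.card W + 3 ≤ 2 * minDeg H) : ¬ H.Colorable 2 := by
  rintro ⟨c⟩
  have hne : Nonempty W := by
    by_contra he
    rw [not_nonempty_iff] at he
    rw [minDeg_empty] at h
    omega
  obtain ⟨v⟩ := id hne
  have hc : 0 < Nat.card W := Nat.card_pos
  have h3 := minDeg_le H v
  obtain ⟨w, hw⟩ := Set.nonempty_of_ncard_ne_zero (s := H.neighborSet v) (by omega)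
  have hadj : H.Adj v w := hw
  have hcc : c v ≠ c w := c.valid hadj
  have key : ∀ a b x : Fin 2, a ≠ b → x ≠ a → x = b := by decide
  have h1 : H.neighborSet v ⊆ {x | c x = c w} :=
    fun x hx => key (c v) (c w) (c x) hcc (Ne.symm (c.valid hx))
  have h2 : H.neighborSet w ⊆ {x | c x = c v} :=
    fun x hx => key (c w) (c v) (c x) hcc.symm (Ne.symm (c.valid hx))
  have hd : Disjoint {x | c x = c w} {x | c x = c v} := by
    rw [Set.disjoint_left]
    intro x hxw hxv
    exact hcc (by rw [← hxv, ← hxw])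
  have e1 : (H.neighborSet v).ncard ≤ ({x | c x = c w} : Set W).ncard :=
    Set.ncard_le_ncard h1 (Set.toFinite _)
  have e2 : (H.neighborSet w).ncard ≤ ({x | c x = c v} : Set W).ncard :=
    Set.ncard_le_ncard h2 (Set.toFinite _)
  have h4 := minDeg_le H w
  have h5 := Set.ncard_union_eq hd (Set.toFinite _) (Set.toFinite _)
  have h6 : (({x | c x = c w} ∪ {x | c x = c v}) : Set W).ncard ≤ Nat.card W := by
    rw [← Set.ncard_univ]
    exact Set.ncard_le_ncard (Set.subset_univ _) Set.finite_univ
  omega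

lemma iso_ncard_neighborSet {W' : Type*} {H' : SimpleGraph W'} (e : H ≃g H') (v : W) :
    (H.neighborSet v).ncard = (H'.neighborSet (e v)).ncard := by
  rw [← Nat.card_coe_set_eq, ← Nat.card_coe_set_eq]
  exact Nat.card_congr (e.mapNeighborSet v)
end lemmas2

lemma theta0_nbhd : theta0.neighborSet 6 = {0, 3} := by
  ext w
  simp only [mem_neighborSet, theta0, fromEdgeSet_adj, Set.mem_insert_iff,
    Set.mem_singleton_iff]
  fin_cases w <;> decide

lemma ncard_neighborSet_eq_degree {W : Type*} (H : SimpleGraph W) [Fintype W]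
    [DecidableRel H.Adj] (v : W) : (H.neighborSet v).ncard = H.degree v := by
  rw [← Nat.card_coe_set_eq, Nat.card_eq_fintype_card, card_neighborSet_eq_degree]

lemma wilsonian_of_minDeg {W : Type*} [Finite W] (H : SimpleGraph W)
    (h : Nat.card W + 3 ≤ 2 * minDeg H) : Wilsonian H := by
  have hne : Nonempty W := by
    by_contra he
    rw [not_nonempty_iff] at he
    rw [minDeg_empty] at h
    omega
  have hcard : minDeg H + 1 ≤ Nat.card W := by
    obtain ⟨v⟩ := id hne
    have h1 := minDeg_le H v
    have hsub : H.neighborSet v ⊆ {v}ᶜ := by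
      intro x hx
      simp only [Set.mem_compl_iff, Set.mem_singleton_iff]
      rintro rfl
      exact H.irrefl hx
    have h2 := Set.ncard_le_ncard hsub (Set.toFinite _)
    have h3 := Set.ncard_add_ncard_compl ({v} : Set W)
    have h4 : ({v} : Set W).ncard = 1 := Set.ncard_singleton v
    omega
  refine ⟨⟨connected_of_minDeg H (by omega), ?_⟩, not_colorable_two H h, ?_, ?_⟩
  · intro v
    set S : Set W := {w | w ≠ v} with hS
    have hSc : S = {v}ᶜ := by ext x; simp [hS]
    have hcardS : Nat.card S = Nat.card W - 1 := by
      rw [Nat.card_coe_set_eq, hSc]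
      have h3 := Set.ncard_add_ncard_compl ({v} : Set W)
      have h4 : ({v} : Set W).ncard = 1 := Set.ncard_singleton v
      omega
    have hneS : Nonempty S := (Nat.card_pos_iff.mp (by omega)).1
    have hmin : minDeg H - 1 ≤ minDeg (H.induce S) := by
      apply le_minDeg
      intro u
      rw [induce_neighbor_ncard]
      have hsub : H.neighborSet ↑u \ {v} ⊆ H.neighborSet ↑u ∩ S := by
        rintro x ⟨hx1, hx2⟩
        exact ⟨hx1, by simpa [hS] using hx2⟩
      have h1 := Set.ncard_le_ncard hsub (Set.toFinite _)
      have h2 : (H.neighborSet ↑u).ncard ≤ (H.neighborSet ↑u \ {v}).ncard + 1 := by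
        have : H.neighborSet ↑u ⊆ insert v (H.neighborSet ↑u \ {v}) := by
          intro x hx
          by_cases hxv : x = v
          · exact hxv ▸ Set.mem_insert _ _
          · exact Set.mem_insert_of_mem _ ⟨hx, hxv⟩
        calc (H.neighborSet ↑u).ncard ≤ (insert v (H.neighborSet ↑u \ {v})).ncard :=
              Set.ncard_le_ncard this (Set.toFinite _)
          _ ≤ _ := Set.ncard_insert_le _ _
      have h3 := minDeg_le H ↑u
      omega
    apply connected_of_minDeg
    omega
  · intro n hn
    constructor
    intro e
    obtain ⟨k, rfl⟩ := Nat.exists_eq_add_of_le' hn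
    have h1 := iso_ncard_neighborSet H e (e.symm 0)
    rw [e.apply_symm_apply] at h1
    rw [ncard_neighborSet_eq_degree (SimpleGraph.cycleGraph (k+3)) (0 : Fin (k+3)), cycleGraph_degree_three_le] at h1
    have h2 := minDeg_le H (e.symm 0)
    have h3 : Nat.card W = k + 3 := by
      rw [Nat.card_congr e.toEquiv, Nat.card_eq_fintype_card, Fintype.card_fin]
    omega
  · constructor
    intro e
    have h1 := iso_ncard_neighborSet H e (e.symm 6)
    rw [e.apply_symm_apply, theta0_nbhd] at h1
    rw [Set.ncard_pair (by decide : (0 : Fin 7) ≠ 3)] at h1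
    have h2 := minDeg_le H (e.symm 6)
    have h3 : Nat.card W = 7 := by
      rw [Nat.card_congr e.toEquiv, Nat.card_eq_fintype_card, Fintype.card_fin]
    omega


theorem statement11 {V : Type*} [Fintype V] (m : ℕ) (G : SimpleGraph V)
    (hV : Fintype.card V = m) (Q : Set V) (hQ : 5 ≤ Q.ncard)
    (hdeg : 2 * Q.ncard + 3 * minDeg G ≥ 3 * m + 2)
    (h2 : Nat.card (G.induce Q).ConnectedComponent = 2) :
    ∀ C : (G.induce Q).ConnectedComponent,
      Wilsonian ((G.induce Q).induce C.supp) ∧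
      (minDeg G : ℤ) + 1 + Q.ncard - m ≤ Nat.card C.supp ∧
      (Nat.card C.supp : ℤ) ≤ m - minDeg G - 1 ∧
      (minDeg G : ℤ) + Q.ncard - m ≤ minDeg ((G.induce Q).induce C.supp) := by
  classical
  intro C
  have hm : Nat.card V = m := by rw [Nat.card_eq_fintype_card, hV]
  have hQm : Q.ncard ≤ m := by
    rw [← hm, ← Set.ncard_univ]
    exact Set.ncard_le_ncard (Set.subset_univ Q) Set.finite_univ
  have hδQ : m + 3 ≤ minDeg G + Q.ncard := by omega
  have hdQ : ∀ v : Q, minDeg G + Q.ncard - m ≤ ((G.induce Q).neighborSet v).ncard := by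
    intro v
    have h1 := minDeg_le G ↑v
    rw [induce_neighbor_ncard]
    have hsub : G.neighborSet ↑v ⊆ (G.neighborSet ↑v ∩ Q) ∪ Qᶜ := by
      intro x hx
      by_cases hxQ : x ∈ Q
      · exact Or.inl ⟨hx, hxQ⟩
      · exact Or.inr hxQ
    have h3 := Set.ncard_le_ncard hsub (Set.toFinite _)
    have h4 := Set.ncard_union_le (G.neighborSet ↑v ∩ Q) Qᶜ
    have h5 := Set.ncard_add_ncard_compl Q
    omega
  have hsupp_nb : ∀ (D : (G.induce Q).ConnectedComponent) (v : Q), v ∈ D.supp →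
      (G.induce Q).neighborSet v ⊆ D.supp := by
    intro D v hv x hx
    rw [ConnectedComponent.mem_supp_iff] at hv ⊢
    rw [← hv]
    have hadj : (G.induce Q).Adj x v := (((G.induce Q).mem_neighborSet v x).mp hx).symm
    exact ConnectedComponent.sound hadj.reachable
  have hlb : ∀ D : (G.induce Q).ConnectedComponent,
      minDeg G + Q.ncard - m + 1 ≤ (D.supp).ncard := by
    intro D
    obtain ⟨w, rfl⟩ := D.exists_rep
    show minDeg G + Q.ncard - m + 1 ≤ (((G.induce Q).connectedComponentMk w).supp).ncard
    have hw : w ∈ ((G.induce Q).connectedComponentMk w).supp := by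
      rw [ConnectedComponent.mem_supp_iff]
    have hsub : insert w ((G.induce Q).neighborSet w) ⊆
        ((G.induce Q).connectedComponentMk w).supp := by
      rw [Set.insert_subset_iff]
      exact ⟨hw, hsupp_nb _ w hw⟩
    have h1 := Set.ncard_le_ncard hsub (Set.toFinite _)
    have hnm : w ∉ (G.induce Q).neighborSet w := fun hc => (G.induce Q).irrefl hc
    rw [Set.ncard_insert_of_notMem hnm (Set.toFinite _)] at h1
    have h6 := hdQ w
    omega
  have hother : ∃ C' : (G.induce Q).ConnectedComponent, (C.supp)ᶜ = C'.supp := by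
    obtain ⟨a, b, hab, hU⟩ := Nat.card_eq_two_iff.mp h2
    have hall : ∀ D : (G.induce Q).ConnectedComponent, D = a ∨ D = b := by
      intro D
      have : D ∈ ({a, b} : Set _) := hU ▸ Set.mem_univ D
      simpa using this
    have hCab := hall C
    rcases hCab with rfl | rfl
    · refine ⟨b, ?_⟩
      ext x
      simp only [Set.mem_compl_iff, ConnectedComponent.mem_supp_iff]
      rcases hall ((G.induce Q).connectedComponentMk x) with h | h
      · simp [h, hab]
      · simp [h, Ne.symm hab]
    · refine ⟨a, ?_⟩
      ext x
      simp only [Set.mem_compl_iff, ConnectedComponent.mem_supp_iff]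
      rcases hall ((G.induce Q).connectedComponentMk x) with h | h
      · simp [h, hab]
      · simp [h, Ne.symm hab]
  obtain ⟨C', hC'⟩ := hother
  have hsum : C.supp.ncard + C'.supp.ncard = Q.ncard := by
    have h7 := Set.ncard_add_ncard_compl C.supp
    rw [hC'] at h7
    have hq' : Nat.card ↥Q = Q.ncard := Nat.card_coe_set_eq Q
    omega
  have hlbC := hlb C
  have hlbC' := hlb C'
  have hminH : minDeg G + Q.ncard - m ≤ minDeg ((G.induce Q).induce C.supp) := by
    have hneC : Nonempty C.supp :=
      (Set.nonempty_of_ncard_ne_zero (by omega)).to_subtype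
    apply le_minDeg
    intro u
    rw [induce_neighbor_ncard]
    have heq : (G.induce Q).neighborSet ↑u ∩ C.supp = (G.induce Q).neighborSet ↑u := by
      rw [Set.inter_eq_left]
      exact hsupp_nb C ↑u u.2
    rw [heq]
    exact hdQ ↑u
  have hcardC : Nat.card ↥(C.supp) = C.supp.ncard := Nat.card_coe_set_eq _
  have hkey : Nat.card ↥(C.supp) + 3 ≤ 2 * minDeg ((G.induce Q).induce C.supp) := by
    omega
  refine ⟨wilsonian_of_minDeg _ hkey, ?_, ?_, ?_⟩ <;> omega
end

section
/- Let X and Y be finite simple graphs, each on n ≥ 6 vertices, with δ(X) > n/2, δ(Y) > n/2, δ(X) ≤ δ(Y), and 2δ(X) + 3δ(Y) ≥ 3n. Let σ : V(X) → V(Y) be a bijection and let u, v ∈ V(Y) be such that u′ = σ⁻¹(u) and v′ = σ⁻¹(v) are adjacent in X; suppose u and v are not (X,Y)-exchangeable from σ. Let w, x ∈ V(Y) satisfy: w ∈ N(u) ∩ N(v), w ∉ σ(N(u′)) ∪ σ(N(v′)), x ∈ σ(N(u′)) ∩ σ(N(v′)), and w adjacent to x in Y; write w′ = σ⁻¹(w),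 x′ = σ⁻¹(x), and R = N[w′] ∩ σ⁻¹(N[w]). Then R and N[x′] are disjoint. -/
open SimpleGraph

private lemma swap_map {V W : Type*} [DecidableEq V] [DecidableEq W] (f : V ≃ W) (a b q : V) :
    Equiv.swap (f a) (f b) (f q) = f (Equiv.swap a b q) := by
  rcases eq_or_ne q a with rfl | hqa
  · simp
  · rcases eq_or_ne q b with rfl | hqb
    · simp
    · rw [Equiv.swap_apply_of_ne_of_ne hqa hqb,
        Equiv.swap_apply_of_ne_of_ne (f.injective.ne hqa) (f.injective.ne hqb)]

private lemma swap_triple {α : Type*} [DecidableEq α] {p a b : α}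
    (hpa : p ≠ a) (hab : a ≠ b) (hpb : p ≠ b) (q : α) :
    Equiv.swap p a (Equiv.swap a b (Equiv.swap b p q)) = Equiv.swap a b q := by
  rcases eq_or_ne q p with rfl | hqp
  · rw [Equiv.swap_apply_right, Equiv.swap_apply_right, Equiv.swap_apply_right,
      Equiv.swap_apply_of_ne_of_ne hpa hpb]
  rcases eq_or_ne q a with rfl | hqa
  · rw [Equiv.swap_apply_of_ne_of_ne hab hpa.symm, Equiv.swap_apply_left,
      Equiv.swap_apply_of_ne_of_ne hpb.symm hab.symm]
  rcases eq_or_ne q b with rfl | hqb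
  · rw [Equiv.swap_apply_left, Equiv.swap_apply_of_ne_of_ne hpa hpb,
      Equiv.swap_apply_left, Equiv.swap_apply_right]
  · rw [Equiv.swap_apply_of_ne_of_ne hqb hqp, Equiv.swap_apply_of_ne_of_ne hqa hqb,
      Equiv.swap_apply_of_ne_of_ne hqp hqa]

private lemma fs_adj {V W : Type*} {X : SimpleGraph V} {Y : SimpleGraph W} [DecidableEq V]
    (σ : V ≃ W) {a b : V} (hX : X.Adj a b) (hY : Y.Adj (σ a) (σ b)) :
    (FS X Y).Adj σ ((Equiv.swap a b).trans σ) :=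
  ⟨a, b, hX, hY, by simp, by simp, fun w h1 h2 => by
    simp [Equiv.swap_apply_of_ne_of_ne h1 h2]⟩

private lemma triangle_reach {V W : Type*} {X : SimpleGraph V} {Y : SimpleGraph W}
    [DecidableEq V] [DecidableEq W]
    (σ : V ≃ W) {p a b : V} (hpa : X.Adj p a) (hab : X.Adj a b) (hpb : X.Adj p b)
    (hYa : Y.Adj (σ p) (σ a)) (hYb : Y.Adj (σ p) (σ b)) :
    (FS X Y).Reachable σ (σ.trans (Equiv.swap (σ a) (σ b))) := by
  have hpa' : p ≠ a := hpa.ne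
  have hab' : a ≠ b := hab.ne
  have hpb' : p ≠ b := hpb.ne
  set σ1 := (Equiv.swap p a).trans σ with h1
  set σ2 := (Equiv.swap a b).trans σ1 with h2
  set σ3 := (Equiv.swap b p).trans σ2 with h3
  have e1a : σ1 a = σ p := by simp [h1]
  have e1b : σ1 b = σ b := by
    simp [h1, Equiv.swap_apply_of_ne_of_ne hpb'.symm hab'.symm]
  have e1p : σ1 p = σ a := by simp [h1]
  have e2b : σ2 b = σ p := by simp [h2, e1a]
  have e2p : σ2 p = σ a := by
    simp [h2, Equiv.swap_apply_of_ne_of_ne hpa' hpb', e1p]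
  have A1 : (FS X Y).Adj σ σ1 := fs_adj σ hpa hYa
  have A2 : (FS X Y).Adj σ1 σ2 := fs_adj σ1 hab (by rw [e1a, e1b]; exact hYb)
  have A3 : (FS X Y).Adj σ2 σ3 := fs_adj σ2 hpb.symm (by rw [e2b, e2p]; exact hYa)
  have key : σ3 = σ.trans (Equiv.swap (σ a) (σ b)) := by
    ext q
    show σ ((Equiv.swap p a) ((Equiv.swap a b) ((Equiv.swap b p) q)))
      = Equiv.swap (σ a) (σ b) (σ q)
    rw [swap_map, swap_triple hpa' hab' hpb']
  exact (A1.reachable.trans A2.reachable).trans (key ▸ A3.reachable)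

private lemma step_reach {V W : Type*} {X : SimpleGraph V} {Y : SimpleGraph W}
    [DecidableEq V] [DecidableEq W]
    (σ : V ≃ W) {a b : V} {c d : W} (hX : X.Adj a b) (hY : Y.Adj (σ a) (σ b))
    (hac : σ a ≠ c) (had : σ a ≠ d) (hbc : σ b ≠ c) (hbd : σ b ≠ d)
    (h : (FS X Y).Reachable ((Equiv.swap a b).trans σ)
        (((Equiv.swap a b).trans σ).trans (Equiv.swap c d))) :
    (FS X Y).Reachable σ (σ.trans (Equiv.swap c d)) := by
  have h1 : (FS X Y).Adj σ ((Equiv.swap a b).trans σ) := fs_adj σ hX hY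
  have h2 : (FS X Y).Adj (σ.trans (Equiv.swap c d))
      ((Equiv.swap a b).trans (σ.trans (Equiv.swap c d))) := by
    apply fs_adj
    · exact hX
    · show Y.Adj (Equiv.swap c d (σ a)) (Equiv.swap c d (σ b))
      rw [Equiv.swap_apply_of_ne_of_ne hac had, Equiv.swap_apply_of_ne_of_ne hbc hbd]
      exact hY
  have e : ((Equiv.swap a b).trans σ).trans (Equiv.swap c d)
      = (Equiv.swap a b).trans (σ.trans (Equiv.swap c d)) := Equiv.trans_assoc _ _ _
  exact (h1.reachable.trans (h.trans (e ▸ Adj.reachable h2.symm)))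

theorem statement16 {V W : Type*} [Fintype V] [Fintype W] (n : ℕ)
    (X : SimpleGraph V) (Y : SimpleGraph W)
    (hV : Fintype.card V = n) (hW : Fintype.card W = n) (hn : 6 ≤ n)
    (hdX : 2 * minDeg X > n) (hdY : 2 * minDeg Y > n)
    (hle : minDeg X ≤ minDeg Y)
    (hdeg : 2 * minDeg X + 3 * minDeg Y ≥ 3 * n)
    (σ : V ≃ W) (u v : W)
    (hadj : X.Adj (σ.symm u) (σ.symm v))
    (hnex : ¬ Exchangeable X Y σ u v) (w x : W)
    (hw : w ∈ Y.neighborSet u ∩ Y.neighborSet v)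
    (hwn : w ∉ (⇑σ '' X.neighborSet (σ.symm u)) ∪ (⇑σ '' X.neighborSet (σ.symm v)))
    (hx : x ∈ (⇑σ '' X.neighborSet (σ.symm u)) ∩ (⇑σ '' X.neighborSet (σ.symm v)))
    (hwx : Y.Adj w x) :
    Disjoint
      ((insert (σ.symm w) (X.neighborSet (σ.symm w))) ∩
        (⇑σ ⁻¹' (insert w (Y.neighborSet w))))
      (insert (σ.symm x) (X.neighborSet (σ.symm x))) := by
  classical
  by_contra hnd
  rw [Set.not_disjoint_iff] at hnd
  obtain ⟨z', ⟨hz1, hz2⟩, hz3⟩ := hnd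
  set u' := σ.symm u with hu'
  set v' := σ.symm v with hv'
  set w' := σ.symm w with hw'
  set x' := σ.symm x with hx'
  have su : σ u' = u := σ.apply_symm_apply u
  have sv : σ v' = v := σ.apply_symm_apply v
  have sw : σ w' = w := σ.apply_symm_apply w
  have sx : σ x' = x := σ.apply_symm_apply x
  -- basic adjacency facts
  have hYuw : Y.Adj u w := hw.1
  have hYvw : Y.Adj v w := hw.2
  have hnuw : ¬ X.Adj u' w' := fun h => hwn (Or.inl ⟨w', h, sw⟩)
  have hnvw : ¬ X.Adj v' w' := fun h => hwn (Or.inr ⟨w', h, sw⟩)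
  obtain ⟨⟨y1, hy1, hy1x⟩, ⟨y2, hy2, hy2x⟩⟩ := hx
  have hy1' : y1 = x' := by rw [hx', ← hy1x, Equiv.symm_apply_apply]
  have hy2' : y2 = x' := by rw [hx', ← hy2x, Equiv.symm_apply_apply]
  rw [hy1'] at hy1
  rw [hy2'] at hy2
  have hXux : X.Adj u' x' := hy1
  have hXvx : X.Adj v' x' := hy2
  -- distinctness in W
  have hwu : w ≠ u := hYuw.ne'
  have hwv : w ≠ v := hYvw.ne'
  have hxu : x ≠ u := fun h => hXux.ne (by rw [hx', h])
  have hxv : x ≠ v := fun h => hXvx.ne (by rw [hx', h])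
  have hxw : x ≠ w := hwx.ne'
  -- distinctness in V
  have hw'u' : w' ≠ u' := fun h => hwu (by rw [← sw, ← su, h])
  have hw'v' : w' ≠ v' := fun h => hwv (by rw [← sw, ← sv, h])
  have hx'u' : x' ≠ u' := hXux.ne'
  have hx'v' : x' ≠ v' := hXvx.ne'
  have hx'w' : x' ≠ w' := fun h => hxw (by rw [← sx, ← sw, h])
  -- membership facts about z'
  have hz1' : z' = w' ∨ X.Adj w' z' := by
    rcases hz1 with h | h
    · exact Or.inl h
    · exact Or.inr h
  have hz3' : z' = x' ∨ X.Adj x' z' := by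
    rcases hz3 with h | h
    · exact Or.inl h
    · exact Or.inr h
  refine absurd ?_ hnex
  unfold Exchangeable
  by_cases hcase : X.Adj w' x'
  · -- direct case: move w to x' in one step
    refine step_reach σ hcase ?_ ?_ ?_ ?_ ?_ ?_
    · rw [sw, sx]; exact hwx
    · rw [sw]; exact hwu
    · rw [sw]; exact hwv
    · rw [sx]; exact hxu
    · rw [sx]; exact hxv
    set σ1 := (Equiv.swap w' x').trans σ with hσ1
    have ex : σ1 x' = w := by rw [hσ1]; simp [sw]
    have eu : σ1 u' = u := by
      rw [hσ1]; show σ (Equiv.swap w' x' u') = u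
      rw [Equiv.swap_apply_of_ne_of_ne hw'u'.symm hx'u'.symm, su]
    have ev : σ1 v' = v := by
      rw [hσ1]; show σ (Equiv.swap w' x' v') = v
      rw [Equiv.swap_apply_of_ne_of_ne hw'v'.symm hx'v'.symm, sv]
    have := triangle_reach σ1 hXux.symm hadj hXvx.symm
      (by rw [ex, eu]; exact hYuw.symm) (by rw [ex, ev]; exact hYvw.symm)
    rwa [eu, ev] at this
  · -- need intermediate vertex z'
    have hz'w' : z' ≠ w' := by
      rintro rfl
      rcases hz3' with h | h
      · exact hx'w' h.symm
      · exact hcase h.symm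
    have hz'x' : z' ≠ x' := by
      rintro rfl
      rcases hz1' with h | h
      · exact hz'w' h
      · exact hcase h
    have hXwz : X.Adj w' z' := hz1'.resolve_left hz'w'
    have hXxz : X.Adj x' z' := hz3'.resolve_left hz'x'
    have hYwz : Y.Adj w (σ z') := by
      rcases hz2 with h | h
      · exact absurd (by rw [hw', ← h, Equiv.symm_apply_apply]) hz'w'.symm
      · exact h
    have hz'u' : z' ≠ u' := fun h => hnuw (by rw [← h]; exact hXwz.symm)
    have hz'v' : z' ≠ v' := fun h => hnvw (by rw [← h]; exact hXwz.symm)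
    have hzu : σ z' ≠ u := fun h => hz'u' (by rw [hu', ← h, Equiv.symm_apply_apply])
    have hzv : σ z' ≠ v := fun h => hz'v' (by rw [hv', ← h, Equiv.symm_apply_apply])
    -- step 1 : swap w and z across (w', z')
    refine step_reach σ hXwz ?_ ?_ ?_ ?_ ?_ ?_
    · rw [sw]; exact hYwz
    · rw [sw]; exact hwu
    · rw [sw]; exact hwv
    · exact hzu
    · exact hzv
    set σ1 := (Equiv.swap w' z').trans σ with hσ1
    have e1z : σ1 z' = w := by rw [hσ1]; simp [sw]
    have e1x : σ1 x' = x := by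
      rw [hσ1]; show σ (Equiv.swap w' z' x') = x
      rw [Equiv.swap_apply_of_ne_of_ne hx'w' hz'x'.symm, sx]
    have e1u : σ1 u' = u := by
      rw [hσ1]; show σ (Equiv.swap w' z' u') = u
      rw [Equiv.swap_apply_of_ne_of_ne hw'u'.symm hz'u'.symm, su]
    have e1v : σ1 v' = v := by
      rw [hσ1]; show σ (Equiv.swap w' z' v') = v
      rw [Equiv.swap_apply_of_ne_of_ne hw'v'.symm hz'v'.symm, sv]
    -- step 2 : swap w and x across (z', x')
    refine step_reach σ1 hXxz.symm ?_ ?_ ?_ ?_ ?_ ?_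
    · rw [e1z, e1x]; exact hwx
    · rw [e1z]; exact hwu
    · rw [e1z]; exact hwv
    · rw [e1x]; exact hxu
    · rw [e1x]; exact hxv
    set σ2 := (Equiv.swap z' x').trans σ1 with hσ2
    have e2x : σ2 x' = w := by rw [hσ2]; show σ1 (Equiv.swap z' x' x') = w; simp [e1z]
    have e2u : σ2 u' = u := by
      rw [hσ2]; show σ1 (Equiv.swap z' x' u') = u
      rw [Equiv.swap_apply_of_ne_of_ne hz'u'.symm hx'u'.symm, e1u]
    have e2v : σ2 v' = v := by
      rw [hσ2]; show σ1 (Equiv.swap z' x' v') = v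
      rw [Equiv.swap_apply_of_ne_of_ne hz'v'.symm hx'v'.symm, e1v]
    have := triangle_reach σ2 hXux.symm hadj hXvx.symm
      (by rw [e2x, e2u]; exact hYuw.symm) (by rw [e2x, e2v]; exact hYvw.symm)
    rwa [e2u, e2v] at this
end

section
/- Let X and Y be finite simple graphs, each on n ≥ 6 vertices, with δ(X) > n/2, δ(Y) > n/2, δ(X) ≤ δ(Y), and 2δ(X) + 3δ(Y) ≥ 3n. Let σ : V(X) → V(Y) be a bijection and let u, v ∈ V(Y) be such that u′ = σ⁻¹(u) and v′ = σ⁻¹(v) are adjacent in X; suppose u and v are not (X,Y)-exchangeable from σ. Let w, x ∈ V(Y) satisfy: w ∈ N(u) ∩ N(v), w ∉ σ(N(u′)) ∪ σ(N(v′)), x ∈ σ(N(u′)) ∩ σ(N(v′)), and w adjacent to x in Y; write w′ = σ⁻¹(w), x′ = σ⁻¹(x), P = N(x′) ∩ N(w′), and R = N[w′] ∩ σ⁻¹(N[w]). Then every vertex of σ(P) has at most one neighbor (in Y) in σ(R). -/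
open SimpleGraph

section Aux
variable {V W : Type*} [DecidableEq W] {X : SimpleGraph V} {Y : SimpleGraph W}

lemma fs_step (σ' : V ≃ W) (a b : V) (t1 t2 : W) (h1 : σ' a = t1) (h2 : σ' b = t2)
    (hX : X.Adj a b) (hY : Y.Adj t1 t2) :
    (FS X Y).Adj σ' (σ'.trans (Equiv.swap t1 t2)) := by
  subst h1 h2
  refine ⟨a, b, hX, hY, by simp, by simp, fun z hza hzb => ?_⟩
  simp only [Equiv.trans_apply]
  exact Equiv.swap_apply_of_ne_of_ne (σ'.injective.ne hza) (σ'.injective.ne hzb)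

lemma swap_trans_comm {a b c d : W} (h1 : a ≠ c) (h2 : a ≠ d) (h3 : b ≠ c) (h4 : b ≠ d) :
    (Equiv.swap a b).trans (Equiv.swap c d) = (Equiv.swap c d).trans (Equiv.swap a b) := by
  ext z
  simp only [Equiv.trans_apply, Equiv.swap_apply_def]
  split_ifs <;> grind

lemma triple_swap {u v t : W} (h1 : u ≠ v) (h2 : u ≠ t) (h3 : v ≠ t) :
    (Equiv.swap u t).trans ((Equiv.swap t v).trans (Equiv.swap t u)) = Equiv.swap u v := by
  ext z
  simp only [Equiv.trans_apply, Equiv.swap_apply_def]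
  split_ifs <;> grind

/-- Conjugation step: perform a move not touching tokens `u`, `v`, solve the swapped problem,
then undo the move after the swap. -/
lemma double_step {u v : W} (σ' : V ≃ W) (a b : V) (t1 t2 : W)
    (h1 : σ' a = t1) (h2 : σ' b = t2) (hX : X.Adj a b) (hY : Y.Adj t1 t2)
    (n1 : t1 ≠ u) (n2 : t1 ≠ v) (n3 : t2 ≠ u) (n4 : t2 ≠ v)
    (h : (FS X Y).Reachable (σ'.trans (Equiv.swap t1 t2))
      ((σ'.trans (Equiv.swap t1 t2)).trans (Equiv.swap u v))) :
    (FS X Y).Reachable σ' (σ'.trans (Equiv.swap u v)) := by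
  have e1 : (FS X Y).Adj σ' (σ'.trans (Equiv.swap t1 t2)) := fs_step σ' a b t1 t2 h1 h2 hX hY
  have e2 : (FS X Y).Adj (σ'.trans (Equiv.swap u v))
      ((σ'.trans (Equiv.swap u v)).trans (Equiv.swap t1 t2)) := by
    refine fs_step _ a b t1 t2 ?_ ?_ hX hY <;>
      · simp only [Equiv.trans_apply, h1, h2, Equiv.swap_apply_def]
        split_ifs <;> grind
  have key : (σ'.trans (Equiv.swap t1 t2)).trans (Equiv.swap u v)
      = (σ'.trans (Equiv.swap u v)).trans (Equiv.swap t1 t2) := by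
    rw [Equiv.trans_assoc, Equiv.trans_assoc, swap_trans_comm n1 n2 n3 n4]
  refine e1.reachable.trans (h.trans ?_)
  rw [key]
  exact e2.reachable.symm

set_option maxHeartbeats 1000000 in
/-- The standard 3-move exchange of tokens `u`, `v` sitting at `X`-adjacent positions,
using a helper token `t` at a position `X`-adjacent to both, with `t` `Y`-adjacent to
both `u` and `v`. -/
lemma final_swap {u v : W} (σ' : V ≃ W) (a b c : V) (t : W)
    (hu : σ' a = u) (hv : σ' b = v) (ht : σ' c = t)
    (hXab : X.Adj a b) (hXac : X.Adj a c) (hXbc : X.Adj b c)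
    (hYu : Y.Adj u t) (hYv : Y.Adj v t) (huv : u ≠ v) :
    (FS X Y).Reachable σ' (σ'.trans (Equiv.swap u v)) := by
  have hut : u ≠ t := hYu.ne
  have hvt : v ≠ t := hYv.ne
  have e1 : (FS X Y).Adj σ' (σ'.trans (Equiv.swap u t)) :=
    fs_step σ' a c u t hu ht hXac hYu
  have e2 : (FS X Y).Adj (σ'.trans (Equiv.swap u t))
      ((σ'.trans (Equiv.swap u t)).trans (Equiv.swap t v)) := by
    refine fs_step _ a b t v ?_ ?_ hXab hYv.symm <;>
      · simp only [Equiv.trans_apply, hu, hv, Equiv.swap_apply_def]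
        split_ifs <;> grind
  have e3 : (FS X Y).Adj ((σ'.trans (Equiv.swap u t)).trans (Equiv.swap t v))
      (((σ'.trans (Equiv.swap u t)).trans (Equiv.swap t v)).trans (Equiv.swap t u)) := by
    refine fs_step _ b c t u ?_ ?_ hXbc hYu.symm <;>
      · simp only [Equiv.trans_apply, hv, ht, Equiv.swap_apply_def]
        split_ifs <;> grind
  have key : (((σ'.trans (Equiv.swap u t)).trans (Equiv.swap t v)).trans (Equiv.swap t u))
      = σ'.trans (Equiv.swap u v) := by
    rw [Equiv.trans_assoc, Equiv.trans_assoc, triple_swap huv hut hvt]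
  rw [← key]
  exact e1.reachable.trans (e2.reachable.trans e3.reachable)

end Aux

section Key
variable {V W : Type*} {X : SimpleGraph V} {Y : SimpleGraph W}

/-- Key construction: under the configuration of the theorem, if some `p ∈ σ(P)` had two
distinct `Y`-neighbors in `σ(R)`, then `u` and `v` would be exchangeable from `σ`. -/
lemma key_exchange (σ : V ≃ W) (u v w x p y1 y2 : W)
    (hadj : X.Adj (σ.symm u) (σ.symm v))
    (hwu : Y.Adj u w) (hwv : Y.Adj v w)
    (hwnu : ¬ X.Adj (σ.symm u) (σ.symm w)) (hwnv : ¬ X.Adj (σ.symm v) (σ.symm w))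
    (hxu : X.Adj (σ.symm u) (σ.symm x)) (hxv : X.Adj (σ.symm v) (σ.symm x))
    (hwx : Y.Adj w x)
    (hpx : X.Adj (σ.symm x) (σ.symm p)) (hpw : X.Adj (σ.symm w) (σ.symm p))
    (hy12 : y1 ≠ y2) (hpy1 : Y.Adj p y1) (hpy2 : Y.Adj p y2)
    (hy1 : y1 = w ∨ (X.Adj (σ.symm w) (σ.symm y1) ∧ Y.Adj w y1))
    (hy2 : y2 = w ∨ (X.Adj (σ.symm w) (σ.symm y2) ∧ Y.Adj w y2)) :
    Exchangeable X Y σ u v := by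
  letI := Classical.decEq W
  show (FS X Y).Reachable σ (σ.trans (Equiv.swap u v))
  have hsymm : ∀ {s t : W}, s ≠ t → σ.symm s ≠ σ.symm t := fun h => fun he => h (σ.symm.injective he)
  have hsymm' : ∀ {s t : W}, σ.symm s ≠ σ.symm t → s ≠ t := fun h => fun he => h (by rw [he])
  -- basic distinctness
  have huv : u ≠ v := hsymm' hadj.ne
  have hvu : v ≠ u := huv.symm
  have hwu' : w ≠ u := hwu.ne'
  have huw : u ≠ w := hwu.ne
  have hwv' : w ≠ v := hwv.ne'
  have hvw : v ≠ w := hwv.ne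
  have hux : u ≠ x := hsymm' hxu.ne
  have hxu' : x ≠ u := hux.symm
  have hvx : v ≠ x := hsymm' hxv.ne
  have hxv' : x ≠ v := hvx.symm
  have hwx' : w ≠ x := hwx.ne
  have hxw : x ≠ w := hwx'.symm
  have hpu : p ≠ u := fun h => hwnu ((h ▸ hpw).symm)
  have hup : u ≠ p := hpu.symm
  have hpv : p ≠ v := fun h => hwnv ((h ▸ hpw).symm)
  have hvp : v ≠ p := hpv.symm
  have hwp : w ≠ p := hsymm' hpw.ne
  have hpw' : p ≠ w := hwp.symm
  have hxp : x ≠ p := hsymm' hpx.ne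
  have hpx' : p ≠ x := hxp.symm
  have hy1u : y1 ≠ u := by
    rcases hy1 with rfl | ⟨hr1, _⟩
    · exact hwu'
    · exact fun h => hwnu ((h ▸ hr1).symm)
  have hy1v : y1 ≠ v := by
    rcases hy1 with rfl | ⟨hr1, _⟩
    · exact hwv'
    · exact fun h => hwnv ((h ▸ hr1).symm)
  have hy2u : y2 ≠ u := by
    rcases hy2 with rfl | ⟨hr2, _⟩
    · exact hwu'
    · exact fun h => hwnu ((h ▸ hr2).symm)
  have hy2v : y2 ≠ v := by
    rcases hy2 with rfl | ⟨hr2, _⟩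
    · exact hwv'
    · exact fun h => hwnv ((h ▸ hr2).symm)
  by_cases hC : X.Adj (σ.symm w) (σ.symm x)
  · -- token w can be moved directly to the position of x
    refine double_step σ (σ.symm w) (σ.symm x) w x (by simp) (by simp) hC hwx hwu' hwv'
      hxu' hxv' ?_
    refine final_swap _ (σ.symm u) (σ.symm v) (σ.symm x) w ?_ ?_ ?_ hadj hxu hxv
      hwu hwv huv
    · simp only [Equiv.trans_apply, Equiv.apply_symm_apply]
      exact Equiv.swap_apply_of_ne_of_ne huw hux
    · simp only [Equiv.trans_apply, Equiv.apply_symm_apply]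
      exact Equiv.swap_apply_of_ne_of_ne hvw hvx
    · simp only [Equiv.trans_apply, Equiv.apply_symm_apply]
      exact Equiv.swap_apply_right w x
  by_cases hA : Y.Adj p w
  · -- token w moves to the position of p, then to the position of x
    refine double_step σ (σ.symm w) (σ.symm p) w p (by simp) (by simp) hpw hA.symm hwu' hwv'
      hpu hpv ?_
    refine double_step _ (σ.symm p) (σ.symm x) w x ?_ ?_ hpx.symm hwx hwu' hwv' hxu' hxv' ?_
    · simp only [Equiv.trans_apply, Equiv.apply_symm_apply]
      exact Equiv.swap_apply_right w p
    · simp only [Equiv.trans_apply, Equiv.apply_symm_apply]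
      exact Equiv.swap_apply_of_ne_of_ne hxw hxp
    refine final_swap _ (σ.symm u) (σ.symm v) (σ.symm x) w ?_ ?_ ?_ hadj hxu hxv
      hwu hwv huv
    · simp only [Equiv.trans_apply, Equiv.apply_symm_apply]
      rw [Equiv.swap_apply_of_ne_of_ne huw hup, Equiv.swap_apply_of_ne_of_ne huw hux]
    · simp only [Equiv.trans_apply, Equiv.apply_symm_apply]
      rw [Equiv.swap_apply_of_ne_of_ne hvw hvp, Equiv.swap_apply_of_ne_of_ne hvw hvx]
    · simp only [Equiv.trans_apply, Equiv.apply_symm_apply]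
      rw [Equiv.swap_apply_of_ne_of_ne hxw hxp, Equiv.swap_apply_right]
  -- main case: use the two helper tokens y1, y2
  have hy1w : y1 ≠ w := fun h => hA (h ▸ hpy1)
  have hy2w : y2 ≠ w := fun h => hA (h ▸ hpy2)
  obtain ⟨hr1, hwy1⟩ := hy1.resolve_left hy1w
  obtain ⟨hr2, hwy2⟩ := hy2.resolve_left hy2w
  have hwy1' : w ≠ y1 := hy1w.symm
  have hwy2' : w ≠ y2 := hy2w.symm
  have hy1x : y1 ≠ x := fun h => hC (h ▸ hr1)
  have hy2x : y2 ≠ x := fun h => hC (h ▸ hr2)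
  have hxy1 : x ≠ y1 := hy1x.symm
  have hxy2 : x ≠ y2 := hy2x.symm
  have hy1p : y1 ≠ p := hpy1.ne'
  have hpy1' : p ≠ y1 := hpy1.ne
  have hy2p : y2 ≠ p := hpy2.ne'
  have hpy2' : p ≠ y2 := hpy2.ne
  have hy21 : y2 ≠ y1 := hy12.symm
  have huy1 : u ≠ y1 := hy1u.symm
  have huy2 : u ≠ y2 := hy2u.symm
  have hvy1 : v ≠ y1 := hy1v.symm
  have hvy2 : v ≠ y2 := hy2v.symm
  -- M1: swap tokens y2, w (positions r2, w')
  refine double_step σ (σ.symm y2) (σ.symm w) y2 w (by simp) (by simp) hr2.symm hwy2.symm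
    hy2u hy2v hwu' hwv' ?_
  -- M2: swap tokens y2, p (positions w', p')
  refine double_step _ (σ.symm w) (σ.symm p) y2 p ?_ ?_ hpw hpy2.symm hy2u hy2v hpu hpv ?_
  · simp only [Equiv.trans_apply, Equiv.apply_symm_apply]
    exact Equiv.swap_apply_right y2 w
  · simp only [Equiv.trans_apply, Equiv.apply_symm_apply]
    exact Equiv.swap_apply_of_ne_of_ne hpy2' hpw'
  -- M3: swap tokens y1, p (positions r1, w')
  refine double_step _ (σ.symm y1) (σ.symm w) y1 p ?_ ?_ hr1.symm hpy1.symm hy1u hy1v hpu hpv ?_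
  · simp only [Equiv.trans_apply, Equiv.apply_symm_apply]
    rw [Equiv.swap_apply_of_ne_of_ne hy12 hy1w, Equiv.swap_apply_of_ne_of_ne hy12 hy1p]
  · simp only [Equiv.trans_apply, Equiv.apply_symm_apply]
    rw [Equiv.swap_apply_right y2 w, Equiv.swap_apply_left]
  -- M4: swap tokens w, y1 (positions r2, w')
  refine double_step _ (σ.symm y2) (σ.symm w) w y1 ?_ ?_ hr2.symm hwy1 hwu' hwv' hy1u hy1v ?_
  · simp only [Equiv.trans_apply, Equiv.apply_symm_apply]
    rw [Equiv.swap_apply_left y2 w, Equiv.swap_apply_of_ne_of_ne hwy2' hwp,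
      Equiv.swap_apply_of_ne_of_ne hwy1' hwp]
  · simp only [Equiv.trans_apply, Equiv.apply_symm_apply]
    rw [Equiv.swap_apply_right y2 w, Equiv.swap_apply_left y2 p, Equiv.swap_apply_right y1 p]
  -- M5: swap tokens w, y2 (positions w', p')
  refine double_step _ (σ.symm w) (σ.symm p) w y2 ?_ ?_ hpw hwy2 hwu' hwv' hy2u hy2v ?_
  · simp only [Equiv.trans_apply, Equiv.apply_symm_apply]
    rw [Equiv.swap_apply_right y2 w, Equiv.swap_apply_left y2 p, Equiv.swap_apply_right y1 p,
      Equiv.swap_apply_right w y1]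
  · simp only [Equiv.trans_apply, Equiv.apply_symm_apply]
    rw [Equiv.swap_apply_of_ne_of_ne hpy2' hpw', Equiv.swap_apply_right y2 p,
      Equiv.swap_apply_of_ne_of_ne hy21 hy2p, Equiv.swap_apply_of_ne_of_ne hy2w hy21]
  -- M6: swap tokens w, x (positions p', x')
  refine double_step _ (σ.symm p) (σ.symm x) w x ?_ ?_ hpx.symm hwx hwu' hwv' hxu' hxv' ?_
  · simp only [Equiv.trans_apply, Equiv.apply_symm_apply]
    rw [Equiv.swap_apply_of_ne_of_ne hpy2' hpw', Equiv.swap_apply_right y2 p,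
      Equiv.swap_apply_of_ne_of_ne hy21 hy2p, Equiv.swap_apply_of_ne_of_ne hy2w hy21,
      Equiv.swap_apply_right w y2]
  · simp only [Equiv.trans_apply, Equiv.apply_symm_apply]
    rw [Equiv.swap_apply_of_ne_of_ne hxy2 hxw, Equiv.swap_apply_of_ne_of_ne hxy2 hxp,
      Equiv.swap_apply_of_ne_of_ne hxy1 hxp, Equiv.swap_apply_of_ne_of_ne hxw hxy1,
      Equiv.swap_apply_of_ne_of_ne hxw hxy2]
  -- final 3-move exchange with helper token w at the position of x
  refine final_swap _ (σ.symm u) (σ.symm v) (σ.symm x) w ?_ ?_ ?_ hadj hxu hxv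
    hwu hwv huv
  · simp only [Equiv.trans_apply, Equiv.apply_symm_apply]
    rw [Equiv.swap_apply_of_ne_of_ne huy2 huw, Equiv.swap_apply_of_ne_of_ne huy2 hup,
      Equiv.swap_apply_of_ne_of_ne huy1 hup, Equiv.swap_apply_of_ne_of_ne huw huy1,
      Equiv.swap_apply_of_ne_of_ne huw huy2, Equiv.swap_apply_of_ne_of_ne huw hux]
  · simp only [Equiv.trans_apply, Equiv.apply_symm_apply]
    rw [Equiv.swap_apply_of_ne_of_ne hvy2 hvw, Equiv.swap_apply_of_ne_of_ne hvy2 hvp,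
      Equiv.swap_apply_of_ne_of_ne hvy1 hvp, Equiv.swap_apply_of_ne_of_ne hvw hvy1,
      Equiv.swap_apply_of_ne_of_ne hvw hvy2, Equiv.swap_apply_of_ne_of_ne hvw hvx]
  · simp only [Equiv.trans_apply, Equiv.apply_symm_apply]
    rw [Equiv.swap_apply_of_ne_of_ne hxy2 hxw, Equiv.swap_apply_of_ne_of_ne hxy2 hxp,
      Equiv.swap_apply_of_ne_of_ne hxy1 hxp, Equiv.swap_apply_of_ne_of_ne hxw hxy1,
      Equiv.swap_apply_of_ne_of_ne hxw hxy2, Equiv.swap_apply_right w x]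

end Key

theorem statement17 {V W : Type*} [Fintype V] [Fintype W] (n : ℕ)
    (X : SimpleGraph V) (Y : SimpleGraph W)
    (hV : Fintype.card V = n) (hW : Fintype.card W = n) (hn : 6 ≤ n)
    (hdX : 2 * minDeg X > n) (hdY : 2 * minDeg Y > n)
    (hle : minDeg X ≤ minDeg Y)
    (hdeg : 2 * minDeg X + 3 * minDeg Y ≥ 3 * n)
    (σ : V ≃ W) (u v : W)
    (hadj : X.Adj (σ.symm u) (σ.symm v))
    (hnex : ¬ Exchangeable X Y σ u v) (w x : W)
    (hw : w ∈ Y.neighborSet u ∩ Y.neighborSet v)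
    (hwn : w ∉ (⇑σ '' X.neighborSet (σ.symm u)) ∪ (⇑σ '' X.neighborSet (σ.symm v)))
    (hx : x ∈ (⇑σ '' X.neighborSet (σ.symm u)) ∩ (⇑σ '' X.neighborSet (σ.symm v)))
    (hwx : Y.Adj w x) :
    ∀ p ∈ ⇑σ '' (X.neighborSet (σ.symm x) ∩ X.neighborSet (σ.symm w)),
      (Y.neighborSet p ∩
        (⇑σ '' ((insert (σ.symm w) (X.neighborSet (σ.symm w))) ∩
          (⇑σ ⁻¹' (insert w (Y.neighborSet w)))))).ncard ≤ 1 := by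
  intro p hp
  by_contra hcon
  rw [not_le] at hcon
  obtain ⟨y1, y2, hy1S, hy2S, hne⟩ := (Set.one_lt_ncard_iff (Set.toFinite _)).mp hcon
  obtain ⟨hwu, hwv⟩ := hw
  obtain ⟨⟨a, ha, hax⟩, ⟨b, hb, hbx⟩⟩ := hx
  have hxu : X.Adj (σ.symm u) (σ.symm x) := by rw [← hax, Equiv.symm_apply_apply]; exact ha
  have hxv : X.Adj (σ.symm v) (σ.symm x) := by rw [← hbx, Equiv.symm_apply_apply]; exact hb
  have hwnu : ¬ X.Adj (σ.symm u) (σ.symm w) :=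
    fun h => hwn (Or.inl ⟨σ.symm w, h, σ.apply_symm_apply w⟩)
  have hwnv : ¬ X.Adj (σ.symm v) (σ.symm w) :=
    fun h => hwn (Or.inr ⟨σ.symm w, h, σ.apply_symm_apply w⟩)
  obtain ⟨q, ⟨hq1, hq2⟩, hqp⟩ := hp
  have hpx : X.Adj (σ.symm x) (σ.symm p) := by rw [← hqp, Equiv.symm_apply_apply]; exact hq1
  have hpw : X.Adj (σ.symm w) (σ.symm p) := by rw [← hqp, Equiv.symm_apply_apply]; exact hq2
  obtain ⟨hpy1, r1, ⟨hr1mem, hr1pre⟩, hr1eq⟩ := hy1S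
  obtain ⟨hpy2, r2, ⟨hr2mem, hr2pre⟩, hr2eq⟩ := hy2S
  have hy1' : y1 = w ∨ (X.Adj (σ.symm w) (σ.symm y1) ∧ Y.Adj w y1) := by
    rcases hr1mem with rfl | hr1adj
    · exact Or.inl (by rw [← hr1eq, Equiv.apply_symm_apply])
    rcases hr1pre with hw1 | hadj1
    · exact Or.inl (by rw [← hr1eq]; exact hw1)
    · exact Or.inr ⟨by rw [← hr1eq, Equiv.symm_apply_apply]; exact hr1adj,
        by rw [← hr1eq]; exact hadj1⟩
  have hy2' : y2 = w ∨ (X.Adj (σ.symm w) (σ.symm y2) ∧ Y.Adj w y2) := by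
    rcases hr2mem with rfl | hr2adj
    · exact Or.inl (by rw [← hr2eq, Equiv.apply_symm_apply])
    rcases hr2pre with hw2 | hadj2
    · exact Or.inl (by rw [← hr2eq]; exact hw2)
    · exact Or.inr ⟨by rw [← hr2eq, Equiv.symm_apply_apply]; exact hr2adj,
        by rw [← hr2eq]; exact hadj2⟩
  exact hnex (key_exchange σ u v w x p y1 y2 hadj hwu hwv hwnu hwnv hxu hxv hwx hpx hpw
    hne hpy1 hpy2 hy1' hy2')
end
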